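/- arXiv:1412.4904 — 5 statements merged into one kernel-verified Lean document; each statement's English description precedes it below -/
import Mathlib

section
/- For every Boolean function f : X × Y → {0,1}, the garden-hose complexity GH(f) is at most the number of edges in any deterministic communication protocol tree computing f. -/
/-- One step of the water's path in a garden-hose game: on even steps Alice's
matching (an involution on pipes together with the tap `none`) is applied,
on odd steps Bob's matching (an involution on the pipes). A fixed point of the
relevant involution means the corresponding pipe end is open (unmatched). -/
def ghStep {s : ℕ} (A : Option (Fin s) → Option (Fin s)) (B : Fin s → Fin s)
    (n : ℕ) (v : Option (Fin s)) : Option (Fin s) :=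
  if n % 2 = 0 then A v else Option.map B v

/-- Position of the water after `n` steps, starting at the tap `none`. -/
def ghWalk {s : ℕ} (A : Option (Fin s) → Option (Fin s)) (B : Fin s → Fin s) :
    ℕ → Option (Fin s)
  | 0 => none
  | n + 1 => ghStep A B n (ghWalk A B n)

/-- The length of the path starting at the tap: the first time the walk halts
(i.e. the current pipe end is open). Its parity is the output of the game. -/
noncomputable def ghLen {s : ℕ} (A : Option (Fin s) → Option (Fin s))
    (B : Fin s → Fin s) : ℕ :=
  sInf {n | ghStep A B n (ghWalk A B n) = ghWalk A B n}

/-- A garden-hose protocol with `s` pipes: Alice places, depending on her input,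
a matching (involution) on the pipes together with the tap `none`; Bob places a
matching on the pipes. -/
structure GHProtocol (X Y : Type) (s : ℕ) where
  A : X → Option (Fin s) → Option (Fin s)
  B : Y → Fin s → Fin s
  hA : ∀ x, Function.Involutive (A x)
  hB : ∀ y, Function.Involutive (B y)

/-- The protocol computes `f` if for every input the walk from the tap halts and
the parity of the path length is `f x y`. -/
def GHProtocol.Computes {X Y : Type} {s : ℕ} (P : GHProtocol X Y s)
    (f : X → Y → Bool) : Prop :=
  ∀ x y,
    {n | ghStep (P.A x) (P.B y) n (ghWalk (P.A x) (P.B y) n)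
        = ghWalk (P.A x) (P.B y) n}.Nonempty ∧
    (ghLen (P.A x) (P.B y) % 2 = 1 ↔ f x y = true)

/-- The garden-hose complexity of `f`. -/
noncomputable def GH {X Y : Type} (f : X → Y → Bool) : ℕ :=
  sInf {s | ∃ P : GHProtocol X Y s, P.Computes f}

/-- A deterministic communication protocol tree: internal nodes belong to Alice
or to Bob; a node owned by Alice is labeled by a map from `X` to its children
(an edge per possible message), similarly for Bob; leaves accept or reject. -/
inductive ProtTree (X Y : Type) where
  | leaf : Bool → ProtTree X Y
  | anode : (d : ℕ) → (X → Fin d) → (Fin d → ProtTree X Y) → ProtTree X Y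
  | bnode : (d : ℕ) → (Y → Fin d) → (Fin d → ProtTree X Y) → ProtTree X Y

/-- Following the protocol tree on input `(x, y)`. -/
def ProtTree.eval {X Y : Type} : ProtTree X Y → X → Y → Bool
  | .leaf b, _, _ => b
  | .anode _ g c, x, y => (c (g x)).eval x y
  | .bnode _ g c, x, y => (c (g y)).eval x y

/-- The number of edges of a protocol tree. -/
def ProtTree.edges {X Y : Type} : ProtTree X Y → ℕ
  | .leaf _ => 0
  | .anode d _ c => d + ∑ i : Fin d, (c i).edges
  | .bnode d _ c => d + ∑ i : Fin d, (c i).edges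
namespace GHLE

/-- Generic walk over an arbitrary pipe type. -/
def wk {P : Type} (A : Option P → Option P) (B : P → P) : ℕ → Option P
  | 0 => none
  | n + 1 => if n % 2 = 0 then A (wk A B n) else Option.map B (wk A B n)

lemma wk_succ {P : Type} (A : Option P → Option P) (B : P → P) (n : ℕ) :
    wk A B (n + 1) = if n % 2 = 0 then A (wk A B n) else Option.map B (wk A B n) := rfl

/-- A garden-hose gadget over pipe type `P`, with first player `U` (who holds
the tap) and second player `V`, together with a full specification of its walk:
it first halts at time `L u v`, whose parity encodes `φ u v`, and the walk
never revisits the tap in between. -/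
structure GP (U V P : Type) (φ : U → V → Bool) where
  A : U → Option P → Option P
  B : V → P → P
  hA : ∀ u, Function.Involutive (A u)
  hB : ∀ v, Function.Involutive (B v)
  L : U → V → ℕ
  hhalt : ∀ u v, wk (A u) (B v) (L u v + 1) = wk (A u) (B v) (L u v)
  hmin : ∀ u v, ∀ m, m < L u v → wk (A u) (B v) (m + 1) ≠ wk (A u) (B v) m
  hpar : ∀ u v, ((L u v) % 2 = 1 ↔ φ u v = true)
  hnn : ∀ u v t, 1 ≤ t → t ≤ L u v → wk (A u) (B v) t ≠ none

def GP.copy {U V P : Type} {φ₁ φ₂ : U → V → Bool} (G : GP U V P φ₁)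
    (h : ∀ u v, φ₁ u v = φ₂ u v) : GP U V P φ₂ :=
  { G with hpar := fun u v => (h u v) ▸ G.hpar u v }

def trivGP {U V P : Type} : GP U V P (fun _ _ => false) where
  A := fun _ o => o
  B := fun _ p => p
  hA := fun _ o => rfl
  hB := fun _ p => rfl
  L := fun _ _ => 0
  hhalt := by intro u v; simp [wk]
  hmin := by intro u v m h; exact absurd h (Nat.not_lt_zero m)
  hpar := by intro u v; simp
  hnn := by intro u v t h1 h2; exact absurd (h1.trans h2) (Nat.not_succ_le_zero 0)

/-- Data of a child subtree as used by the assemblers: either a genuine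
internal subtree with gadgets in both orientations, or a leaf with its value
(in the local orientation). -/
inductive Child (U V P : Type) where
  | block (φ : U → V → Bool) (bu : GP U V P φ) (bv : GP V U P (fun v u => !(φ u v))) :
      Child U V P
  | leafc (b : Bool) : Child U V P

namespace Child

variable {U V P : Type}

def phi : Child U V P → U → V → Bool
  | .block φ _ _ => φ
  | .leafc b => fun _ _ => b

def goB : Child U V P → Bool
  | .block _ _ _ => true
  | .leafc b => b

def fixB : Child U V P → Bool
  | .block _ _ _ => false
  | .leafc b => b

def isB : Child U V P → Bool
  | .block _ _ _ => true
  | .leafc _ => false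

def vphiU : Child U V P → U → V → Bool
  | .block φ _ _ => φ
  | .leafc _ => fun _ _ => false

def vphiV : Child U V P → V → U → Bool
  | .block φ _ _ => fun v u => !(φ u v)
  | .leafc _ => fun _ _ => false

def toGPu : (c : Child U V P) → GP U V P c.vphiU
  | .block _ bu _ => bu
  | .leafc _ => trivGP

def toGPv : (c : Child U V P) → GP V U P c.vphiV
  | .block _ _ bv => bv
  | .leafc _ => trivGP

lemma go_phi {c : Child U V P} (h : c.goB = true) (u : U) (v : V) :
    (!(c.vphiV v u)) = c.phi u v := by
  cases c <;> simp_all [goB, vphiV, phi]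

lemma nogo_phi {c : Child U V P} (h : c.goB = false) (u : U) (v : V) :
    c.phi u v = false := by
  cases c <;> simp_all [goB, phi]

lemma fix_phi {c : Child U V P} (h : c.fixB = true) (u : U) (v : V) :
    c.phi u v = true := by
  cases c <;> simp_all [fixB, phi]

lemma nofix_phi {c : Child U V P} (h : c.fixB = false) (u : U) (v : V) :
    c.vphiU u v = c.phi u v := by
  cases c <;> simp_all [fixB, vphiU, phi]

lemma isB_phi {c : Child U V P} (h : c.isB = true) (v : V) (u : U) :
    (!(c.vphiV v u)) = c.phi u v := by
  cases c <;> simp_all [isB, vphiV, phi]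

lemma isB_fix {c : Child U V P} (h : c.isB = true) : c.fixB = false := by
  cases c <;> simp_all [isB, fixB]

lemma notB_phi {c : Child U V P} (h : c.isB = false) (u : U) (v : V) :
    c.phi u v = c.fixB := by
  cases c <;> simp_all [isB, phi, fixB]

end Child

/-- Embedding of cluster `j`'s extended pipe set (its own tap-proxy plus its
pipes) into the total pipe set. -/
def oe {d : ℕ} {P : Fin d → Type} (j : Fin d) : Option (P j) → (Fin d ⊕ (Σ i, P i))
  | none => .inl j
  | some p => .inr ⟨j, p⟩

lemma oe_inj {d : ℕ} {P : Fin d → Type} (j : Fin d) :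
    Function.Injective (oe (P := P) j) := by
  intro w w' h
  cases w <;> cases w' <;> simp [oe] at h <;> try rfl
  · exact h ▸ rfl

end GHLE
namespace GHLE

section Asm1

variable {U V : Type} {d : ℕ} {P : Fin d → Type}
variable (ch : ∀ j, Child U V (P j)) (g : U → Fin d)

/-- Assembler 1 (tap holder owns the root): the tap-holder's involution. -/
def A1 (u : U) : Option (Fin d ⊕ (Σ i, P i)) → Option (Fin d ⊕ (Σ i, P i))
  | none => if (ch (g u)).goB = true then some (.inl (g u)) else none
  | some (.inl j) => if j = g u ∧ (ch j).goB = true then none else some (.inl j)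
  | some (.inr ⟨j, p⟩) => some (.inr ⟨j, ((ch j).toGPv).B u p⟩)

/-- Assembler 1: the second player's involution. -/
def B1 (v : V) : (Fin d ⊕ (Σ i, P i)) → (Fin d ⊕ (Σ i, P i))
  | .inl j => oe j (((ch j).toGPv).A v none)
  | .inr ⟨j, p⟩ => oe j (((ch j).toGPv).A v (some p))

lemma B1_oe (v : V) (j : Fin d) (w : Option (P j)) :
    B1 ch v (oe j w) = oe j (((ch j).toGPv).A v w) := by cases w <;> rfl

lemma B1_invol (v : V) : Function.Involutive (B1 ch v) := by
  intro x
  obtain (j | ⟨j, p⟩) := x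
  · show B1 ch v (B1 ch v (oe j none)) = oe j none
    rw [B1_oe, B1_oe, ((ch j).toGPv).hA v]
  · show B1 ch v (B1 ch v (oe j (some p))) = oe j (some p)
    rw [B1_oe, B1_oe, ((ch j).toGPv).hA v]

lemma A1_invol (u : U) : Function.Involutive (A1 ch g u) := by
  intro x
  obtain (_ | (j | ⟨j, p⟩)) := x
  · by_cases h : (ch (g u)).goB = true
    · simp [A1, h]
    · simp [A1, h]
  · by_cases h : j = g u ∧ (ch j).goB = true
    · obtain ⟨h1, h2⟩ := h; subst h1; simp [A1, h2]
    · simp [A1, h]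
  · simp [A1, ((ch j).toGPv).hB u p]

def L1 : U → V → ℕ := fun u v =>
  if (ch (g u)).goB = true then ((ch (g u)).toGPv).L v u + 1 else 0

lemma walk1 (u : U) (v : V) (hgo : (ch (g u)).goB = true) :
    ∀ t, t ≤ ((ch (g u)).toGPv).L v u + 1 →
      wk (A1 ch g u) (B1 ch v) (t + 1) =
        some (oe (g u) (wk (((ch (g u)).toGPv).A v) (((ch (g u)).toGPv).B u) t)) := by
  set G := (ch (g u)).toGPv with hG
  intro t
  induction t with
  | zero =>
      intro _
      show A1 ch g u none = _
      rw [A1]; simp [hgo, wk, oe]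
  | succ t ih =>
      intro ht
      have hW := ih (Nat.le_of_succ_le ht)
      by_cases hp : (t + 1) % 2 = 0
      · -- big step t+1 is an A1 step, sub step t is a map-B step
        have ht1 : 1 ≤ t := by omega
        have hnn := G.hnn v u t ht1 (by omega)
        obtain ⟨p, hp'⟩ : ∃ p, wk (G.A v) (G.B u) t = some p := by
          cases hq : wk (G.A v) (G.B u) t with
          | none => exact absurd hq hnn
          | some p => exact ⟨p, rfl⟩
        rw [wk_succ, if_pos hp, hW, hp']
        rw [show wk (G.A v) (G.B u) (t + 1) = Option.map (G.B u) (wk (G.A v) (G.B u) t) from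
          by rw [wk_succ, if_neg (by omega)], hp']
        rfl
      · rw [wk_succ, if_neg hp, hW]
        rw [show wk (G.A v) (G.B u) (t + 1) = G.A v (wk (G.A v) (G.B u) t) from
          by rw [wk_succ, if_pos (by omega)]]
        show some (B1 ch v (oe (g u) _)) = _
        rw [B1_oe]

def asm1 : GP U V (Fin d ⊕ (Σ i, P i)) (fun u v => (ch (g u)).phi u v) where
  A := A1 ch g
  B := B1 ch
  hA := A1_invol ch g
  hB := B1_invol ch
  L := L1 ch g
  hhalt := by
    intro u v
    by_cases hgo : (ch (g u)).goB = true
    · have hs := ((ch (g u)).toGPv).hhalt v u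
      have h1 := walk1 ch g u v hgo (((ch (g u)).toGPv).L v u + 1) le_rfl
      have h2 := walk1 ch g u v hgo (((ch (g u)).toGPv).L v u) (Nat.le_succ _)
      simp only [L1, if_pos hgo]
      rw [h1, h2, hs]
    · simp only [L1, if_neg hgo]
      show A1 ch g u none = none
      rw [A1]
      simp [hgo]
  hmin := by
    intro u v m hm
    by_cases hgo : (ch (g u)).goB = true
    · simp only [L1, if_pos hgo] at hm
      rcases Nat.eq_zero_or_pos m with rfl | hpos
      · have h1 := walk1 ch g u v hgo 0 (Nat.zero_le _)
        rw [h1]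
        simp [wk]
      · obtain ⟨t, rfl⟩ : ∃ t, m = t + 1 := ⟨m - 1, by omega⟩
        have h1 := walk1 ch g u v hgo (t + 1) (by omega)
        have h2 := walk1 ch g u v hgo t (by omega)
        rw [h1, h2]
        intro hEq
        exact ((ch (g u)).toGPv).hmin v u t (by omega)
          (oe_inj _ (Option.some_injective _ hEq))
    · simp only [L1, if_neg hgo] at hm
      exact absurd hm (Nat.not_lt_zero m)
  hpar := by
    intro u v
    by_cases hgo : (ch (g u)).goB = true
    · simp only [L1, if_pos hgo]
      have hsub := ((ch (g u)).toGPv).hpar v u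
      have hphi := Child.go_phi hgo u v
      cases hb : (ch (g u)).vphiV v u
      · rw [hb] at hphi
        have h0 : ¬ ((ch (g u)).toGPv).L v u % 2 = 1 := fun hc => by
          have h2 := hsub.mp hc; rw [hb] at h2; exact Bool.false_ne_true h2
        rw [← hphi]
        simp only [Bool.not_false]
        exact ⟨fun _ => by trivial, fun _ => by omega⟩
      · rw [hb] at hphi
        have h1 : ((ch (g u)).toGPv).L v u % 2 = 1 := hsub.mpr hb
        rw [← hphi]
        simp only [Bool.not_true]
        exact ⟨fun hc => by omega, fun hc => by simp at hc⟩
    · simp only [L1, if_neg hgo, Child.nogo_phi (Bool.not_eq_true _ ▸ hgo) u v]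
      simp
  hnn := by
    intro u v t h1 h2
    by_cases hgo : (ch (g u)).goB = true
    · simp only [L1, if_pos hgo] at h2
      obtain ⟨t', rfl⟩ : ∃ t', t = t' + 1 := ⟨t - 1, by omega⟩
      rw [walk1 ch g u v hgo t' (by omega)]
      simp
    · simp only [L1, if_neg hgo] at h2
      exact absurd (h1.trans h2) (by omega)

end Asm1

end GHLE
namespace GHLE

section Asm2

variable {U V : Type} {d : ℕ} {P : Fin d → Type}
variable (ch : ∀ j, Child U V (P j)) (g : V → Fin d) (jp : Fin d)

/-- Assembler 2 (tap holder does not own the root): the tap-holder's involution. -/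
def A2 (u : U) : Option (Fin d ⊕ (Σ i, P i)) → Option (Fin d ⊕ (Σ i, P i))
  | none => some (.inl jp)
  | some (.inl j) => if j = jp then none else some (oe j (((ch j).toGPu).A u none))
  | some (.inr ⟨j, p⟩) =>
      if h : j = jp then some (.inr ⟨jp, ((ch jp).toGPv).B u (h ▸ p)⟩)
      else some (oe j (((ch j).toGPu).A u (some p)))

/-- Root owner's involution in "direct" mode (the chosen child is the token child). -/
def B2dir (v : V) : (Fin d ⊕ (Σ i, P i)) → (Fin d ⊕ (Σ i, P i))
  | .inl j => if j = jp then oe jp (((ch jp).toGPv).A v none) else .inl j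
  | .inr ⟨j, p⟩ =>
      if h : j = jp then oe jp (((ch jp).toGPv).A v (some (h ▸ p)))
      else .inr ⟨j, ((ch j).toGPu).B v p⟩

/-- Restriction of the token child's tap-side involution to its interior. -/
def B2r (v : V) (p : P jp) : (Fin d ⊕ (Σ i, P i)) :=
  match ((ch jp).toGPv).A v (some p) with
  | none => .inr ⟨jp, p⟩
  | some q => .inr ⟨jp, q⟩

/-- Root owner's involution in "bounce/fix" mode. -/
def B2nd (v : V) : (Fin d ⊕ (Σ i, P i)) → (Fin d ⊕ (Σ i, P i))
  | .inl j =>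
      if j = jp then (if (ch (g v)).fixB = true then .inl jp else .inl (g v))
      else if j = g v ∧ (ch (g v)).fixB = false then .inl jp else .inl j
  | .inr ⟨j, p⟩ =>
      if h : j = jp then B2r ch jp v (h ▸ p)
      else .inr ⟨j, ((ch j).toGPu).B v p⟩

def B2 (v : V) : (Fin d ⊕ (Σ i, P i)) → (Fin d ⊕ (Σ i, P i)) :=
  if g v = jp then B2dir ch jp v else B2nd ch g jp v

lemma A2_none (u : U) : A2 ch jp u none = some (.inl jp) := rfl

lemma A2_oe (u : U) {j : Fin d} (hj : j ≠ jp) (w : Option (P j)) :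
    A2 ch jp u (some (oe j w)) = some (oe j (((ch j).toGPu).A u w)) := by
  cases w with
  | none => simp [A2, oe, hj]
  | some p => simp [A2, oe, hj]

lemma A2_int (u : U) (p : P jp) :
    A2 ch jp u (some (.inr ⟨jp, p⟩)) = some (.inr ⟨jp, ((ch jp).toGPv).B u p⟩) := by
  simp [A2]

lemma A2_invol (u : U) : Function.Involutive (A2 ch jp u) := by
  intro x
  obtain (_ | (j | ⟨j, p⟩)) := x
  · simp [A2]
  · by_cases hj : j = jp
    · subst hj; simp [A2]
    · rw [show A2 ch jp u (some (.inl j)) = some (oe j (((ch j).toGPu).A u none)) from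
        by simp [A2, hj]]
      rw [A2_oe ch jp u hj, ((ch j).toGPu).hA u]
      rfl
  · by_cases hj : j = jp
    · subst hj
      rw [A2_int, A2_int, ((ch j).toGPv).hB u]
    · rw [show (some (Sum.inr ⟨j, p⟩) : Option (Fin d ⊕ (Σ i, P i)))
          = some (oe j (some p)) from rfl]
      rw [A2_oe ch jp u hj, A2_oe ch jp u hj, ((ch j).toGPu).hA u]

lemma B2dir_oe (v : V) (w : Option (P jp)) :
    B2dir ch jp v (oe jp w) = oe jp (((ch jp).toGPv).A v w) := by
  cases w with
  | none => simp [B2dir, oe]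
  | some p => simp [B2dir, oe]

lemma B2dir_invol (v : V) : Function.Involutive (B2dir ch jp v) := by
  intro x
  obtain (j | ⟨j, p⟩) := x
  · by_cases hj : j = jp
    · subst hj
      show B2dir ch j v (B2dir ch j v (oe j none)) = oe j none
      rw [B2dir_oe, B2dir_oe, ((ch j).toGPv).hA v]
    · simp [B2dir, hj]
  · by_cases hj : j = jp
    · subst hj
      show B2dir ch j v (B2dir ch j v (oe j (some p))) = oe j (some p)
      rw [B2dir_oe, B2dir_oe, ((ch j).toGPv).hA v]
    · simp [B2dir, hj, ((ch j).toGPu).hB v p]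

lemma B2r_invol (v : V) (p : P jp) :
    B2nd ch g jp v (B2r ch jp v p) = .inr ⟨jp, p⟩ := by
  rw [B2r]
  cases e : ((ch jp).toGPv).A v (some p) with
  | none =>
      simp only []
      rw [show B2nd ch g jp v (.inr ⟨jp, p⟩) = B2r ch jp v p from by simp [B2nd], B2r, e]
  | some q =>
      simp only []
      have e2 : ((ch jp).toGPv).A v (some q) = some p := by
        have h2 := ((ch jp).toGPv).hA v (some p); rw [e] at h2; exact h2
      rw [show B2nd ch g jp v (.inr ⟨jp, q⟩) = B2r ch jp v q from by simp [B2nd], B2r, e2]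

lemma B2nd_invol (v : V) (hgv : g v ≠ jp) : Function.Involutive (B2nd ch g jp v) := by
  intro x
  obtain (j | ⟨j, p⟩) := x
  · by_cases hj : j = jp
    · subst hj
      by_cases hfix : (ch (g v)).fixB = true
      · simp [B2nd, hfix]
      · have hfix' : (ch (g v)).fixB = false := by
          cases hF : (ch (g v)).fixB
          · rfl
          · exact absurd hF hfix
        simp [B2nd, hfix', hgv]
    · by_cases hb : j = g v ∧ (ch (g v)).fixB = false
      · obtain ⟨rfl, hfix⟩ := hb
        simp [B2nd, hj, hfix]
      · simp [B2nd, hj, hb]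
  · by_cases hj : j = jp
    · subst hj
      rw [show B2nd ch g j v (.inr ⟨j, p⟩) = B2r ch j v p from by simp [B2nd]]
      exact B2r_invol ch g j v p
    · simp [B2nd, hj, ((ch j).toGPu).hB v p]

lemma B2_invol (v : V) : Function.Involutive (B2 ch g jp v) := by
  by_cases hdir : g v = jp
  · rw [B2, if_pos hdir]; exact B2dir_invol ch jp v
  · rw [B2, if_neg hdir]; exact B2nd_invol ch g jp v hdir

def L2 : U → V → ℕ := fun u v =>
  if g v = jp then ((ch jp).toGPv).L v u + 1
  else if (ch (g v)).fixB = true then 1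
  else ((ch (g v)).toGPu).L u v + 2

lemma wk1_A2 (u : U) (v : V) : wk (A2 ch jp u) (B2 ch g jp v) 1 = some (.inl jp) := by
  rw [wk_succ, if_pos (by omega)]; rfl

lemma walk2dir (u : U) (v : V) (hdir : g v = jp) :
    ∀ t, t ≤ ((ch jp).toGPv).L v u + 1 →
      wk (A2 ch jp u) (B2 ch g jp v) (t + 1) =
        some (oe jp (wk (((ch jp).toGPv).A v) (((ch jp).toGPv).B u) t)) := by
  set G := (ch jp).toGPv with hG
  intro t
  induction t with
  | zero =>
      intro _
      rw [wk1_A2]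
      rfl
  | succ t ih =>
      intro ht
      have hW := ih (Nat.le_of_succ_le ht)
      by_cases hp : (t + 1) % 2 = 0
      · -- A2 step; sub map-B step
        have ht1 : 1 ≤ t := by omega
        obtain ⟨p, hp'⟩ : ∃ p, wk (G.A v) (G.B u) t = some p := by
          cases hq : wk (G.A v) (G.B u) t with
          | none => exact absurd hq (G.hnn v u t ht1 (by omega))
          | some p => exact ⟨p, rfl⟩
        rw [wk_succ, if_pos hp, hW, hp']
        rw [show wk (G.A v) (G.B u) (t + 1) = Option.map (G.B u) (wk (G.A v) (G.B u) t) from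
          by rw [wk_succ, if_neg (by omega)], hp']
        exact A2_int ch jp u p
      · -- B2 step; sub A step
        rw [wk_succ, if_neg hp, hW]
        rw [show wk (G.A v) (G.B u) (t + 1) = G.A v (wk (G.A v) (G.B u) t) from
          by rw [wk_succ, if_pos (by omega)]]
        show some (B2 ch g jp v (oe jp _)) = _
        rw [B2, if_pos hdir, B2dir_oe]

lemma wk2_bounce (u : U) (v : V) (hdir : g v ≠ jp) (hfix : (ch (g v)).fixB = false) :
    wk (A2 ch jp u) (B2 ch g jp v) 2 = some (.inl (g v)) := by
  rw [wk_succ, if_neg (by omega), wk1_A2]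
  show some (B2 ch g jp v (.inl jp)) = _
  rw [B2, if_neg hdir]
  simp [B2nd, hfix]

lemma walk2b (u : U) (v : V) (hdir : g v ≠ jp) (hfix : (ch (g v)).fixB = false) :
    ∀ t, t ≤ ((ch (g v)).toGPu).L u v + 1 →
      wk (A2 ch jp u) (B2 ch g jp v) (t + 2) =
        some (oe (g v) (wk (((ch (g v)).toGPu).A u) (((ch (g v)).toGPu).B v) t)) := by
  set G := (ch (g v)).toGPu with hG
  intro t
  induction t with
  | zero =>
      intro _
      rw [wk2_bounce ch g jp u v hdir hfix]
      rfl
  | succ t ih =>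
      intro ht
      have hW := ih (Nat.le_of_succ_le ht)
      by_cases hp : (t + 2) % 2 = 0
      · -- A2 step; sub A step (t even)
        rw [show t + 1 + 2 = (t + 2) + 1 from by omega, wk_succ, if_pos (by omega), hW]
        rw [show wk (G.A u) (G.B v) (t + 1) = G.A u (wk (G.A u) (G.B v) t) from
          by rw [wk_succ, if_pos (by omega)]]
        exact A2_oe ch jp u hdir _
      · -- B2 step; sub map-B step (t odd)
        have ht1 : 1 ≤ t := by omega
        obtain ⟨p, hp'⟩ : ∃ p, wk (G.A u) (G.B v) t = some p := by
          cases hq : wk (G.A u) (G.B v) t with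
          | none => exact absurd hq (G.hnn u v t ht1 (by omega))
          | some p => exact ⟨p, rfl⟩
        rw [show t + 1 + 2 = (t + 2) + 1 from by omega, wk_succ, if_neg (by omega), hW, hp']
        rw [show wk (G.A u) (G.B v) (t + 1) = Option.map (G.B v) (wk (G.A u) (G.B v) t) from
          by rw [wk_succ, if_neg (by omega)], hp']
        show some (B2 ch g jp v (.inr ⟨g v, p⟩)) = _
        rw [B2, if_neg hdir]
        simp [B2nd, hdir, oe]
        rfl

lemma wk2_fix (u : U) (v : V) (hdir : g v ≠ jp) (hfix : (ch (g v)).fixB = true) :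
    wk (A2 ch jp u) (B2 ch g jp v) 2 = some (.inl jp) := by
  rw [wk_succ, if_neg (by omega), wk1_A2]
  show some (B2 ch g jp v (.inl jp)) = _
  rw [B2, if_neg hdir]
  simp [B2nd, hfix]

end Asm2

end GHLE
namespace GHLE

section Asm2GP

variable {U V : Type} {d : ℕ} {P : Fin d → Type}
variable (ch : ∀ j, Child U V (P j)) (g : V → Fin d) (jp : Fin d)

def asm2a (hblk : (ch jp).isB = true) :
    GP U V (Fin d ⊕ (Σ i, P i)) (fun u v => (ch (g v)).phi u v) where
  A := A2 ch jp
  B := B2 ch g jp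
  hA := A2_invol ch jp
  hB := B2_invol ch g jp
  L := L2 ch g jp
  hhalt := by
    intro u v
    by_cases hdir : g v = jp
    · simp only [L2, if_pos hdir]
      have hs := ((ch jp).toGPv).hhalt v u
      have h1 := walk2dir ch g jp u v hdir (((ch jp).toGPv).L v u + 1) le_rfl
      have h2 := walk2dir ch g jp u v hdir (((ch jp).toGPv).L v u) (Nat.le_succ _)
      rw [h1, h2, hs]
    · by_cases hfix : (ch (g v)).fixB = true
      · simp only [L2, if_neg hdir, if_pos hfix]
        rw [wk2_fix ch g jp u v hdir hfix, wk1_A2]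
      · have hfix' : (ch (g v)).fixB = false := by
          cases hF : (ch (g v)).fixB
          · rfl
          · exact absurd hF hfix
        simp only [L2, if_neg hdir, if_neg hfix]
        have hs := ((ch (g v)).toGPu).hhalt u v
        have h1 := walk2b ch g jp u v hdir hfix' (((ch (g v)).toGPu).L u v + 1) le_rfl
        have h2 := walk2b ch g jp u v hdir hfix' (((ch (g v)).toGPu).L u v) (Nat.le_succ _)
        rw [show ((ch (g v)).toGPu).L u v + 2 + 1 = ((ch (g v)).toGPu).L u v + 1 + 2 from
          by omega, h1, h2, hs]
  hmin := by
    intro u v m hm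
    by_cases hdir : g v = jp
    · simp only [L2, if_pos hdir] at hm
      rcases Nat.eq_zero_or_pos m with rfl | hpos
      · rw [wk1_A2]
        simp [wk]
      · obtain ⟨t, rfl⟩ : ∃ t, m = t + 1 := ⟨m - 1, by omega⟩
        have h1 := walk2dir ch g jp u v hdir (t + 1) (by omega)
        have h2 := walk2dir ch g jp u v hdir t (by omega)
        rw [h1, h2]
        intro hEq
        exact ((ch jp).toGPv).hmin v u t (by omega)
          (oe_inj _ (Option.some_injective _ hEq))
    · by_cases hfix : (ch (g v)).fixB = true
      · simp only [L2, if_neg hdir, if_pos hfix] at hm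
        obtain rfl : m = 0 := by omega
        rw [wk1_A2]
        simp [wk]
      · have hfix' : (ch (g v)).fixB = false := by
          cases hF : (ch (g v)).fixB
          · rfl
          · exact absurd hF hfix
        simp only [L2, if_neg hdir, if_neg hfix] at hm
        rcases Nat.eq_zero_or_pos m with rfl | hpos
        · rw [wk1_A2]
          simp [wk]
        · rcases Nat.eq_or_lt_of_le hpos with h1 | h1
          · obtain rfl : m = 1 := h1.symm
            rw [wk2_bounce ch g jp u v hdir hfix', wk1_A2]
            intro hEq
            exact hdir (Sum.inl.inj (Option.some_injective _ hEq))
          · obtain ⟨t, rfl⟩ : ∃ t, m = t + 2 := ⟨m - 2, by omega⟩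
            have h2 := walk2b ch g jp u v hdir hfix' (t + 1) (by omega)
            have h3 := walk2b ch g jp u v hdir hfix' t (by omega)
            rw [show t + 2 + 1 = t + 1 + 2 from by omega, h2, h3]
            intro hEq
            exact ((ch (g v)).toGPu).hmin u v t (by omega)
              (oe_inj _ (Option.some_injective _ hEq))
  hpar := by
    intro u v
    by_cases hdir : g v = jp
    · simp only [L2, if_pos hdir]
      rw [hdir]
      have hsub := ((ch jp).toGPv).hpar v u
      have hphi := Child.isB_phi hblk v u
      cases hb : (ch jp).vphiV v u
      · rw [hb] at hphi
        have h0 : ¬ ((ch jp).toGPv).L v u % 2 = 1 := fun hc => by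
          have h2 := hsub.mp hc; rw [hb] at h2; exact Bool.false_ne_true h2
        rw [← hphi]
        simp only [Bool.not_false]
        exact ⟨fun _ => by trivial, fun _ => by omega⟩
      · rw [hb] at hphi
        have h1 : ((ch jp).toGPv).L v u % 2 = 1 := hsub.mpr hb
        rw [← hphi]
        simp only [Bool.not_true]
        exact ⟨fun hc => by omega, fun hc => by simp at hc⟩
    · by_cases hfix : (ch (g v)).fixB = true
      · simp only [L2, if_neg hdir, if_pos hfix]
        rw [Child.fix_phi hfix u v]
        simp
      · have hfix' : (ch (g v)).fixB = false := by
          cases hF : (ch (g v)).fixB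
          · rfl
          · exact absurd hF hfix
        simp only [L2, if_neg hdir, if_neg hfix]
        have hsub := ((ch (g v)).toGPu).hpar u v
        rw [← Child.nofix_phi hfix' u v]
        constructor
        · intro hc; exact hsub.mp (by omega)
        · intro hc; have := hsub.mpr hc; omega
  hnn := by
    intro u v t h1 h2
    by_cases hdir : g v = jp
    · simp only [L2, if_pos hdir] at h2
      obtain ⟨t', rfl⟩ : ∃ t', t = t' + 1 := ⟨t - 1, by omega⟩
      rw [walk2dir ch g jp u v hdir t' (by omega)]
      simp
    · by_cases hfix : (ch (g v)).fixB = true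
      · simp only [L2, if_neg hdir, if_pos hfix] at h2
        obtain rfl : t = 1 := by omega
        rw [wk1_A2]
        simp
      · have hfix' : (ch (g v)).fixB = false := by
          cases hF : (ch (g v)).fixB
          · rfl
          · exact absurd hF hfix
        simp only [L2, if_neg hdir, if_neg hfix] at h2
        rcases Nat.eq_or_lt_of_le h1 with hh | hh
        · obtain rfl : t = 1 := hh.symm
          rw [wk1_A2]
          simp
        · obtain ⟨t', rfl⟩ : ∃ t', t = t' + 2 := ⟨t - 2, by omega⟩
          rw [walk2b ch g jp u v hdir hfix' t' (by omega)]
          simp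

end Asm2GP

end GHLE
namespace GHLE

section Asm2b

variable {U V : Type} {d : ℕ} {P : Fin d → Type}

def cA (j0 : Fin d) : Option (Fin d ⊕ (Σ i, P i)) → Option (Fin d ⊕ (Σ i, P i))
  | none => some (.inl j0)
  | some (.inl j) => if j = j0 then none else some (.inl j)
  | some (.inr x) => some (.inr x)

def cB (j0 t : Fin d) (fx : Bool) : (Fin d ⊕ (Σ i, P i)) → (Fin d ⊕ (Σ i, P i)) := fun x =>
  if fx then x else
  match x with
  | .inl j => if j = j0 then .inl t else if j = t then .inl j0 else .inl j
  | .inr y => .inr y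

lemma cB_true (j0 t : Fin d) (x : Fin d ⊕ (Σ i, P i)) : cB j0 t true x = x := by
  simp [cB]

lemma cB_inl0 (j0 t : Fin d) : cB (P := P) j0 t false (.inl j0) = .inl t := by
  simp [cB]

lemma cB_inlt (j0 t : Fin d) (h : t ≠ j0) : cB (P := P) j0 t false (.inl t) = .inl j0 := by
  simp [cB, h]

lemma cB_inl_other (j0 t j : Fin d) (h1 : j ≠ j0) (h2 : j ≠ t) :
    cB (P := P) j0 t false (.inl j) = .inl j := by
  simp [cB, h1, h2]

lemma cB_inr (j0 t : Fin d) (y : Σ i, P i) : cB j0 t false (.inr y) = .inr y := by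
  simp [cB]

/-- A small gadget: the tap holder always sends the water to the proxy `j0`;
the root owner either leaves it there (odd length) or bounces it to a free
proxy (even length). -/
def miniGP (j0 : Fin d) (tgt : V → Fin d) (fx : V → Bool)
    (htgt : ∀ v, fx v = false → tgt v ≠ j0)
    (φ : U → V → Bool) (hφ : ∀ u v, φ u v = fx v) :
    GP U V (Fin d ⊕ (Σ i, P i)) φ where
  A := fun _ => cA j0
  B := fun v => cB j0 (tgt v) (fx v)
  hA := by
    intro u x
    obtain (_ | (j | y)) := x
    · show cA j0 (some (.inl j0)) = none
      simp [cA]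
    · by_cases hj : j = j0
      · rw [hj]
        show cA j0 (cA j0 (some (.inl j0))) = some (.inl j0)
        simp [cA]
      · show cA j0 (cA j0 (some (.inl j))) = some (.inl j)
        simp [cA, hj]
    · rfl
  hB := by
    intro v x
    show cB j0 (tgt v) (fx v) (cB j0 (tgt v) (fx v) x) = x
    by_cases hf : fx v = true
    · rw [hf, cB_true, cB_true]
    · have hf' : fx v = false := by simpa using hf
      rw [hf']
      have ht := htgt v hf'
      obtain (j | y) := x
      · by_cases hj : j = j0
        · rw [hj, cB_inl0, cB_inlt _ _ ht]
        · by_cases hjt : j = tgt v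
          · rw [hjt, cB_inlt _ _ ht, cB_inl0]
          · rw [cB_inl_other _ _ _ hj hjt, cB_inl_other _ _ _ hj hjt]
      · rw [cB_inr, cB_inr]
  L := fun _ v => if fx v then 1 else 2
  hhalt := by
    intro u v
    change wk (cA (P := P) j0) (cB j0 (tgt v) (fx v)) ((if fx v = true then 1 else 2) + 1)
      = wk (cA (P := P) j0) (cB j0 (tgt v) (fx v)) (if fx v = true then 1 else 2)
    have h1 : wk (cA (P := P) j0) (cB j0 (tgt v) (fx v)) 1 = some (.inl j0) := rfl
    by_cases hf : fx v = true
    · rw [if_pos hf]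
      show Option.map (cB j0 (tgt v) (fx v)) (wk (cA (P := P) j0) (cB j0 (tgt v) (fx v)) 1)
        = wk (cA (P := P) j0) (cB j0 (tgt v) (fx v)) 1
      rw [h1]
      show some (cB j0 (tgt v) (fx v) (.inl j0)) = some (.inl j0)
      rw [hf, cB_true]
    · have hf' : fx v = false := by simpa using hf
      rw [if_neg hf]
      have h2 : wk (cA (P := P) j0) (cB j0 (tgt v) (fx v)) 2 = some (.inl (tgt v)) := by
        show Option.map (cB j0 (tgt v) (fx v)) (wk (cA (P := P) j0) (cB j0 (tgt v) (fx v)) 1)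
          = some (.inl (tgt v))
        rw [h1]
        show some (cB j0 (tgt v) (fx v) (.inl j0)) = some (.inl (tgt v))
        rw [hf', cB_inl0]
      show cA (P := P) j0 (wk (cA (P := P) j0) (cB j0 (tgt v) (fx v)) 2)
        = wk (cA (P := P) j0) (cB j0 (tgt v) (fx v)) 2
      rw [h2]
      show cA (P := P) j0 (some (.inl (tgt v))) = some (.inl (tgt v))
      simp [cA, htgt v hf']
  hmin := by
    intro u v m hm0
    have hm : m < (if fx v = true then 1 else 2) := hm0
    change wk (cA (P := P) j0) (cB j0 (tgt v) (fx v)) (m + 1)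
      ≠ wk (cA (P := P) j0) (cB j0 (tgt v) (fx v)) m
    have h1 : wk (cA (P := P) j0) (cB j0 (tgt v) (fx v)) 1 = some (.inl j0) := rfl
    by_cases hf : fx v = true
    · rw [if_pos hf] at hm
      obtain rfl : m = 0 := by omega
      rw [show (0 : ℕ) + 1 = 1 from rfl, h1]
      simp [wk]
    · have hf' : fx v = false := by simpa using hf
      rw [if_neg hf] at hm
      have h2 : wk (cA (P := P) j0) (cB j0 (tgt v) (fx v)) 2 = some (.inl (tgt v)) := by
        show Option.map (cB j0 (tgt v) (fx v)) (wk (cA (P := P) j0) (cB j0 (tgt v) (fx v)) 1)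
          = some (.inl (tgt v))
        rw [h1]
        show some (cB j0 (tgt v) (fx v) (.inl j0)) = some (.inl (tgt v))
        rw [hf', cB_inl0]
      interval_cases m
      · rw [show (0 : ℕ) + 1 = 1 from rfl, h1]
        simp [wk]
      · rw [show (1 : ℕ) + 1 = 2 from rfl, h2, h1]
        intro hc
        exact (htgt v hf') (Sum.inl.inj (Option.some_injective _ hc))
  hpar := by
    intro u v
    change (if fx v = true then 1 else 2) % 2 = 1 ↔ φ u v = true
    rw [hφ u v]
    by_cases hf : fx v = true
    · rw [if_pos hf, hf]
      simp
    · have hf' : fx v = false := by simpa using hf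
      rw [if_neg hf, hf']
      simp
  hnn := by
    intro u v t h1 h20
    have h2 : t ≤ (if fx v = true then 1 else 2) := h20
    change wk (cA (P := P) j0) (cB j0 (tgt v) (fx v)) t ≠ none
    have hw1 : wk (cA (P := P) j0) (cB j0 (tgt v) (fx v)) 1 = some (.inl j0) := rfl
    by_cases hf : fx v = true
    · rw [if_pos hf] at h2
      obtain rfl : t = 1 := by omega
      rw [hw1]
      simp
    · have hf' : fx v = false := by simpa using hf
      rw [if_neg hf] at h2
      have hw2 : wk (cA (P := P) j0) (cB j0 (tgt v) (fx v)) 2 = some (.inl (tgt v)) := by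
        show Option.map (cB j0 (tgt v) (fx v)) (wk (cA (P := P) j0) (cB j0 (tgt v) (fx v)) 1)
          = some (.inl (tgt v))
        rw [hw1]
        show some (cB j0 (tgt v) (fx v) (.inl j0)) = some (.inl (tgt v))
        rw [hf', cB_inl0]
      interval_cases t
      · rw [hw1]; simp
      · rw [hw2]; simp

variable (ch : ∀ j, Child U V (P j)) (g : V → Fin d)

def asm2b0 (h0 : d = 0) :
    GP U V (Fin d ⊕ (Σ i, P i)) (fun u v => (ch (g v)).phi u v) where
  A := fun _ o => o
  B := fun _ x => x
  hA := fun _ o => rfl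
  hB := fun _ x => rfl
  L := fun _ _ => 0
  hhalt := by intro u v; exact Fin.elim0 (h0 ▸ g v)
  hmin := by intro u v m hm; exact Fin.elim0 (h0 ▸ g v)
  hpar := by intro u v; exact Fin.elim0 (h0 ▸ g v)
  hnn := by intro u v t ht1 ht2; exact Fin.elim0 (h0 ▸ g v)

def asm2bpos (hd : 0 < d) (hall : ∀ j, (ch j).isB = false) :
    GP U V (Fin d ⊕ (Σ i, P i)) (fun u v => (ch (g v)).phi u v) :=
  let j0 : Fin d := ⟨0, hd⟩
  if h1 : d = 1 then
    (if hb : (ch j0).fixB = true then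
      miniGP j0 (fun _ => j0) (fun v => (ch (g v)).fixB)
        (fun v hv => by
          have hv' : (ch (g v)).fixB = false := hv
          have hjeq : g v = j0 := Fin.ext (by have := (g v).isLt; omega)
          rw [hjeq, hb] at hv'
          exact absurd hv' (by simp))
        _ (fun u v => Child.notB_phi (hall (g v)) u v)
    else
      trivGP.copy (fun u v => by
        have hjeq : g v = j0 := Fin.ext (by have := (g v).isLt; omega)
        have hf : (ch j0).fixB = false := by
          cases hF : (ch j0).fixB
          · rfl
          · exact absurd hF hb
        rw [Child.notB_phi (hall (g v)) u v, hjeq, hf]))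
  else
    miniGP j0 (fun v => if g v = j0 then ⟨1, by omega⟩ else g v)
      (fun v => (ch (g v)).fixB)
      (fun v _ => by
        by_cases hj : g v = j0
        · simp only [hj, if_true]
          intro hc
          have h10 : (1 : ℕ) = 0 := congrArg Fin.val hc
          omega
        · simp only [hj, if_false]
          exact hj)
      _ (fun u v => Child.notB_phi (hall (g v)) u v)

/-- Assembler 2: tap holder does not own the root. -/
noncomputable def asm2 : GP U V (Fin d ⊕ (Σ i, P i)) (fun u v => (ch (g v)).phi u v) :=
  if hb : ∃ jpp, (ch jpp).isB = true then asm2a ch g hb.choose hb.choose_spec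
  else
    have hall : ∀ j, (ch j).isB = false := fun j => by
      cases hI : (ch j).isB
      · rfl
      · exact absurd ⟨j, hI⟩ hb
    if h0 : d = 0 then asm2b0 ch g h0
    else asm2bpos ch g (by omega) hall

end Asm2b

end GHLE
namespace GHLE

variable {X Y : Type}

def Pipes : ProtTree X Y → Type
  | .leaf _ => Empty
  | .anode d _ c => Fin d ⊕ (Σ j, Pipes (c j))
  | .bnode d _ c => Fin d ⊕ (Σ j, Pipes (c j))

def phiA (T : ProtTree X Y) : X → Y → Bool := fun x y => T.eval x y
def phiB (T : ProtTree X Y) : Y → X → Bool := fun y x => !(T.eval x y)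

def Built : ProtTree X Y → Type
  | .leaf _ => PUnit
  | .anode d g c => GP X Y (Pipes (.anode d g c)) (phiA (.anode d g c))
      × GP Y X (Pipes (.anode d g c)) (phiB (.anode d g c))
  | .bnode d g c => GP X Y (Pipes (.bnode d g c)) (phiA (.bnode d g c))
      × GP Y X (Pipes (.bnode d g c)) (phiB (.bnode d g c))

def mkChildXY : (t : ProtTree X Y) → Built t → Child X Y (Pipes t)
  | .leaf b, _ => .leafc b
  | .anode d g c, pr => .block (phiA (.anode d g c)) pr.1 pr.2
  | .bnode d g c, pr => .block (phiA (.bnode d g c)) pr.1 pr.2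

def mkChildYX : (t : ProtTree X Y) → Built t → Child Y X (Pipes t)
  | .leaf b, _ => .leafc (!b)
  | .anode d g c, pr => .block (phiB (.anode d g c)) pr.2
      (pr.1.copy (fun x y => by simp [phiA, phiB]))
  | .bnode d g c, pr => .block (phiB (.bnode d g c)) pr.2
      (pr.1.copy (fun x y => by simp [phiA, phiB]))

lemma mkChildXY_phi (t : ProtTree X Y) (pr : Built t) (x : X) (y : Y) :
    (mkChildXY t pr).phi x y = t.eval x y := by
  cases t <;> rfl

lemma mkChildYX_phi (t : ProtTree X Y) (pr : Built t) (y : Y) (x : X) :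
    (mkChildYX t pr).phi y x = !(t.eval x y) := by
  cases t <;> rfl

noncomputable def build : (T : ProtTree X Y) → Built T :=
  fun T => ProtTree.rec (motive := Built)
    (fun _ => PUnit.unit)
    (fun d g c ih =>
      ((asm1 (fun j => mkChildXY (c j) (ih j)) g).copy
          (fun x y => mkChildXY_phi (c (g x)) (ih (g x)) x y),
       (asm2 (fun j => mkChildYX (c j) (ih j)) g).copy
          (fun y x => mkChildYX_phi (c (g x)) (ih (g x)) y x)))
    (fun d g c ih =>
      ((asm2 (fun j => mkChildXY (c j) (ih j)) g).copy
          (fun x y => mkChildXY_phi (c (g y)) (ih (g y)) x y),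
       (asm1 (fun j => mkChildYX (c j) (ih j)) g).copy
          (fun y x => mkChildYX_phi (c (g y)) (ih (g y)) y x)))
    T

end GHLE
namespace GHLE

variable {X Y : Type}

noncomputable def pipesFintype : (T : ProtTree X Y) → Fintype (Pipes T)
  | .leaf _ => inferInstanceAs (Fintype Empty)
  | .anode d _ c =>
      letI : ∀ j, Fintype (Pipes (c j)) := fun j => pipesFintype (c j)
      inferInstanceAs (Fintype (Fin d ⊕ (Σ j, Pipes (c j))))
  | .bnode d _ c =>
      letI : ∀ j, Fintype (Pipes (c j)) := fun j => pipesFintype (c j)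
      inferInstanceAs (Fintype (Fin d ⊕ (Σ j, Pipes (c j))))

lemma pipesCard : (T : ProtTree X Y) → @Fintype.card (Pipes T) (pipesFintype T) = T.edges
  | .leaf _ => rfl
  | .anode d g c => by
      letI : ∀ j, Fintype (Pipes (c j)) := fun j => pipesFintype (c j)
      show Fintype.card (Fin d ⊕ (Σ j, Pipes (c j))) = d + ∑ i : Fin d, (c i).edges
      rw [Fintype.card_sum, Fintype.card_fin, Fintype.card_sigma]
      congr 1
      exact Finset.sum_congr rfl (fun j _ => pipesCard (c j))
  | .bnode d g c => by
      letI : ∀ j, Fintype (Pipes (c j)) := fun j => pipesFintype (c j)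
      show Fintype.card (Fin d ⊕ (Σ j, Pipes (c j))) = d + ∑ i : Fin d, (c i).edges
      rw [Fintype.card_sum, Fintype.card_fin, Fintype.card_sigma]
      congr 1
      exact Finset.sum_congr rfl (fun j _ => pipesCard (c j))

noncomputable def pipesEquiv (T : ProtTree X Y) : Pipes T ≃ Fin T.edges :=
  letI := pipesFintype T
  Fintype.equivFinOfCardEq (pipesCard T)

lemma ghWalk_eq_wk {s : ℕ} (A : Option (Fin s) → Option (Fin s)) (B : Fin s → Fin s) :
    ∀ n, ghWalk A B n = wk A B n
  | 0 => rfl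
  | n + 1 => by
      show ghStep A B n (ghWalk A B n) = _
      rw [ghWalk_eq_wk A B n]
      rfl

/-- Transport a gadget along an equivalence of pipe types into an actual
garden-hose protocol. -/
noncomputable def GP.toGHP {P : Type} {φ : X → Y → Bool} (G : GP X Y P φ) {s : ℕ}
    (e : P ≃ Fin s) : GHProtocol X Y s where
  A := fun x => Option.map e ∘ G.A x ∘ Option.map e.symm
  B := fun y => e ∘ G.B y ∘ e.symm
  hA := by
    intro x o
    show Option.map e (G.A x (Option.map e.symm (Option.map e (G.A x (Option.map e.symm o))))) = o
    have h1 : ∀ w : Option P, Option.map e.symm (Option.map e w) = w := by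
      intro w; cases w <;> simp
    have h2 : ∀ w : Option (Fin s), Option.map e (Option.map e.symm w) = w := by
      intro w; cases w <;> simp
    rw [h1, G.hA x, h2]
  hB := by
    intro y p
    show e (G.B y (e.symm (e (G.B y (e.symm p))))) = p
    rw [Equiv.symm_apply_apply, G.hB y, Equiv.apply_symm_apply]

lemma GP.toGHP_walk {P : Type} {φ : X → Y → Bool} (G : GP X Y P φ) {s : ℕ}
    (e : P ≃ Fin s) (x : X) (y : Y) :
    ∀ n, ghWalk ((G.toGHP e).A x) ((G.toGHP e).B y) n
      = Option.map e (wk (G.A x) (G.B y) n)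
  | 0 => rfl
  | n + 1 => by
      show ghStep _ _ n _ = _
      rw [ghStep, GP.toGHP_walk G e x y n, wk_succ]
      by_cases hp : n % 2 = 0
      · rw [if_pos hp, if_pos hp]
        show Option.map e (G.A x (Option.map e.symm (Option.map e (wk (G.A x) (G.B y) n)))) = _
        have h1 : ∀ w : Option P, Option.map e.symm (Option.map e w) = w := by
          intro w; cases w <;> simp
        rw [h1]
      · rw [if_neg hp, if_neg hp]
        cases wk (G.A x) (G.B y) n with
        | none => rfl
        | some p =>
            show some (e (G.B y (e.symm (e p)))) = some (e (G.B y p))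
            rw [Equiv.symm_apply_apply]

lemma GP.toGHP_computes {P : Type} {f : X → Y → Bool} (G : GP X Y P f) {s : ℕ}
    (e : P ≃ Fin s) : (G.toGHP e).Computes f := by
  intro x y
  have hmem : ∀ n, (ghStep ((G.toGHP e).A x) ((G.toGHP e).B y) n
        (ghWalk ((G.toGHP e).A x) ((G.toGHP e).B y) n)
      = ghWalk ((G.toGHP e).A x) ((G.toGHP e).B y) n)
      ↔ wk (G.A x) (G.B y) (n + 1) = wk (G.A x) (G.B y) n := by
    intro n
    have h1 : ghStep ((G.toGHP e).A x) ((G.toGHP e).B y) n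
        (ghWalk ((G.toGHP e).A x) ((G.toGHP e).B y) n)
        = ghWalk ((G.toGHP e).A x) ((G.toGHP e).B y) (n + 1) := rfl
    rw [h1, GP.toGHP_walk G e x y (n + 1), GP.toGHP_walk G e x y n]
    constructor
    · intro h
      have hinj : Function.Injective (Option.map (e : P → Fin s)) :=
        Option.map_injective e.injective
      exact hinj h
    · intro h; rw [h]
  have hL : ghLen ((G.toGHP e).A x) ((G.toGHP e).B y) = G.L x y := by
    apply le_antisymm
    · exact Nat.sInf_le ((hmem (G.L x y)).mpr (G.hhalt x y))
    · by_contra hc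
      push_neg at hc
      have hne : {n | ghStep ((G.toGHP e).A x) ((G.toGHP e).B y) n
          (ghWalk ((G.toGHP e).A x) ((G.toGHP e).B y) n)
          = ghWalk ((G.toGHP e).A x) ((G.toGHP e).B y) n}.Nonempty :=
        ⟨G.L x y, (hmem (G.L x y)).mpr (G.hhalt x y)⟩
      have hmem2 := Nat.sInf_mem hne
      have := (hmem _).mp hmem2
      exact G.hmin x y _ hc this
  refine ⟨⟨G.L x y, (hmem (G.L x y)).mpr (G.hhalt x y)⟩, ?_⟩
  rw [hL]
  exact G.hpar x y

end GHLE

/-- The garden-hose complexity of `f` is at most the number of edges in any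
deterministic communication protocol tree computing `f`. -/
theorem GH_le_protocol_tree_edges {X Y : Type} (f : X → Y → Bool)
    (T : ProtTree X Y) (hT : ∀ x y, T.eval x y = f x y)
    (hnl : ∀ b, T ≠ ProtTree.leaf b) :
    GH f ≤ T.edges := by
  have hG : ∃ G : GHLE.GP X Y (GHLE.Pipes T) f, True := by
    cases T with
    | leaf b => exact absurd rfl (hnl b)
    | anode d g c =>
        exact ⟨((GHLE.build (.anode d g c)).1).copy (fun x y => hT x y), trivial⟩
    | bnode d g c =>
        exact ⟨((GHLE.build (.bnode d g c)).1).copy (fun x y => hT x y), trivial⟩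
  obtain ⟨G, -⟩ := hG
  have hmem : T.edges ∈ {s | ∃ P : GHProtocol X Y s, P.Computes f} :=
    ⟨G.toGHP (GHLE.pipesEquiv T), G.toGHP_computes (GHLE.pipesEquiv T)⟩
  exact Nat.sInf_le hmem
end

section
/- Let g be a Boolean function on k bits computed by a (loose) permutation branching program of length T and width W, and let f₁,…,f_k be Boolean functions with GH(f_i) ≤ c for all i. Then GH(g(f₁,…,f_k)) = O(T · W · c). -/
/-- A (loose) permutation branching program on `k` Boolean variables with `T`
layers of `W` nodes each: every layer queries one variable, and for each fixed
value of that variable the outgoing edges form an injective map into the next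
layer's nodes together with the two sinks (`accept`/`reject`, represented by
`Bool`). -/
structure PBP (k T W : ℕ) where
  var : Fin T → Fin k
  next : Fin T → Bool → Fin W → Fin W ⊕ Bool
  inj : ∀ t b, Function.Injective (next t b)
  start : Fin W

/-- Running a permutation branching program on an input. -/
def PBP.run {k T W : ℕ} (M : PBP k T W) (x : Fin k → Bool) : Fin W ⊕ Bool :=
  Fin.foldl T
    (fun st t =>
      match st with
      | Sum.inl w => M.next t (x (M.var t)) w
      | Sum.inr b => Sum.inr b)
    (Sum.inl M.start)

/-- The program computes `g` if on every input it reaches the correct sink. -/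
def PBP.Computes {k T W : ℕ} (M : PBP k T W) (g : (Fin k → Bool) → Bool) : Prop :=
  ∀ x, M.run x = Sum.inr (g x)

namespace GHC

variable {α : Type}

def gStep (A : Option α → Option α) (B : α → α) (n : ℕ) (v : Option α) : Option α :=
  if n % 2 = 0 then A v else Option.map B v

def gWalk (A : Option α → Option α) (B : α → α) : ℕ → Option α
  | 0 => none
  | n + 1 => gStep A B n (gWalk A B n)

theorem gWalk_eq_ghWalk {s : ℕ} (A : Option (Fin s) → Option (Fin s)) (B : Fin s → Fin s) :
    ∀ n, gWalk A B n = ghWalk A B n := by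
  intro n
  induction n with
  | zero => rfl
  | succ n ih => simp [gWalk, ghWalk, gStep, ghStep, ih]

/-- tidy pipe type -/
abbrev TP (α : Type) : Type := Unit ⊕ (Option α × Bool)

variable [DecidableEq α] (A : Option α → Option α) (B : α → α)

def tA : Option (TP α) → Option (TP α)
  | none => some (Sum.inl ())
  | some (Sum.inl _) => none
  | some (Sum.inr (p, e)) =>
      if A p = p then some (Sum.inr (p, e)) else some (Sum.inr (A p, !e))

def tB : TP α → TP α
  | Sum.inl _ => Sum.inr (none, false)
  | Sum.inr (none, false) => Sum.inl ()
  | Sum.inr (none, true) => Sum.inr (none, true)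
  | Sum.inr (some q, e) => if B q = q then Sum.inr (some q, e) else Sum.inr (some (B q), !e)

theorem tA_inv (hA : Function.Involutive A) : Function.Involutive (tA A) := by
  intro v
  match v with
  | none => simp [tA]
  | some (Sum.inl u) => simp [tA]
  | some (Sum.inr (p, e)) =>
    by_cases h : A p = p
    · simp [tA, h]
    · have h2 : A (A p) = p := hA p
      have h3 : ¬ A (A p) = A p := by rw [h2]; exact fun hc => h hc.symm
      simp only [tA, h, if_false, h3, h2, Bool.not_not, if_neg]
      rw [if_neg (fun hc => h (Eq.symm hc))]

theorem tB_inv (hB : Function.Involutive B) : Function.Involutive (tB B) := by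
  intro v
  match v with
  | Sum.inl u => simp [tB]
  | Sum.inr (none, false) => simp [tB]
  | Sum.inr (none, true) => simp [tB]
  | Sum.inr (some q, e) =>
    by_cases h : B q = q
    · simp [tB, h]
    · have h2 : B (B q) = q := hB q
      have h3 : ¬ B (B q) = B q := by rw [h2]; exact fun hc => h hc.symm
      simp only [tB, h, if_false, h3, h2, Bool.not_not, if_neg]
      rw [if_neg (fun hc => h (Eq.symm hc))]

section Tidy

variable (N : ℕ)

local notation "w" => gWalk A B
local notation "tw" => gWalk (tA A) (tB B)

theorem tw_one : tw 1 = some (Sum.inl ()) := by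
  simp [gWalk, gStep, tA]

theorem tw_two : tw 2 = some (Sum.inr (none, false)) := by
  simp [gWalk, gStep, tA, tB]

theorem tidy_walk (hmin : ∀ m < N, w (m + 1) ≠ w m) :
    ∀ n ≤ N, tw (n + 2) = some (Sum.inr (w n, decide (n % 2 = 1))) := by
  intro n
  induction n with
  | zero => intro _; exact tw_two A B
  | succ n ih =>
    intro hn
    have hlt : n < N := by omega
    have ihn := ih (le_of_lt hlt)
    have hne : w (n + 1) ≠ w n := hmin n hlt
    have hstep : w (n + 1) = gStep A B n (w n) := rfl
    show gStep (tA A) (tB B) (n + 2) (tw (n + 2)) = _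
    rw [ihn]
    rcases Nat.even_or_odd n with he | ho
    · have h0 : n % 2 = 0 := Nat.even_iff.mp he
      have h1 : (n + 1) % 2 = 1 := by omega
      have h2 : (n + 2) % 2 = 0 := by omega
      have hA' : w (n + 1) = A (w n) := by rw [hstep]; simp [gStep, h0]
      have hAn : ¬ A (w n) = w n := by rw [← hA']; exact hne
      have hg : gStep (tA A) (tB B) (n + 2) (some (Sum.inr (w n, decide (n % 2 = 1))))
          = tA A (some (Sum.inr (w n, decide (n % 2 = 1)))) := by simp [gStep, h2]
      rw [hg]
      have hd0 : decide (n % 2 = 1) = false := by simp [h0]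
      have hd1 : decide ((n + 1) % 2 = 1) = true := by simp [h1]
      rw [hd0]
      simp only [tA, if_neg hAn]
      rw [hd1, ← hA']
      simp
    · have h0 : n % 2 = 1 := Nat.odd_iff.mp ho
      have h1 : (n + 1) % 2 = 0 := by omega
      have h2 : (n + 2) % 2 = 1 := by omega
      have hB' : w (n + 1) = Option.map B (w n) := by
        rw [hstep]; simp [gStep, h0]
      rcases hwn : w n with _ | q
      · exfalso; apply hne; rw [hB', hwn]; rfl
      · have hBq : ¬ B q = q := by
          intro hc; apply hne; rw [hB', hwn]; simp [hc]
        have : Option.map B (w n) = some (B q) := by rw [hwn]; rfl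
        simp [gStep, h2, tB, h0, h1, hBq, hB', this]
theorem tidy_w1 (hmin : ∀ m < N, w (m + 1) ≠ w m) :
    ∀ n ≤ N + 2, 0 < n → gWalk (tA A) (tB B) n ≠ none := by
  intro n hn hpos
  match n, hpos with
  | 1, _ => rw [tw_one]; simp
  | (m + 2), _ =>
    rw [tidy_walk A B N hmin m (by omega)]; simp

theorem tidy_w2 (hmin : ∀ m < N, w (m + 1) ≠ w m) :
    ∀ m < N + 2, gWalk (tA A) (tB B) (m + 1) ≠ gWalk (tA A) (tB B) m := by
  intro m hm
  match m with
  | 0 => rw [tw_one]; simp [gWalk]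
  | 1 => rw [tw_one, tw_two]; simp
  | (n + 2) =>
    rw [tidy_walk A B N hmin n (by omega), tidy_walk A B N hmin (n + 1) (by omega)]
    have : decide ((n + 1) % 2 = 1) ≠ decide (n % 2 = 1) := by
      rcases Nat.even_or_odd n with he | ho
      · have h0 : n % 2 = 0 := Nat.even_iff.mp he
        have h1 : (n + 1) % 2 = 1 := by omega
        simp [h0, h1]
      · have h0 : n % 2 = 1 := Nat.odd_iff.mp ho
        have h1 : (n + 1) % 2 = 0 := by omega
        simp [h0, h1]
    intro hc
    apply this
    injection hc with hc'
    injection hc' with hc''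
    exact congrArg Prod.snd hc''

theorem tidy_w3 (hmin : ∀ m < N, w (m + 1) ≠ w m) (hhalt : w (N + 1) = w N) :
    gWalk (tA A) (tB B) (N + 3) = gWalk (tA A) (tB B) (N + 2) := by
  have hN := tidy_walk A B N hmin N (le_refl N)
  show gStep (tA A) (tB B) (N + 2) (tw (N + 2)) = tw (N + 2)
  rw [hN]
  rcases Nat.even_or_odd N with he | ho
  · have h0 : N % 2 = 0 := Nat.even_iff.mp he
    have h2 : (N + 2) % 2 = 0 := by omega
    have hg : gStep A B N (w N) = w N := hhalt
    have hA' : A (w N) = w N := by simpa [gStep, h0] using hg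
    simp [gStep, h2, tA, hA']
  · have h0 : N % 2 = 1 := Nat.odd_iff.mp ho
    have h2 : (N + 2) % 2 = 1 := by omega
    have hg : gStep A B N (w N) = w N := hhalt
    have hB' : Option.map B (w N) = w N := by simpa [gStep, h0] using hg
    rcases hwN : w N with _ | q
    · simp [gStep, h2, tB, h0]
    · have hBq : B q = q := by
        rw [hwN] at hB'; simpa using hB'
      simp [gStep, h2, tB, h0, hBq]

end Tidy


section Big

variable {k T W c : ℕ}

abbrev QP (c : ℕ) := TP (Fin c)

inductive Slot (c : ℕ) : Type where
  | sF (p : QP c)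
  | sk
  | sR (p : QP c)
  | sj
  | sacc (p : QP c)
  | srej (p : QP c)
  deriving DecidableEq

abbrev BPos (T W c : ℕ) := Fin T × Fin W × Slot c

def slotEquiv (c : ℕ) : Slot c ≃ (QP c × Fin 4) ⊕ Fin 2 where
  toFun s := match s with
    | Slot.sF p => Sum.inl (p, 0)
    | Slot.sR p => Sum.inl (p, 1)
    | Slot.sacc p => Sum.inl (p, 2)
    | Slot.srej p => Sum.inl (p, 3)
    | Slot.sk => Sum.inr 0
    | Slot.sj => Sum.inr 1
  invFun s := match s with
    | Sum.inl (p, 0) => Slot.sF p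
    | Sum.inl (p, 1) => Slot.sR p
    | Sum.inl (p, 2) => Slot.sacc p
    | Sum.inl (p, 3) => Slot.srej p
    | Sum.inr 0 => Slot.sk
    | Sum.inr 1 => Slot.sj
  left_inv s := by cases s <;> rfl
  right_inv s := by
    rcases s with ⟨p, j⟩ | j
    · match j with
      | 0 => rfl
      | 1 => rfl
      | 2 => rfl
      | 3 => rfl
    · match j with
      | 0 => rfl
      | 1 => rfl

noncomputable instance (c : ℕ) : Fintype (Slot c) := Fintype.ofEquiv _ (slotEquiv c).symm

theorem card_slot (c : ℕ) : Fintype.card (Slot c) = 8 * c + 14 := by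
  rw [Fintype.card_congr (slotEquiv c)]
  simp [TP]
  ring

variable (M : PBP k T W) (hT : 0 < T)

def fin0 : Fin T := ⟨0, hT⟩

def iF (t : Fin T) (u : Fin W) : Option (QP c) → Option (BPos T W c)
  | some p => some (t, u, Slot.sF p)
  | none => if t = fin0 hT ∧ u = M.start then none else some (t, u, Slot.sk)

def iR (t : Fin T) (u : Fin W) : Option (QP c) → Option (BPos T W c)
  | some p => some (t, u, Slot.sR p)
  | none => some (t, u, Slot.sj)

theorem iF_inj (t : Fin T) (u : Fin W) (q q' : Option (QP c))
    (h : iF M hT t u q = iF M hT t u q') : q = q' := by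
  rcases q with _ | p <;> rcases q' with _ | p'
  · rfl
  · exfalso; simp only [iF] at h; split_ifs at h <;> simp_all
  · exfalso; simp only [iF] at h; split_ifs at h <;> simp_all
  · simp only [iF] at h; simpa using h

open Classical in
noncomputable def bigA (a : Fin k → Option (QP c) → Option (QP c)) :
    Option (BPos T W c) → Option (BPos T W c) := fun v =>
  match v with
  | none => iF M hT (fin0 hT) M.start (a (M.var (fin0 hT)) none)
  | some (t, u, Slot.sF p) =>
      if a (M.var t) (some p) = some p then
        match M.next t false u with
        | Sum.inl v' => some (t, v', Slot.sR p)
        | Sum.inr true => some (t, u, Slot.sacc p)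
        | Sum.inr false => some (t, u, Slot.sF p)
      else iF M hT t u (a (M.var t) (some p))
  | some (t, u, Slot.sk) =>
      if t = fin0 hT ∧ u = M.start then some (t, u, Slot.sk)
      else
        match a (M.var t) none with
        | none => some (t, u, Slot.sk)
        | some q => some (t, u, Slot.sF q)
  | some (t, u, Slot.sR p) =>
      if a (M.var t) (some p) = some p then
        if h : ∃ w, M.next t false w = Sum.inl u then some (t, h.choose, Slot.sF p)
        else some (t, u, Slot.sR p)
      else
        match a (M.var t) (some p) with
        | none => some (t, u, Slot.sj)
        | some q => some (t, u, Slot.sR q)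
  | some (t, u, Slot.sj) =>
      match a (M.var t) none with
      | none => some (t, u, Slot.sj)
      | some q => some (t, u, Slot.sR q)
  | some (t, u, Slot.sacc p) =>
      if a (M.var t) (some p) = some p ∧ M.next t false u = Sum.inr true
      then some (t, u, Slot.sF p) else some (t, u, Slot.sacc p)
  | some (t, u, Slot.srej p) => some (t, u, Slot.srej p)

open Classical in
noncomputable def bigB (b : Fin k → QP c → QP c) : BPos T W c → BPos T W c := fun v =>
  match v with
  | (t, u, Slot.sF p) =>
      if b (M.var t) p = p then
        match M.next t true u with
        | Sum.inl v' => (t, v', Slot.sR p)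
        | Sum.inr false => (t, u, Slot.srej p)
        | Sum.inr true => (t, u, Slot.sF p)
      else (t, u, Slot.sF (b (M.var t) p))
  | (t, u, Slot.sk) =>
      if h : 0 < (t : ℕ) then (⟨(t : ℕ) - 1, by omega⟩, u, Slot.sj) else (t, u, Slot.sk)
  | (t, u, Slot.sj) =>
      if h : (t : ℕ) + 1 < T then (⟨(t : ℕ) + 1, h⟩, u, Slot.sk) else (t, u, Slot.sj)
  | (t, u, Slot.sR p) =>
      if b (M.var t) p = p then
        if h : ∃ w, M.next t true w = Sum.inl u then (t, h.choose, Slot.sF p)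
        else (t, u, Slot.sR p)
      else (t, u, Slot.sR (b (M.var t) p))
  | (t, u, Slot.sacc p) => (t, u, Slot.sacc p)
  | (t, u, Slot.srej p) =>
      if b (M.var t) p = p ∧ M.next t true u = Sum.inr false
      then (t, u, Slot.sF p) else (t, u, Slot.srej p)

section Inv

variable (a : Fin k → Option (QP c) → Option (QP c)) (b : Fin k → QP c → QP c)

theorem bigA_inv (ha : ∀ i, Function.Involutive (a i)) :
    Function.Involutive (bigA M hT a) := by
  classical
  intro v
  match v with
  | none =>
    rcases h0 : a (M.var (fin0 hT)) none with _ | q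
    · simp [bigA, iF, h0]
    · have haq : a (M.var (fin0 hT)) (some q) = none := by
        rw [← h0]; exact ha _ none
      have hne : ¬ a (M.var (fin0 hT)) (some q) = some q := by simp [haq]
      simp [bigA, iF, h0, hne, haq]
  | some (t, u, Slot.sF p) =>
    by_cases hfix : a (M.var t) (some p) = some p
    · rcases hnext : M.next t false u with v' | r
      · have hex : ∃ w, M.next t false w = Sum.inl v' := ⟨u, hnext⟩
        have hch : hex.choose = u := by
          apply M.inj t false
          rw [hex.choose_spec, hnext]
        simp [bigA, hfix, hnext, hex, hch]
      · cases r
        · simp [bigA, hfix, hnext]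
        · simp [bigA, hfix, hnext]
    · have hpp : a (M.var t) (a (M.var t) (some p)) = some p := ha _ _
      rcases haq : a (M.var t) (some p) with _ | q
      · rw [haq] at hpp
        by_cases hts : t = fin0 hT ∧ u = M.start
        · obtain ⟨ht, hu⟩ := hts
          subst ht; subst hu
          simp [bigA, hfix, haq, iF, hpp]
        · simp [bigA, hfix, haq, iF, hts, hpp]
      · rw [haq] at hpp
        have hpq : ¬ p = q := by rintro rfl; exact hfix haq
        have hqp : ¬ q = p := by rintro rfl; exact hfix haq
        simp [bigA, hfix, haq, iF, hpp, hpq, hqp]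
  | some (t, u, Slot.sk) =>
    by_cases hts : t = fin0 hT ∧ u = M.start
    · simp [bigA, hts]
    · rcases h0 : a (M.var t) none with _ | q
      · simp [bigA, hts, h0]
      · have haq : a (M.var t) (some q) = none := by rw [← h0]; exact ha _ none
        have hne : ¬ a (M.var t) (some q) = some q := by simp [haq]
        simp [bigA, hts, h0, hne, haq, iF]
  | some (t, u, Slot.sR p) =>
    by_cases hfix : a (M.var t) (some p) = some p
    · by_cases hex : ∃ w, M.next t false w = Sum.inl u
      · simp only [bigA, if_pos hfix, dif_pos hex]
        simp [bigA, hfix, hex.choose_spec]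
      · simp [bigA, hfix, hex]
    · have hpp : a (M.var t) (a (M.var t) (some p)) = some p := ha _ _
      rcases haq : a (M.var t) (some p) with _ | q
      · rw [haq] at hpp
        simp [bigA, hfix, haq, hpp]
      · rw [haq] at hpp
        have hpq : ¬ p = q := by rintro rfl; exact hfix haq
        have hqp : ¬ q = p := by rintro rfl; exact hfix haq
        simp [bigA, hfix, haq, hpp, hpq, hqp]
  | some (t, u, Slot.sj) =>
    rcases h0 : a (M.var t) none with _ | q
    · simp [bigA, h0]
    · have haq : a (M.var t) (some q) = none := by rw [← h0]; exact ha _ none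
      have hne : ¬ a (M.var t) (some q) = some q := by simp [haq]
      simp [bigA, h0, hne, haq]
  | some (t, u, Slot.sacc p) =>
    by_cases hc : a (M.var t) (some p) = some p ∧ M.next t false u = Sum.inr true
    · simp [bigA, hc, hc.1, hc.2]
    · simp [bigA, hc]
  | some (t, u, Slot.srej p) => simp [bigA]

theorem bigB_inv (hb : ∀ i, Function.Involutive (b i)) :
    Function.Involutive (bigB M b) := by
  classical
  intro v
  match v with
  | (t, u, Slot.sF p) =>
    by_cases hfix : b (M.var t) p = p
    · rcases hnext : M.next t true u with v' | r
      · have hex : ∃ w, M.next t true w = Sum.inl v' := ⟨u, hnext⟩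
        have hch : hex.choose = u := by
          apply M.inj t true
          rw [hex.choose_spec, hnext]
        simp [bigB, hfix, hnext, hex, hch]
      · cases r
        · simp [bigB, hfix, hnext]
        · simp [bigB, hfix, hnext]
    · have hpp : b (M.var t) (b (M.var t) p) = p := hb _ _
      have hpb : ¬ p = b (M.var t) p := by intro hc; exact hfix hc.symm
      simp [bigB, hfix, hpp, hpb]
  | (t, u, Slot.sk) =>
    by_cases ht : 0 < (t : ℕ)
    · have h1 : ((⟨(t : ℕ) - 1, by omega⟩ : Fin T) : ℕ) + 1 < T := by
        simp; omega
      simp only [bigB, dif_pos ht, dif_pos h1]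
      congr 1
      apply Fin.ext
      simp; omega
    · simp [bigB, ht]
  | (t, u, Slot.sj) =>
    by_cases ht : (t : ℕ) + 1 < T
    · have h1 : 0 < ((⟨(t : ℕ) + 1, ht⟩ : Fin T) : ℕ) := by simp
      simp only [bigB, dif_pos ht, dif_pos h1]
      congr 1
    · simp [bigB, ht]
  | (t, u, Slot.sR p) =>
    by_cases hfix : b (M.var t) p = p
    · by_cases hex : ∃ w, M.next t true w = Sum.inl u
      · simp only [bigB, if_pos hfix, dif_pos hex]
        simp [bigB, hfix, hex.choose_spec]
      · simp [bigB, hfix, hex]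
    · have hpp : b (M.var t) (b (M.var t) p) = p := hb _ _
      have hpb : ¬ p = b (M.var t) p := by intro hc; exact hfix hc.symm
      simp [bigB, hfix, hpp, hpb]
  | (t, u, Slot.sacc p) => simp [bigB]
  | (t, u, Slot.srej p) =>
    by_cases hc : b (M.var t) p = p ∧ M.next t true u = Sum.inr false
    · simp [bigB, hc, hc.1, hc.2]
    · simp [bigB, hc]

end Inv

section BPpath

variable (bits : Fin k → Bool)

def bpSt (M : PBP k T W) (bits : Fin k → Bool) : ℕ → Fin W ⊕ Bool
  | 0 => Sum.inl M.start
  | m + 1 =>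
    if h : m < T then
      (match bpSt M bits m with
       | Sum.inl w => M.next ⟨m, h⟩ (bits (M.var ⟨m, h⟩)) w
       | Sum.inr r => Sum.inr r)
    else bpSt M bits m

def bpStep (M : PBP k T W) (bits : Fin k → Bool) : (Fin W ⊕ Bool) → Fin T → (Fin W ⊕ Bool) :=
  fun st t =>
    match st with
    | Sum.inl w => M.next t (bits (M.var t)) w
    | Sum.inr b => Sum.inr b

theorem run_eq_bpSt : M.run bits = bpSt M bits T := by
  have key : ∀ n (h : n ≤ T),
      Fin.foldl n (fun st (i : Fin n) => bpStep M bits st (Fin.castLE h i))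
        (Sum.inl M.start) = bpSt M bits n := by
    intro n
    induction n with
    | zero => intro h; simp [bpSt]
    | succ n ih =>
      intro h
      rw [Fin.foldl_succ_last]
      have hn : n ≤ T := by omega
      have hfun : (fun (st : Fin W ⊕ Bool) (i : Fin n) => bpStep M bits st (Fin.castLE h i.castSucc))
          = (fun st i => bpStep M bits st (Fin.castLE hn i)) := by
        funext st i
        congr 1
      rw [hfun, ih hn]
      have hnT : n < T := h
      have hfin : Fin.castLE h (Fin.last n) = ⟨n, hnT⟩ := by apply Fin.ext; simp [Fin.last]
      rw [hfin]
      show bpStep M bits (bpSt M bits n) ⟨n, hnT⟩ = bpSt M bits (n + 1)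
      rw [bpSt, dif_pos hnT]
      rcases hst : bpSt M bits n with w | r <;> simp [bpStep, hst]
  rw [← key T (le_refl T)]
  unfold PBP.run
  congr 1

end BPpath

section Sim

variable (a : Fin k → Option (QP c) → Option (QP c)) (b : Fin k → QP c → QP c)

theorem iR_inj (t : Fin T) (u : Fin W) (q q' : Option (QP c))
    (h : iR t u q = iR t u q') : q = q' := by
  rcases q with _ | p <;> rcases q' with _ | p' <;> simp [iR] at h ⊢
  exact h

theorem fwd (ha : ∀ i, Function.Involutive (a i))
    (t : Fin T) (u : Fin W) (N τ : ℕ)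
    (hτ2 : τ % 2 = 0)
    (hstart : gWalk (bigA M hT a) (bigB M b) τ = iF M hT t u none)
    (hw2 : ∀ m < N, gWalk (a (M.var t)) (b (M.var t)) (m + 1)
        ≠ gWalk (a (M.var t)) (b (M.var t)) m)
    (hw1 : ∀ n ≤ N, 0 < n → gWalk (a (M.var t)) (b (M.var t)) n ≠ none)
    (hN1 : 1 ≤ N) :
    ∀ n ≤ N, gWalk (bigA M hT a) (bigB M b) (τ + n)
      = iF M hT t u (gWalk (a (M.var t)) (b (M.var t)) n) := by
  intro n
  induction n with
  | zero => intro _; exact hstart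
  | succ n ih =>
    intro hn
    have hlt : n < N := by omega
    have ih' := ih (le_of_lt hlt)
    have hbw : gWalk (bigA M hT a) (bigB M b) (τ + n + 1)
        = gStep (bigA M hT a) (bigB M b) (τ + n) (gWalk (bigA M hT a) (bigB M b) (τ + n)) := rfl
    have harith : τ + (n + 1) = τ + n + 1 := rfl
    rw [harith, hbw, ih']
    rcases Nat.even_or_odd n with he | ho
    · have hn0 : n % 2 = 0 := Nat.even_iff.mp he
      have hp : (τ + n) % 2 = 0 := by omega
      have htw : gWalk (a (M.var t)) (b (M.var t)) (n + 1)
          = a (M.var t) (gWalk (a (M.var t)) (b (M.var t)) n) := by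
        show gStep _ _ n _ = _
        simp [gStep, hn0]
      have hgs : gStep (bigA M hT a) (bigB M b) (τ + n) (iF M hT t u (gWalk (a (M.var t)) (b (M.var t)) n))
          = bigA M hT a (iF M hT t u (gWalk (a (M.var t)) (b (M.var t)) n)) := by
        simp [gStep, hp]
      rw [hgs]
      rcases hv : gWalk (a (M.var t)) (b (M.var t)) n with _ | p
      · -- n = 0
        have hn0' : n = 0 := by
          by_contra hne
          exact hw1 n (le_of_lt hlt) (Nat.pos_of_ne_zero hne) hv
        subst hn0'
        by_cases hts : t = fin0 hT ∧ u = M.start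
        · obtain ⟨ht', hu'⟩ := hts
          subst ht'; subst hu'
          have : iF (c := c) M hT (fin0 hT) M.start none = none := by simp [iF]
          rw [this]
          show iF M hT (fin0 hT) M.start (a (M.var (fin0 hT)) none) = _
          rw [htw, hv]
        · have : iF (c := c) M hT t u none = some (t, u, Slot.sk) := by simp [iF, hts]
          rw [this, htw, hv]
          rcases h1 : a (M.var t) none with _ | q
          · exfalso
            apply hw1 1 hN1 (by omega)
            show gStep _ _ 0 _ = none
            simp [gStep, h1, gWalk]
          · simp [bigA, hts, h1, iF]
      · have hfix : ¬ a (M.var t) (some p) = some p := by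
          intro hc
          apply hw2 n hlt
          rw [htw, hv, hc]
        rw [htw, hv]
        simp only [iF, bigA, if_neg hfix]
    · have hn1 : n % 2 = 1 := Nat.odd_iff.mp ho
      have hp : (τ + n) % 2 = 1 := by omega
      have htw : gWalk (a (M.var t)) (b (M.var t)) (n + 1)
          = Option.map (b (M.var t)) (gWalk (a (M.var t)) (b (M.var t)) n) := by
        show gStep _ _ n _ = _
        simp [gStep, hn1]
      rcases hv : gWalk (a (M.var t)) (b (M.var t)) n with _ | p
      · exact absurd hv (hw1 n (le_of_lt hlt) (by
          rcases Nat.eq_zero_or_pos n with h0 | h0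
          · omega
          · exact h0))
      · have hgs : gStep (bigA M hT a) (bigB M b) (τ + n) (iF M hT t u (some p))
            = Option.map (bigB M b) (some (t, u, Slot.sF p)) := by
          simp [gStep, iF]
          intro hc
          omega
        have hfix : ¬ b (M.var t) p = p := by
          intro hc
          apply hw2 n hlt
          rw [htw, hv]
          simp [hc]
        rw [htw, hv, hgs]
        simp [bigB, hfix, iF]

theorem desc (ha : ∀ i, Function.Involutive (a i)) (hb : ∀ i, Function.Involutive (b i))
    (t : Fin T) (v : Fin W) (N τR : ℕ)
    (hτ2 : τR % 2 = (N + 1) % 2)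
    (hw2 : ∀ m < N, gWalk (a (M.var t)) (b (M.var t)) (m + 1)
        ≠ gWalk (a (M.var t)) (b (M.var t)) m)
    (hw1 : ∀ n ≤ N, 0 < n → gWalk (a (M.var t)) (b (M.var t)) n ≠ none)
    (hstart : gWalk (bigA M hT a) (bigB M b) τR
        = iR t v (gWalk (a (M.var t)) (b (M.var t)) N)) :
    ∀ m ≤ N, gWalk (bigA M hT a) (bigB M b) (τR + m)
      = iR t v (gWalk (a (M.var t)) (b (M.var t)) (N - m)) := by
  intro m
  induction m with
  | zero => intro _; simpa using hstart
  | succ m ih =>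
    intro hm
    have hmN : m < N := by omega
    have ih' := ih (le_of_lt hmN)
    set n := N - m with hdef
    have hn1 : 1 ≤ n := by omega
    have hnN : n ≤ N := by omega
    have hidx : N - (m + 1) = n - 1 := by omega
    have hn' : n - 1 + 1 = n := by omega
    have hbw : gWalk (bigA M hT a) (bigB M b) (τR + m + 1)
        = gStep (bigA M hT a) (bigB M b) (τR + m) (gWalk (bigA M hT a) (bigB M b) (τR + m)) := rfl
    have harith : τR + (m + 1) = τR + m + 1 := rfl
    obtain ⟨p, hv⟩ : ∃ p, gWalk (a (M.var t)) (b (M.var t)) n = some p := by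
      rcases ho : gWalk (a (M.var t)) (b (M.var t)) n with _ | p
      · exact absurd ho (hw1 n hnN (by omega))
      · exact ⟨p, rfl⟩
    rcases Nat.even_or_odd n with he | ho
    · -- n even, time odd
      have hn0 : n % 2 = 0 := Nat.even_iff.mp he
      have hn2 : 2 ≤ n := by omega
      have hpar : (τR + m) % 2 = 1 := by omega
      obtain ⟨p', hv'⟩ : ∃ p', gWalk (a (M.var t)) (b (M.var t)) (n - 1) = some p' := by
        rcases ho' : gWalk (a (M.var t)) (b (M.var t)) (n - 1) with _ | p'
        · exact absurd ho' (hw1 (n - 1) (by omega) (by omega))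
        · exact ⟨p', rfl⟩
      have htw : gWalk (a (M.var t)) (b (M.var t)) n
          = Option.map (b (M.var t)) (gWalk (a (M.var t)) (b (M.var t)) (n - 1)) := by
        rw [← hn']
        show gStep _ _ (n - 1) _ = _
        have : (n - 1) % 2 = 1 := by omega
        simp [gStep, this]
      have hbp : b (M.var t) p' = p := by
        rw [hv, hv'] at htw
        simpa using htw.symm
      have hfix : ¬ b (M.var t) p = p := by
        intro hc
        apply hw2 (n - 1) (by omega)
        rw [hn', hv, hv']
        have : b (M.var t) p = p' := by rw [← hbp]; exact hb (M.var t) p'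
        rw [← this, hc]
      have hgs : gWalk (bigA M hT a) (bigB M b) (τR + m + 1)
          = Option.map (bigB M b) (gWalk (bigA M hT a) (bigB M b) (τR + m)) := by
        rw [hbw]; simp [gStep, hpar]
      rw [harith, hgs, ih', hidx, hv, hv']
      have hbpp : b (M.var t) p = p' := by rw [← hbp]; exact hb (M.var t) p'
      have hne : ¬ p' = p := by intro hc; exact hfix (by rw [← hc] at hbp ⊢; exact hbp)
      simp [iR, bigB, hfix, hbpp, hne]
    · -- n odd, time even
      have hn0 : n % 2 = 1 := Nat.odd_iff.mp ho
      have hpar : (τR + m) % 2 = 0 := by omega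
      have htw : gWalk (a (M.var t)) (b (M.var t)) n
          = a (M.var t) (gWalk (a (M.var t)) (b (M.var t)) (n - 1)) := by
        rw [← hn']
        show gStep _ _ (n - 1) _ = _
        have : (n - 1) % 2 = 0 := by omega
        simp [gStep, this]
      have hback : a (M.var t) (gWalk (a (M.var t)) (b (M.var t)) n)
          = gWalk (a (M.var t)) (b (M.var t)) (n - 1) := by
        rw [htw]; exact ha (M.var t) _
      have hfix : ¬ a (M.var t) (some p) = some p := by
        intro hc
        apply hw2 (n - 1) (by omega)
        rw [hn', hv]
        rw [← hback, hv, hc]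
      have haval : a (M.var t) (some p) = gWalk (a (M.var t)) (b (M.var t)) (n - 1) := by
        rw [← hv, hback]
      have hgs : gWalk (bigA M hT a) (bigB M b) (τR + m + 1)
          = bigA M hT a (gWalk (bigA M hT a) (bigB M b) (τR + m)) := by
        rw [hbw]; simp [gStep, hpar]
      rw [harith, hgs, ih', hidx, hv]
      rcases hq : gWalk (a (M.var t)) (b (M.var t)) (n - 1) with _ | q
      · rw [hq] at haval
        simp [iR, bigA, if_neg hfix, haval]
      · rw [hq] at haval
        have hne : ¬ q = p := by intro hc; subst hc; exact hfix haval
        simp [iR, bigA, if_neg hfix, haval, hne]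

theorem block_trans (ha : ∀ i, Function.Involutive (a i)) (hb : ∀ i, Function.Involutive (b i))
    (t : Fin T) (u : Fin W) (N τ : ℕ)
    (hτ2 : τ % 2 = 0)
    (hstart : gWalk (bigA M hT a) (bigB M b) τ = iF M hT t u none)
    (hw2 : ∀ m < N, gWalk (a (M.var t)) (b (M.var t)) (m + 1)
        ≠ gWalk (a (M.var t)) (b (M.var t)) m)
    (hw1 : ∀ n ≤ N, 0 < n → gWalk (a (M.var t)) (b (M.var t)) n ≠ none)
    (hhalt : gWalk (a (M.var t)) (b (M.var t)) (N + 1) = gWalk (a (M.var t)) (b (M.var t)) N)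
    (hN1 : 1 ≤ N)
    (bit : Bool) (hbit : N % 2 = (if bit then 1 else 0))
    (v : Fin W) (hnext : M.next t bit u = Sum.inl v)
    (htlt : (t : ℕ) + 1 < T) :
    gWalk (bigA M hT a) (bigB M b) (τ + (2 * N + 2)) = iF M hT (⟨(t : ℕ) + 1, htlt⟩ : Fin T) v none
    ∧ ∀ m, τ ≤ m → m < τ + (2 * N + 2) →
        gWalk (bigA M hT a) (bigB M b) (m + 1) ≠ gWalk (bigA M hT a) (bigB M b) m := by
  have hfwd := fwd M hT a b ha t u N τ hτ2 hstart hw2 hw1 hN1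
  obtain ⟨hp, hv⟩ : ∃ p, gWalk (a (M.var t)) (b (M.var t)) N = some p := by
    rcases ho : gWalk (a (M.var t)) (b (M.var t)) N with _ | p
    · exact absurd ho (hw1 N (le_refl N) (by omega))
    · exact ⟨p, rfl⟩
  -- the bridge step
  have hbr : gWalk (bigA M hT a) (bigB M b) (τ + N + 1) = some (t, v, Slot.sR hp) := by
    have hbw : gWalk (bigA M hT a) (bigB M b) (τ + N + 1)
        = gStep (bigA M hT a) (bigB M b) (τ + N) (gWalk (bigA M hT a) (bigB M b) (τ + N)) := rfl
    cases bit with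
    | false =>
      have hN0 : N % 2 = 0 := by simpa using hbit
      have hpar : (τ + N) % 2 = 0 := by omega
      have hfixa : a (M.var t) (some hp) = some hp := by
        have h1 : gWalk (a (M.var t)) (b (M.var t)) (N + 1)
            = a (M.var t) (gWalk (a (M.var t)) (b (M.var t)) N) := by
          show gStep _ _ N _ = _; simp [gStep, hN0]
        rw [hhalt, hv] at h1
        exact h1.symm
      rw [hbw, hfwd N (le_refl N), hv]
      have hred : gStep (bigA M hT a) (bigB M b) (τ + N) (iF M hT t u (some hp))
          = bigA M hT a (iF M hT t u (some hp)) := by simp [gStep, hpar]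
      rw [hred]
      simp [iF, bigA, hfixa, hnext]
    | true =>
      have hN0 : N % 2 = 1 := by simpa using hbit
      have hpar : (τ + N) % 2 = 1 := by omega
      have hfixb : b (M.var t) hp = hp := by
        have h1 : gWalk (a (M.var t)) (b (M.var t)) (N + 1)
            = Option.map (b (M.var t)) (gWalk (a (M.var t)) (b (M.var t)) N) := by
          show gStep _ _ N _ = _; simp [gStep, hN0]
        rw [hhalt, hv] at h1
        simpa using h1.symm
      rw [hbw, hfwd N (le_refl N), hv]
      have hred : gStep (bigA M hT a) (bigB M b) (τ + N) (iF M hT t u (some hp))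
          = Option.map (bigB M b) (iF M hT t u (some hp)) := by simp [gStep, hpar]
      rw [hred]
      simp [iF, bigB, hfixb, hnext]
  -- descent
  have hdesc := desc M hT a b ha hb t v N (τ + N + 1) (by omega) hw2 hw1
    (by rw [hv]; simpa [iR] using hbr)
  have hsj : gWalk (bigA M hT a) (bigB M b) (τ + 2 * N + 1) = some (t, v, Slot.sj) := by
    have := hdesc N (le_refl N)
    rw [show τ + N + 1 + N = τ + 2 * N + 1 by omega] at this
    rw [this]
    simp [iR, gWalk]
  -- wire step
  have hwire : gWalk (bigA M hT a) (bigB M b) (τ + 2 * N + 2)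
      = some ((⟨(t : ℕ) + 1, htlt⟩ : Fin T), v, Slot.sk) := by
    have hbw : gWalk (bigA M hT a) (bigB M b) (τ + 2 * N + 2)
        = gStep (bigA M hT a) (bigB M b) (τ + 2 * N + 1)
            (gWalk (bigA M hT a) (bigB M b) (τ + 2 * N + 1)) := rfl
    have hpar : (τ + 2 * N + 1) % 2 = 1 := by omega
    rw [hbw, hsj]
    simp [gStep, hpar, bigB, htlt]
  constructor
  · rw [show τ + (2 * N + 2) = τ + 2 * N + 2 by omega, hwire]
    have : ¬ ((⟨(t : ℕ) + 1, htlt⟩ : Fin T) = fin0 hT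
        ∧ v = M.start) := by
      rintro ⟨hc, -⟩
      have := congrArg Fin.val hc
      simp [fin0] at this
    simp [iF, this]
  · intro m hm1 hm2
    set d := m - τ with hd
    have hmd : m = τ + d := by omega
    rcases lt_trichotomy d N with hdlt | hdeq | hdgt
    · -- forward region
      have h1 := hfwd d (by omega)
      have h2 := hfwd (d + 1) (by omega)
      rw [hmd, show τ + d + 1 = τ + (d + 1) from rfl, h1, h2]
      intro hc
      exact hw2 d hdlt (iF_inj M hT t u _ _ hc)
    · -- bridge step
      subst hdeq
      rw [hmd, show τ + d + 1 = τ + d + 1 from rfl, hbr, hfwd d (le_refl d), hv]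
      simp [iF]
    · rcases lt_trichotomy d (2 * N + 1) with hd2 | hd2 | hd2
      · -- descent region
        set mm := d - (N + 1) with hmm
        have hmmN : mm < N := by omega
        have h1 := hdesc mm (by omega)
        have h2 := hdesc (mm + 1) (by omega)
        rw [hmd, show τ + d = τ + N + 1 + mm by omega] at *
        rw [show τ + N + 1 + mm + 1 = τ + N + 1 + (mm + 1) by omega, h1, h2]
        intro hc
        have := iR_inj t v _ _ hc
        apply hw2 (N - (mm + 1)) (by omega)
        rw [show N - (mm + 1) + 1 = N - mm by omega]
        exact this.symm
      · -- wire step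
        rw [hmd, hd2, show τ + (2 * N + 1) = τ + 2 * N + 1 by omega,
          show τ + 2 * N + 1 + 1 = τ + 2 * N + 2 by omega, hsj, hwire]
        intro hc
        simp only [Option.some.injEq, Prod.mk.injEq] at hc
        obtain ⟨hc1, -, -⟩ := hc
        have := congrArg Fin.val hc1
        simp at this
      · omega

theorem block_halt (ha : ∀ i, Function.Involutive (a i)) (hb : ∀ i, Function.Involutive (b i))
    (t : Fin T) (u : Fin W) (N τ : ℕ)
    (hτ2 : τ % 2 = 0)
    (hstart : gWalk (bigA M hT a) (bigB M b) τ = iF M hT t u none)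
    (hw2 : ∀ m < N, gWalk (a (M.var t)) (b (M.var t)) (m + 1)
        ≠ gWalk (a (M.var t)) (b (M.var t)) m)
    (hw1 : ∀ n ≤ N, 0 < n → gWalk (a (M.var t)) (b (M.var t)) n ≠ none)
    (hhalt : gWalk (a (M.var t)) (b (M.var t)) (N + 1) = gWalk (a (M.var t)) (b (M.var t)) N)
    (hN1 : 1 ≤ N)
    (bit : Bool) (hbit : N % 2 = (if bit then 1 else 0))
    (res : Bool) (hnext : M.next t bit u = Sum.inr res) :
    ∃ H, τ ≤ H ∧ (H % 2 = if res then 1 else 0) ∧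
      gWalk (bigA M hT a) (bigB M b) (H + 1) = gWalk (bigA M hT a) (bigB M b) H ∧
      ∀ m, τ ≤ m → m < H →
        gWalk (bigA M hT a) (bigB M b) (m + 1) ≠ gWalk (bigA M hT a) (bigB M b) m := by
  have hfwd := fwd M hT a b ha t u N τ hτ2 hstart hw2 hw1 hN1
  obtain ⟨hp, hv⟩ : ∃ p, gWalk (a (M.var t)) (b (M.var t)) N = some p := by
    rcases ho : gWalk (a (M.var t)) (b (M.var t)) N with _ | p
    · exact absurd ho (hw1 N (le_refl N) (by omega))
    · exact ⟨p, rfl⟩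
  have hdistF : ∀ m, τ ≤ m → m < τ + N →
      gWalk (bigA M hT a) (bigB M b) (m + 1) ≠ gWalk (bigA M hT a) (bigB M b) m := by
    intro m hm1 hm2
    have hd : m = τ + (m - τ) := by omega
    have hlt : m - τ < N := by omega
    rw [hd, show τ + (m - τ) + 1 = τ + (m - τ + 1) from rfl,
      hfwd (m - τ) (by omega), hfwd (m - τ + 1) (by omega)]
    intro hc
    exact hw2 (m - τ) hlt (iF_inj M hT t u _ _ hc)
  have hbwN : gWalk (bigA M hT a) (bigB M b) (τ + N) = some (t, u, Slot.sF hp) := by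
    rw [hfwd N (le_refl N), hv]; rfl
  cases bit with
  | false =>
    have hN0 : N % 2 = 0 := by simpa using hbit
    have hpar : (τ + N) % 2 = 0 := by omega
    have hfixa : a (M.var t) (some hp) = some hp := by
      have h1 : gWalk (a (M.var t)) (b (M.var t)) (N + 1)
          = a (M.var t) (gWalk (a (M.var t)) (b (M.var t)) N) := by
        show gStep _ _ N _ = _; simp [gStep, hN0]
      rw [hhalt, hv] at h1
      exact h1.symm
    have hstep1 : gWalk (bigA M hT a) (bigB M b) (τ + N + 1)
        = bigA M hT a (gWalk (bigA M hT a) (bigB M b) (τ + N)) := by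
      show gStep _ _ (τ + N) _ = _; simp [gStep, hpar]
    cases res with
    | false =>
      refine ⟨τ + N, by omega, by omega, ?_, hdistF⟩
      rw [hstep1, hbwN]
      simp [bigA, hfixa, hnext]
    | true =>
      have hval : gWalk (bigA M hT a) (bigB M b) (τ + N + 1) = some (t, u, Slot.sacc hp) := by
        rw [hstep1, hbwN]
        simp [bigA, hfixa, hnext]
      refine ⟨τ + N + 1, by omega, by simp; omega, ?_, ?_⟩
      · have hstep2 : gWalk (bigA M hT a) (bigB M b) (τ + N + 2)
            = Option.map (bigB M b) (gWalk (bigA M hT a) (bigB M b) (τ + N + 1)) := by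
          show gStep _ _ (τ + N + 1) _ = _
          have : (τ + N + 1) % 2 = 1 := by omega
          simp [gStep, this]
        rw [show τ + N + 1 + 1 = τ + N + 2 from rfl, hstep2, hval]
        simp [bigB]
      · intro m hm1 hm2
        rcases Nat.lt_or_ge m (τ + N) with hmN | hmN
        · exact hdistF m hm1 hmN
        · have : m = τ + N := by omega
          rw [this, hval, hbwN]
          simp
  | true =>
    have hN0 : N % 2 = 1 := by simpa using hbit
    have hpar : (τ + N) % 2 = 1 := by omega
    have hfixb : b (M.var t) hp = hp := by
      have h1 : gWalk (a (M.var t)) (b (M.var t)) (N + 1)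
          = Option.map (b (M.var t)) (gWalk (a (M.var t)) (b (M.var t)) N) := by
        show gStep _ _ N _ = _; simp [gStep, hN0]
      rw [hhalt, hv] at h1
      simpa using h1.symm
    have hstep1 : gWalk (bigA M hT a) (bigB M b) (τ + N + 1)
        = Option.map (bigB M b) (gWalk (bigA M hT a) (bigB M b) (τ + N)) := by
      show gStep _ _ (τ + N) _ = _; simp [gStep, hpar]
    cases res with
    | true =>
      refine ⟨τ + N, by omega, by omega, ?_, hdistF⟩
      rw [hstep1, hbwN]
      simp [bigB, hfixb, hnext]
    | false =>
      have hval : gWalk (bigA M hT a) (bigB M b) (τ + N + 1) = some (t, u, Slot.srej hp) := by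
        rw [hstep1, hbwN]
        simp [bigB, hfixb, hnext]
      refine ⟨τ + N + 1, by omega, by simp; omega, ?_, ?_⟩
      · have hstep2 : gWalk (bigA M hT a) (bigB M b) (τ + N + 2)
            = bigA M hT a (gWalk (bigA M hT a) (bigB M b) (τ + N + 1)) := by
          show gStep _ _ (τ + N + 1) _ = _
          have : (τ + N + 1) % 2 = 0 := by omega
          simp [gStep, this]
        rw [show τ + N + 1 + 1 = τ + N + 2 from rfl, hstep2, hval]
        simp [bigA]
      · intro m hm1 hm2
        rcases Nat.lt_or_ge m (τ + N) with hmN | hmN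
        · exact hdistF m hm1 hmN
        · have : m = τ + N := by omega
          rw [this, hval, hbwN]
          simp

theorem simulate (ha : ∀ i, Function.Involutive (a i)) (hb : ∀ i, Function.Involutive (b i))
    (N : Fin k → ℕ)
    (hN1 : ∀ i, 1 ≤ N i)
    (hw2 : ∀ i, ∀ m < N i, gWalk (a i) (b i) (m + 1) ≠ gWalk (a i) (b i) m)
    (hw1 : ∀ i, ∀ n ≤ N i, 0 < n → gWalk (a i) (b i) n ≠ none)
    (hhalt : ∀ i, gWalk (a i) (b i) (N i + 1) = gWalk (a i) (b i) (N i))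
    (bits : Fin k → Bool)
    (hbit : ∀ i, (N i) % 2 = if bits i then 1 else 0)
    (res : Bool)
    (hrun : M.run bits = Sum.inr res) :
    ∃ H, gWalk (bigA M hT a) (bigB M b) (H + 1) = gWalk (bigA M hT a) (bigB M b) H ∧
      (∀ m < H, gWalk (bigA M hT a) (bigB M b) (m + 1) ≠ gWalk (bigA M hT a) (bigB M b) m) ∧
      (H % 2 = 1 ↔ res = true) := by
  classical
  have hrunT : bpSt M bits T = Sum.inr res := by
    rw [← run_eq_bpSt M bits]; exact hrun
  -- existence of a sink time
  have hexS : ∃ t, ∃ r, bpSt M bits (t + 1) = Sum.inr r := by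
    by_contra hno
    push_neg at hno
    have hall : ∀ n, ∃ w, bpSt M bits n = Sum.inl w := by
      intro n
      induction n with
      | zero => exact ⟨M.start, rfl⟩
      | succ n ih =>
        rcases ho : bpSt M bits (n + 1) with w | r
        · exact ⟨w, rfl⟩
        · exact absurd ho (hno n r)
    obtain ⟨w, hw⟩ := hall T
    rw [hrunT] at hw
    cases hw
  set tstar := sInf {t | ∃ r, bpSt M bits (t + 1) = Sum.inr r} with htstar
  have hmem : ∃ r, bpSt M bits (tstar + 1) = Sum.inr r := Nat.sInf_mem hexS
  obtain ⟨res0, hres0⟩ := hmem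
  have hminS : ∀ s < tstar, ¬ ∃ r, bpSt M bits (s + 1) = Sum.inr r := by
    intro s hs
    exact Nat.notMem_of_lt_sInf hs
  have hinl : ∀ t ≤ tstar, ∃ w, bpSt M bits t = Sum.inl w := by
    intro t
    induction t with
    | zero => intro _; exact ⟨M.start, rfl⟩
    | succ t ih =>
      intro h
      rcases ho : bpSt M bits (t + 1) with w | r
      · exact ⟨w, rfl⟩
      · exact absurd ⟨r, ho⟩ (hminS t (by omega))
  have htstarT : tstar < T := by
    by_contra hc
    push_neg at hc
    obtain ⟨w, hw⟩ := hinl tstar (le_refl _)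
    have : bpSt M bits (tstar + 1) = bpSt M bits tstar := by
      rw [bpSt, dif_neg (by omega)]
    rw [this, hw] at hres0
    cases hres0
  have hstable : ∀ d, bpSt M bits (tstar + 1 + d) = Sum.inr res0 := by
    intro d
    induction d with
    | zero => exact hres0
    | succ d ih =>
      rw [show tstar + 1 + (d + 1) = (tstar + 1 + d) + 1 by omega, bpSt]
      by_cases h : tstar + 1 + d < T
      · rw [dif_pos h, ih]
      · rw [dif_neg h]; exact ih
  have hres_eq : res0 = res := by
    have := hstable (T - tstar - 1)
    rw [show tstar + 1 + (T - tstar - 1) = T by omega, hrunT] at this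
    exact (Sum.inr.inj this).symm
  rw [hres_eq] at hres0
  -- the time schedule
  set NN : ℕ → ℕ := fun t' => if h : t' < T then N (M.var ⟨t', h⟩) else 0 with hNN
  set σ : ℕ → ℕ := fun t => Nat.rec 0 (fun t' acc => acc + (2 * NN t' + 2)) t with hσdef
  have hσ : ∀ t', σ (t' + 1) = σ t' + (2 * NN t' + 2) := fun _ => rfl
  -- main invariant
  have main : ∀ t, t ≤ tstar → ∀ (h : t < T) w, bpSt M bits t = Sum.inl w →
      σ t % 2 = 0 ∧ gWalk (bigA M hT a) (bigB M b) (σ t) = iF M hT ⟨t, h⟩ w none ∧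
      ∀ m < σ t, gWalk (bigA M hT a) (bigB M b) (m + 1) ≠ gWalk (bigA M hT a) (bigB M b) m := by
    intro t
    induction t with
    | zero =>
      intro _ h w hw
      have hw' : w = M.start := by
        have h0 : (Sum.inl M.start : Fin W ⊕ Bool) = Sum.inl w := by rw [← hw]; rfl
        exact (Sum.inl.inj h0).symm
      subst hw'
      have h00 : σ 0 = 0 := rfl
      refine ⟨by rw [h00], ?_, by intro m hm; rw [h00] at hm; omega⟩
      rw [h00]
      have hf : (⟨0, h⟩ : Fin T) = fin0 hT := rfl
      simp [iF, hf, gWalk]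
    | succ t ih =>
      intro hle h w hw
      have htt : t < tstar := by omega
      have htT : t < T := by omega
      obtain ⟨wt, hwt⟩ := hinl t (by omega)
      obtain ⟨hpar, hpos, hdist⟩ := ih (by omega) htT wt hwt
      have htrans : M.next ⟨t, htT⟩ (bits (M.var ⟨t, htT⟩)) wt = Sum.inl w := by
        have : bpSt M bits (t + 1) = M.next ⟨t, htT⟩ (bits (M.var ⟨t, htT⟩)) wt := by
          rw [bpSt, dif_pos htT, hwt]
        rw [← this, hw]
      have hbt := block_trans M hT a b ha hb ⟨t, htT⟩ wt (N (M.var ⟨t, htT⟩)) (σ t)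
        hpar hpos (hw2 _) (hw1 _) (hhalt _) (hN1 _) (bits (M.var ⟨t, htT⟩)) (hbit _)
        w htrans (by simpa using h)
      obtain ⟨hpos', hdist'⟩ := hbt
      have hσ1 : σ (t + 1) = σ t + (2 * N (M.var ⟨t, htT⟩) + 2) := by
        rw [hσ t]
        congr 2
        simp [hNN, htT]
      refine ⟨by omega, ?_, ?_⟩
      · rw [hσ1]
        exact hpos'
      · intro m hm
        rcases Nat.lt_or_ge m (σ t) with hm1 | hm1
        · exact hdist m hm1
        · exact hdist' m hm1 (by omega)
  -- final block
  obtain ⟨ws, hws⟩ := hinl tstar (le_refl _)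
  obtain ⟨hpar, hpos, hdist⟩ := main tstar (le_refl _) htstarT ws hws
  have htrans : M.next ⟨tstar, htstarT⟩ (bits (M.var ⟨tstar, htstarT⟩)) ws = Sum.inr res := by
    have : bpSt M bits (tstar + 1) = M.next ⟨tstar, htstarT⟩ (bits (M.var ⟨tstar, htstarT⟩)) ws := by
      rw [bpSt, dif_pos htstarT, hws]
    rw [← this, hres0]
  obtain ⟨H, hHτ, hHpar, hHhalt, hHdist⟩ := block_halt M hT a b ha hb ⟨tstar, htstarT⟩ ws
    (N (M.var ⟨tstar, htstarT⟩)) (σ tstar) hpar hpos (hw2 _) (hw1 _) (hhalt _) (hN1 _)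
    (bits (M.var ⟨tstar, htstarT⟩)) (hbit _) res htrans
  refine ⟨H, hHhalt, ?_, ?_⟩
  · intro m hm
    rcases Nat.lt_or_ge m (σ tstar) with hm1 | hm1
    · exact hdist m hm1
    · exact hHdist m hm1 hm
  · cases res <;> simp_all

end Sim

end Big

section Transfer

theorem conj_walk {β : Type} {s : ℕ} (e : β ≃ Fin s) (A : Option β → Option β) (B : β → β) :
    ∀ n, ghWalk (fun v => Option.map e (A (Option.map e.symm v))) (fun p => e (B (e.symm p))) n
      = Option.map (⇑e) (gWalk A B n) := by
  have h1 : ∀ z : Option β, Option.map (⇑e.symm) (Option.map (⇑e) z) = z := by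
    intro z; cases z <;> simp
  intro n
  induction n with
  | zero => rfl
  | succ n ih =>
    show ghStep _ _ n _ = Option.map (⇑e) (gStep A B n (gWalk A B n))
    rw [ih]
    by_cases hp : n % 2 = 0
    · simp only [ghStep, gStep, if_pos hp]
      rw [h1]
    · simp only [ghStep, gStep, if_neg hp]
      cases gWalk A B n <;> simp

theorem conjA_inv {β : Type} {s : ℕ} (e : β ≃ Fin s) (A : Option β → Option β)
    (hA : Function.Involutive A) :
    Function.Involutive (fun v => Option.map (⇑e) (A (Option.map (⇑e.symm) v))) := by
  have h1 : ∀ z : Option β, Option.map (⇑e.symm) (Option.map (⇑e) z) = z := by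
    intro z; cases z <;> simp
  have h2 : ∀ z : Option (Fin s), Option.map (⇑e) (Option.map (⇑e.symm) z) = z := by
    intro z; cases z <;> simp
  intro v
  show Option.map (⇑e) (A (Option.map (⇑e.symm) (Option.map (⇑e) (A (Option.map (⇑e.symm) v))))) = v
  rw [h1, hA, h2]

theorem conjB_inv {β : Type} {s : ℕ} (e : β ≃ Fin s) (B : β → β)
    (hB : Function.Involutive B) :
    Function.Involutive (fun p => e (B (e.symm p))) := by
  intro p
  show e (B (e.symm (e (B (e.symm p))))) = p
  rw [Equiv.symm_apply_apply, hB, Equiv.apply_symm_apply]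

theorem inner_facts {X Y : Type} {c : ℕ} (P : GHProtocol X Y c) (f0 : X → Y → Bool)
    (hP : P.Computes f0) (x : X) (y : Y) :
    ∃ N, 1 ≤ N ∧
      (∀ m < N, gWalk (tA (P.A x)) (tB (P.B y)) (m + 1) ≠ gWalk (tA (P.A x)) (tB (P.B y)) m) ∧
      (∀ n ≤ N, 0 < n → gWalk (tA (P.A x)) (tB (P.B y)) n ≠ none) ∧
      (gWalk (tA (P.A x)) (tB (P.B y)) (N + 1) = gWalk (tA (P.A x)) (tB (P.B y)) N) ∧
      (N % 2 = if f0 x y then 1 else 0) := by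
  classical
  obtain ⟨hne, hpar⟩ := hP x y
  set L := ghLen (P.A x) (P.B y) with hL
  have hmem : ghStep (P.A x) (P.B y) L (ghWalk (P.A x) (P.B y) L) = ghWalk (P.A x) (P.B y) L :=
    Nat.sInf_mem hne
  have hhaltP : gWalk (P.A x) (P.B y) (L + 1) = gWalk (P.A x) (P.B y) L := by
    rw [gWalk_eq_ghWalk, gWalk_eq_ghWalk]
    exact hmem
  have hminP : ∀ m < L, gWalk (P.A x) (P.B y) (m + 1) ≠ gWalk (P.A x) (P.B y) m := by
    intro m hm
    have hnm : ghStep (P.A x) (P.B y) m (ghWalk (P.A x) (P.B y) m) ≠ ghWalk (P.A x) (P.B y) m :=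
      Nat.notMem_of_lt_sInf hm
    rw [gWalk_eq_ghWalk, gWalk_eq_ghWalk]
    exact hnm
  refine ⟨L + 2, by omega, ?_, ?_, ?_, ?_⟩
  · exact tidy_w2 (P.A x) (P.B y) L hminP
  · exact tidy_w1 (P.A x) (P.B y) L hminP
  · exact tidy_w3 (P.A x) (P.B y) L hminP hhaltP
  · rcases hfv : f0 x y with _ | _
    · have : ¬ L % 2 = 1 := by
        intro hc
        exact Bool.noConfusion (hfv ▸ (hpar.mp hc))
      simp only [if_neg (by simp : ¬ (false = true))]
      omega
    · have : L % 2 = 1 := hpar.mpr hfv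
      simp only [if_true]
      omega

theorem computes_mk {X Y : Type} {s : ℕ} (A : X → Option (Fin s) → Option (Fin s))
    (B : Y → Fin s → Fin s) (hA : ∀ x, Function.Involutive (A x))
    (hB : ∀ y, Function.Involutive (B y)) (f : X → Y → Bool)
    (h : ∀ x y, ∃ H, ghWalk (A x) (B y) (H + 1) = ghWalk (A x) (B y) H ∧
      (∀ m < H, ghWalk (A x) (B y) (m + 1) ≠ ghWalk (A x) (B y) m) ∧
      (H % 2 = 1 ↔ f x y = true)) :
    (GHProtocol.mk A B hA hB).Computes f := by
  intro x y
  obtain ⟨H, hH, hdist, hpar⟩ := h x y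
  have hmem : ∀ n, ghStep (A x) (B y) n (ghWalk (A x) (B y) n) = ghWalk (A x) (B y) n
      ↔ ghWalk (A x) (B y) (n + 1) = ghWalk (A x) (B y) n := fun n => Iff.rfl
  constructor
  · exact ⟨H, (hmem H).mpr hH⟩
  · have hlen : ghLen (A x) (B y) = H := by
      apply le_antisymm
      · exact Nat.sInf_le ((hmem H).mpr hH)
      · by_contra hc
        push_neg at hc
        have hmm := Nat.sInf_mem
          (⟨H, (hmem H).mpr hH⟩ : {n | ghStep (A x) (B y) n (ghWalk (A x) (B y) n)
            = ghWalk (A x) (B y) n}.Nonempty)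
        exact hdist _ hc ((hmem _).mp hmm)
    rw [hlen]
    exact hpar

end Transfer

end GHC

open GHC

/-- If `g` is computed by a (loose) permutation branching program of length `T`
and width `W`, and `f₁, …, f_k` have garden-hose complexity at most `c`, then
`GH(g(f₁, …, f_k)) = O(T · W · c)`. The inputs of the `fᵢ` may be distributed
arbitrarily between Alice and Bob. -/

theorem GH_compose_permutationBP :
    ∃ C : ℕ, 0 < C ∧
      ∀ (X Y : Type) (k T W c : ℕ) (M : PBP k T W) (g : (Fin k → Bool) → Bool),
        M.Computes g →
        ∀ f : Fin k → X → Y → Bool,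
          (∀ i, ∃ P : GHProtocol X Y c, P.Computes (f i)) →
          ∃ s ≤ C * (T * W * c + 1), ∃ P : GHProtocol X Y s,
            P.Computes (fun x y => g (fun i => f i x y)) := by
  classical
  refine ⟨22, by norm_num, ?_⟩
  intro X Y k T W c M g hMg f hf
  choose P hP using hf
  by_cases hc0 : c = 0
  · -- all inner functions are constantly false
    subst hc0
    have hff : ∀ i x y, f i x y = false := by
      intro i x y
      obtain ⟨hne, hpar⟩ := hP i x y
      have h0 : ghStep ((P i).A x) ((P i).B y) 0 (ghWalk ((P i).A x) ((P i).B y) 0)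
          = ghWalk ((P i).A x) ((P i).B y) 0 := by
        show ghStep _ _ 0 none = none
        simp only [ghStep, if_pos (by norm_num : (0 : ℕ) % 2 = 0)]
        rcases hA0 : (P i).A x none with _ | p
        · rfl
        · exact p.elim0
      have hlen : ghLen ((P i).A x) ((P i).B y) = 0 :=
        Nat.sInf_eq_zero.mpr (Or.inl h0)
      rcases hfv : f i x y with _ | _
      · rfl
      · exfalso
        have := hpar.mpr hfv
        rw [hlen] at this
        exact absurd this (by norm_num)
    rcases hgv : g (fun _ => false) with _ | _
    · -- constant false: zero-pipe protocol
      refine ⟨0, by omega, ⟨fun _ v => v, fun _ p => p,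
        fun _ v => rfl, fun _ p => rfl⟩, ?_⟩
      intro x y
      constructor
      · exact ⟨0, rfl⟩
      · have : ghLen (fun (v : Option (Fin 0)) => v) (fun p => p) = 0 :=
          Nat.sInf_eq_zero.mpr (Or.inl rfl)
        rw [this]
        have hg : g (fun i => f i x y) = false := by
          have : (fun i => f i x y) = (fun _ => false) := funext fun i => hff i x y
          rw [this, hgv]
        simp [hg]
    · -- constant true: one-pipe protocol
      have hAinv : ∀ x : X, Function.Involutive
          (fun v : Option (Fin 1) => match v with | none => some 0 | some _ => none) := by
        intro x v
        rcases v with _ | p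
        · rfl
        · show some 0 = some p
          congr
          exact Subsingleton.elim _ _
      refine ⟨1, by omega, ⟨fun _ v => match v with | none => some 0 | some _ => none,
        fun _ p => p, hAinv, fun _ p => rfl⟩, ?_⟩
      intro x y
      have hw1 : ghWalk (fun v : Option (Fin 1) => match v with | none => some 0 | some _ => none)
          (fun p => p) 1 = some 0 := rfl
      have h1mem : ghStep (fun v : Option (Fin 1) => match v with | none => some 0 | some _ => none)
          (fun p => p) 1 (ghWalk (fun v : Option (Fin 1) =>
            match v with | none => some 0 | some _ => none) (fun p => p) 1)
          = ghWalk (fun v : Option (Fin 1) => match v with | none => some 0 | some _ => none)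
            (fun p => p) 1 := by
        rw [hw1]
        simp [ghStep]
      have h0nm : ¬ (ghStep (fun v : Option (Fin 1) => match v with | none => some 0 | some _ => none)
          (fun p => p) 0 (ghWalk (fun v : Option (Fin 1) =>
            match v with | none => some 0 | some _ => none) (fun p => p) 0)
          = ghWalk (fun v : Option (Fin 1) => match v with | none => some 0 | some _ => none)
            (fun p => p) 0) := by
        show ¬ (ghStep _ _ 0 none = none)
        simp [ghStep]
      constructor
      · exact ⟨1, h1mem⟩
      · have hlen : ghLen (fun v : Option (Fin 1) => match v with | none => some 0 | some _ => none)
            (fun p => p) = 1 := by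
          apply le_antisymm
          · exact Nat.sInf_le h1mem
          · by_contra hc
            push_neg at hc
            have h0 : ghLen (fun v : Option (Fin 1) =>
                match v with | none => some 0 | some _ => none) (fun p => p) = 0 := by omega
            have hmm := Nat.sInf_mem
              (⟨1, h1mem⟩ : {n | ghStep (fun v : Option (Fin 1) =>
                match v with | none => some 0 | some _ => none) (fun p => p) n
                (ghWalk (fun v : Option (Fin 1) =>
                  match v with | none => some 0 | some _ => none) (fun p => p) n)
                = ghWalk (fun v : Option (Fin 1) =>
                  match v with | none => some 0 | some _ => none) (fun p => p) n}.Nonempty)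
            have hmm' : ghLen (fun v : Option (Fin 1) =>
                match v with | none => some 0 | some _ => none) (fun p => p)
                ∈ {n | ghStep (fun v : Option (Fin 1) =>
                match v with | none => some 0 | some _ => none) (fun p => p) n
                (ghWalk (fun v : Option (Fin 1) =>
                  match v with | none => some 0 | some _ => none) (fun p => p) n)
                = ghWalk (fun v : Option (Fin 1) =>
                  match v with | none => some 0 | some _ => none) (fun p => p) n} := hmm
            rw [h0] at hmm'
            exact h0nm hmm'
        rw [hlen]
        have hg : g (fun i => f i x y) = true := by
          have : (fun i => f i x y) = (fun _ => false) := funext fun i => hff i x y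
          rw [this, hgv]
        simp [hg]
  -- now c ≥ 1
  by_cases hT0 : T = 0
  · subst hT0
    exfalso
    have h := hMg (fun _ => false)
    unfold PBP.run at h
    rw [Fin.foldl_zero] at h
    cases h
  have hT : 0 < T := Nat.pos_of_ne_zero hT0
  have hc1 : 1 ≤ c := Nat.pos_of_ne_zero hc0
  have hcard : Fintype.card (BPos T W c) = T * W * (8 * c + 14) := by
    simp [BPos, card_slot]
    ring
  set s := T * W * (8 * c + 14) with hs
  have hbound : s ≤ 22 * (T * W * c + 1) := by
    have h8 : 8 * c + 14 ≤ 22 * c := by omega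
    calc s = T * W * (8 * c + 14) := rfl
    _ ≤ T * W * (22 * c) := Nat.mul_le_mul_left _ h8
    _ = 22 * (T * W * c) := by ring
    _ ≤ 22 * (T * W * c + 1) := by omega
  set e : BPos T W c ≃ Fin s := Fintype.equivFinOfCardEq hcard with he
  refine ⟨s, hbound,
    ⟨fun x v => Option.map (⇑e) (bigA M hT (fun i => tA ((P i).A x)) (Option.map (⇑e.symm) v)),
     fun y p => e (bigB M (fun i => tB ((P i).B y)) (e.symm p)),
     fun x => conjA_inv e _ (bigA_inv M hT _ (fun i => tA_inv _ ((P i).hA x))),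
     fun y => conjB_inv e _ (bigB_inv M _ (fun i => tB_inv _ ((P i).hB y)))⟩,
    computes_mk _ _ _ _ _ ?_⟩
  intro x y
  -- inner protocol facts
  choose N hN1 hw2 hw1 hhalt hbit using fun i => inner_facts (P i) (f i) (hP i) x y
  set bits : Fin k → Bool := fun i => f i x y with hbits
  obtain ⟨H, hHhalt, hHdist, hHpar⟩ := simulate M hT
    (fun i => tA ((P i).A x)) (fun i => tB ((P i).B y))
    (fun i => tA_inv _ ((P i).hA x)) (fun i => tB_inv _ ((P i).hB y))
    N hN1 hw2 hw1 hhalt bits hbit (g bits) (hMg bits)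
  have hwalkeq : ∀ n,
      ghWalk (fun v => Option.map (⇑e) (bigA M hT (fun i => tA ((P i).A x)) (Option.map (⇑e.symm) v)))
        (fun p => e (bigB M (fun i => tB ((P i).B y)) (e.symm p))) n
      = Option.map (⇑e) (gWalk (bigA M hT (fun i => tA ((P i).A x)))
          (bigB M (fun i => tB ((P i).B y))) n) :=
    conj_walk e _ _
  have hinj : Function.Injective (Option.map (⇑e)) := Option.map_injective e.injective
  refine ⟨H, ?_, ?_, ?_⟩
  · rw [hwalkeq, hwalkeq, hHhalt]
  · intro m hm
    rw [hwalkeq, hwalkeq]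
    exact fun hc => hHdist m hm (hinj hc)
  · exact hHpar
end

section
/- For every Boolean function f and every k ≥ 1, GH_k(f) ≥ 2^{D_k(f)/k} / 2, equivalently D_k(f) ≤ k·(⌈log₂ GH_k(f)⌉ + O(1)), where GH_k(f) is the minimum size of a garden-hose protocol for f in which at most k pipes carry water on any input, and D_k(f) is the deterministic communication complexity of f with at most k messages, Alice sending first. -/
/-- A deterministic communication protocol tree with one-bit messages: each
internal node belongs to Alice (`anode`) or Bob (`bnode`) and branches on one
communicated bit. -/
inductive CTree (X Y : Type) where
  | leaf : Bool → CTree X Y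
  | anode : (X → Bool) → (Bool → CTree X Y) → CTree X Y
  | bnode : (Y → Bool) → (Bool → CTree X Y) → CTree X Y

/-- The output of the protocol on input `(x, y)`. -/
def CTree.eval {X Y : Type} : CTree X Y → X → Y → Bool
  | .leaf b, _, _ => b
  | .anode g c, x, y => (c (g x)).eval x y
  | .bnode g c, x, y => (c (g y)).eval x y

/-- The depth of the tree, i.e. the worst-case number of bits communicated. -/
def CTree.depth {X Y : Type} : CTree X Y → ℕ
  | .leaf _ => 0
  | .anode _ c => 1 + max (c false).depth (c true).depth
  | .bnode _ c => 1 + max (c false).depth (c true).depth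

/-- The worst-case number of messages (maximal blocks of bits sent by one
player) along a path of the tree; the parameter records the previous speaker
(`some true` = Alice, `some false` = Bob, `none` at the root). -/
def CTree.rounds {X Y : Type} : Option Bool → CTree X Y → ℕ
  | _, .leaf _ => 0
  | p, .anode _ c =>
      (if p = some true then 0 else 1) +
        max ((c false).rounds (some true)) ((c true).rounds (some true))
  | p, .bnode _ c =>
      (if p = some false then 0 else 1) +
        max ((c false).rounds (some false)) ((c true).rounds (some false))

/-- Alice speaks first (if anybody speaks). -/
def CTree.aliceFirst {X Y : Type} : CTree X Y → Prop
  | .bnode _ _ => False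
  | _ => True

namespace GHSim

/-- Alice sends `m+1` bits encoding `g x % 2^(m+1)`, then play continues. -/
def sendA {X Y : Type} : ℕ → (X → ℕ) → (ℕ → CTree X Y) → CTree X Y
  | 0, g, cont => .anode (fun x => decide (g x % 2 = 1)) (fun b => cont (cond b 1 0))
  | m + 1, g, cont => .anode (fun x => decide (g x % 2 = 1))
      (fun b => sendA m (fun x => g x / 2) (fun r => cont (2 * r + cond b 1 0)))

/-- Bob sends `m+1` bits encoding `g y % 2^(m+1)`, then play continues. -/
def sendB {X Y : Type} : ℕ → (Y → ℕ) → (ℕ → CTree X Y) → CTree X Y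
  | 0, g, cont => .bnode (fun y => decide (g y % 2 = 1)) (fun b => cont (cond b 1 0))
  | m + 1, g, cont => .bnode (fun y => decide (g y % 2 = 1))
      (fun b => sendB m (fun y => g y / 2) (fun r => cont (2 * r + cond b 1 0)))

lemma cond_mod2 (a : ℕ) : (cond (decide (a % 2 = 1)) 1 0 : ℕ) = a % 2 := by
  rcases Nat.mod_two_eq_zero_or_one a with h | h <;> simp [h]

lemma mod_pow_succ' (g m : ℕ) : 2 * (g / 2 % 2 ^ m) + g % 2 = g % 2 ^ (m + 1) := by
  rw [pow_succ', Nat.mod_mul]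
  omega

lemma sendA_eval {X Y : Type} (m : ℕ) (g : X → ℕ) (cont : ℕ → CTree X Y) (x : X) (y : Y) :
    (sendA m g cont).eval x y = (cont (g x % 2 ^ (m + 1))).eval x y := by
  induction m generalizing g cont with
  | zero => simp [sendA, CTree.eval, cond_mod2]
  | succ m ih =>
      simp only [sendA, CTree.eval, ih, cond_mod2, mod_pow_succ']

lemma sendB_eval {X Y : Type} (m : ℕ) (g : Y → ℕ) (cont : ℕ → CTree X Y) (x : X) (y : Y) :
    (sendB m g cont).eval x y = (cont (g y % 2 ^ (m + 1))).eval x y := by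
  induction m generalizing g cont with
  | zero => simp [sendB, CTree.eval, cond_mod2]
  | succ m ih =>
      simp only [sendB, CTree.eval, ih, cond_mod2, mod_pow_succ']

lemma sendA_depth {X Y : Type} (m : ℕ) (g : X → ℕ) (cont : ℕ → CTree X Y) (d : ℕ)
    (h : ∀ r, (cont r).depth ≤ d) : (sendA m g cont).depth ≤ (m + 1) + d := by
  induction m generalizing g cont with
  | zero =>
      simp only [sendA, CTree.depth]
      have h1 := h (cond false 1 0); have h2 := h (cond true 1 0)
      omega
  | succ m ih =>
      simp only [sendA, CTree.depth]
      have h1 := ih (fun x => g x / 2) (fun r => cont (2 * r + cond false 1 0))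
        (fun r => h _)
      have h2 := ih (fun x => g x / 2) (fun r => cont (2 * r + cond true 1 0))
        (fun r => h _)
      omega

lemma sendB_depth {X Y : Type} (m : ℕ) (g : Y → ℕ) (cont : ℕ → CTree X Y) (d : ℕ)
    (h : ∀ r, (cont r).depth ≤ d) : (sendB m g cont).depth ≤ (m + 1) + d := by
  induction m generalizing g cont with
  | zero =>
      simp only [sendB, CTree.depth]
      have h1 := h (cond false 1 0); have h2 := h (cond true 1 0)
      omega
  | succ m ih =>
      simp only [sendB, CTree.depth]
      have h1 := ih (fun y => g y / 2) (fun r => cont (2 * r + cond false 1 0))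
        (fun r => h _)
      have h2 := ih (fun y => g y / 2) (fun r => cont (2 * r + cond true 1 0))
        (fun r => h _)
      omega

lemma sendA_rounds_true {X Y : Type} (m : ℕ) (g : X → ℕ) (cont : ℕ → CTree X Y) (d : ℕ)
    (h : ∀ r, (cont r).rounds (some true) ≤ d) :
    (sendA m g cont).rounds (some true) ≤ d := by
  induction m generalizing g cont with
  | zero =>
      simp only [sendA, CTree.rounds, reduceIte]
      have h1 := h (cond false 1 0); have h2 := h (cond true 1 0)
      omega
  | succ m ih =>
      simp only [sendA, CTree.rounds, reduceIte]
      have h1 := ih (fun x => g x / 2) (fun r => cont (2 * r + cond false 1 0))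
        (fun r => h _)
      have h2 := ih (fun x => g x / 2) (fun r => cont (2 * r + cond true 1 0))
        (fun r => h _)
      omega

lemma sendB_rounds_false {X Y : Type} (m : ℕ) (g : Y → ℕ) (cont : ℕ → CTree X Y) (d : ℕ)
    (h : ∀ r, (cont r).rounds (some false) ≤ d) :
    (sendB m g cont).rounds (some false) ≤ d := by
  induction m generalizing g cont with
  | zero =>
      simp only [sendB, CTree.rounds, reduceIte]
      have h1 := h (cond false 1 0); have h2 := h (cond true 1 0)
      omega
  | succ m ih =>
      simp only [sendB, CTree.rounds, reduceIte]
      have h1 := ih (fun y => g y / 2) (fun r => cont (2 * r + cond false 1 0))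
        (fun r => h _)
      have h2 := ih (fun y => g y / 2) (fun r => cont (2 * r + cond true 1 0))
        (fun r => h _)
      omega

lemma sendA_rounds {X Y : Type} (m : ℕ) (g : X → ℕ) (cont : ℕ → CTree X Y) (d : ℕ)
    (h : ∀ r, (cont r).rounds (some true) ≤ d) (p : Option Bool) :
    (sendA m g cont).rounds p ≤ 1 + d := by
  cases m with
  | zero =>
      simp only [sendA, CTree.rounds]
      have h1 := h (cond false 1 0); have h2 := h (cond true 1 0)
      split <;> omega
  | succ m =>
      simp only [sendA, CTree.rounds]
      have h1 := sendA_rounds_true m (fun x => g x / 2)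
        (fun r => cont (2 * r + cond false 1 0)) d (fun r => h _)
      have h2 := sendA_rounds_true m (fun x => g x / 2)
        (fun r => cont (2 * r + cond true 1 0)) d (fun r => h _)
      split <;> omega

lemma sendB_rounds {X Y : Type} (m : ℕ) (g : Y → ℕ) (cont : ℕ → CTree X Y) (d : ℕ)
    (h : ∀ r, (cont r).rounds (some false) ≤ d) (p : Option Bool) :
    (sendB m g cont).rounds p ≤ 1 + d := by
  cases m with
  | zero =>
      simp only [sendB, CTree.rounds]
      have h1 := h (cond false 1 0); have h2 := h (cond true 1 0)
      split <;> omega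
  | succ m =>
      simp only [sendB, CTree.rounds]
      have h1 := sendB_rounds_false m (fun y => g y / 2)
        (fun r => cont (2 * r + cond false 1 0)) d (fun r => h _)
      have h2 := sendB_rounds_false m (fun y => g y / 2)
        (fun r => cont (2 * r + cond true 1 0)) d (fun r => h _)
      split <;> omega

/-- Encoding of a pipe-end name as a number `< s + 1`. -/
def enc {s : ℕ} : Option (Fin s) → ℕ
  | none => 0
  | some i => i + 1

/-- Decoding of a pipe-end name. -/
def dec {s : ℕ} (e : ℕ) : Option (Fin s) :=
  if h : e - 1 < s ∧ e ≠ 0 then some ⟨e - 1, h.1⟩ else none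

lemma dec_enc {s : ℕ} (v : Option (Fin s)) : dec (enc v) = v := by
  cases v with
  | none => simp [enc, dec]
  | some i => simp [enc, dec, i.isLt]

lemma enc_le {s : ℕ} (v : Option (Fin s)) : enc v ≤ s := by
  cases v with
  | none => simp [enc]
  | some i => have := i.isLt; simp only [enc]; omega

/-- The message: `0` means "the water stopped", `e+1` means "the water goes to
pipe end (encoded by) `e`". -/
def msg {s : ℕ} (v w : Option (Fin s)) : ℕ := if v = w then 0 else enc v + 1

lemma msg_lt {s : ℕ} (v w : Option (Fin s)) :
    msg v w < 2 ^ (Nat.clog 2 (s + 1) + 2) := by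
  have h1 : s + 1 ≤ 2 ^ Nat.clog 2 (s + 1) := Nat.le_pow_clog (by norm_num) _
  have h2 : (2 : ℕ) ^ (Nat.clog 2 (s + 1) + 2) = 4 * 2 ^ Nat.clog 2 (s + 1) := by
    ring
  have h3 : enc v ≤ s := enc_le v
  have : msg v w ≤ s + 2 := by unfold msg; split <;> omega
  omega

/-- The simulating tree: `j` is the remaining fuel, `n` the current step number
and `w` the current (commonly known) position of the water. -/
def sim {X Y : Type} (s : ℕ) (PA : X → Option (Fin s) → Option (Fin s))
    (PB : Y → Fin s → Fin s) : ℕ → ℕ → Option (Fin s) → CTree X Y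
  | 0, n, _ => .leaf (decide (n % 2 = 1))
  | j + 1, n, w =>
      if n % 2 = 0 then
        sendA (Nat.clog 2 (s + 1) + 1) (fun x => msg (PA x w) w)
          (fun e => if e = 0 then .leaf (decide (n % 2 = 1))
            else sim s PA PB j (n + 1) (dec (e - 1)))
      else
        sendB (Nat.clog 2 (s + 1) + 1) (fun y => msg (Option.map (PB y) w) w)
          (fun e => if e = 0 then .leaf (decide (n % 2 = 1))
            else sim s PA PB j (n + 1) (dec (e - 1)))

lemma sim_rounds {X Y : Type} (s : ℕ) (PA : X → Option (Fin s) → Option (Fin s))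
    (PB : Y → Fin s → Fin s) (j : ℕ) :
    ∀ n w p, (sim s PA PB j n w).rounds p ≤ j := by
  induction j with
  | zero => intro n w p; simp [sim, CTree.rounds]
  | succ j ih =>
      intro n w p
      rw [sim]
      split
      · refine le_trans (sendA_rounds _ _ _ j (fun r => ?_) p) (by omega)
        split
        · simp [CTree.rounds]
        · exact ih _ _ _
      · refine le_trans (sendB_rounds _ _ _ j (fun r => ?_) p) (by omega)
        split
        · simp [CTree.rounds]
        · exact ih _ _ _

lemma sim_depth {X Y : Type} (s : ℕ) (PA : X → Option (Fin s) → Option (Fin s))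
    (PB : Y → Fin s → Fin s) (j : ℕ) :
    ∀ n w, (sim s PA PB j n w).depth ≤ j * (Nat.clog 2 (s + 1) + 2) := by
  induction j with
  | zero => intro n w; simp [sim, CTree.depth]
  | succ j ih =>
      intro n w
      rw [sim]
      have key : ∀ T : CTree X Y,
          T.depth ≤ (Nat.clog 2 (s + 1) + 1 + 1) + j * (Nat.clog 2 (s + 1) + 2) →
          T.depth ≤ (j + 1) * (Nat.clog 2 (s + 1) + 2) := by
        intro T hT
        refine hT.trans (le_of_eq ?_)
        ring
      split
      · refine key _ (sendA_depth _ _ _ _ (fun r => ?_))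
        split
        · simp [CTree.depth]
        · exact ih _ _
      · refine key _ (sendB_depth _ _ _ _ (fun r => ?_))
        split
        · simp [CTree.depth]
        · exact ih _ _

lemma sim_aliceFirst {X Y : Type} (s : ℕ) (PA : X → Option (Fin s) → Option (Fin s))
    (PB : Y → Fin s → Fin s) (j : ℕ) (w : Option (Fin s)) :
    (sim s PA PB (j + 1) 0 w).aliceFirst := by
  rw [sim]
  simp only [Nat.zero_mod, if_pos rfl]
  rw [sendA]
  trivial

lemma sim_eval {X Y : Type} {s : ℕ} (PA : X → Option (Fin s) → Option (Fin s))
    (PB : Y → Fin s → Fin s) (x : X) (y : Y)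
    (hne : {n | ghStep (PA x) (PB y) n (ghWalk (PA x) (PB y) n)
        = ghWalk (PA x) (PB y) n}.Nonempty) :
    ∀ j n w, ghWalk (PA x) (PB y) n = w → n ≤ ghLen (PA x) (PB y) →
      ghLen (PA x) (PB y) ≤ n + j →
      (sim s PA PB j n w).eval x y = decide (ghLen (PA x) (PB y) % 2 = 1) := by
  set A := PA x with hA
  set B := PB y with hB
  set L := ghLen A B with hL
  have hmem : ghStep A B L (ghWalk A B L) = ghWalk A B L := Nat.sInf_mem hne
  intro j
  induction j with
  | zero =>
      intro n w hw hn1 hn2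
      have : L = n := le_antisymm (by omega) hn1
      simp [sim, CTree.eval, this]
  | succ j ih =>
      intro n w hw hn1 hn2
      rw [sim]
      by_cases hn : n % 2 = 0
      · rw [if_pos hn, sendA_eval]
        have hlt : msg (A w) w < 2 ^ (Nat.clog 2 (s + 1) + 1 + 1) := msg_lt _ _
        rw [Nat.mod_eq_of_lt hlt]
        by_cases hww : A w = w
        · have hstop : ghStep A B n (ghWalk A B n) = ghWalk A B n := by
            rw [hw, ghStep, if_pos hn, hww]
          have hLn : L = n := le_antisymm (Nat.sInf_le hstop) hn1
          simp [msg, hww, CTree.eval, hLn]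
        · have hmsg : msg (A w) w = enc (A w) + 1 := by simp [msg, hww]
          rw [hmsg]
          simp only [Nat.add_sub_cancel, Nat.succ_ne_zero, if_neg, dec_enc]
          have hstep : ghStep A B n (ghWalk A B n) = A w := by
            rw [hw, ghStep, if_pos hn]
          have hnotstop : ¬ (ghStep A B n (ghWalk A B n) = ghWalk A B n) := by
            rw [hstep, hw]; exact hww
          have hLn : L ≠ n := fun h => hnotstop (h ▸ hmem)
          refine ih (n + 1) (A w) ?_ (by omega) (by omega)
          show ghStep A B n (ghWalk A B n) = A w
          exact hstep
      · rw [if_neg hn, sendB_eval]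
        have hlt : msg (Option.map B w) w < 2 ^ (Nat.clog 2 (s + 1) + 1 + 1) := msg_lt _ _
        rw [Nat.mod_eq_of_lt hlt]
        by_cases hww : Option.map B w = w
        · have hstop : ghStep A B n (ghWalk A B n) = ghWalk A B n := by
            rw [hw, ghStep, if_neg hn, hww]
          have hLn : L = n := le_antisymm (Nat.sInf_le hstop) hn1
          simp [msg, hww, CTree.eval, hLn]
        · have hmsg : msg (Option.map B w) w = enc (Option.map B w) + 1 := by
            simp [msg, hww]
          rw [hmsg]
          simp only [Nat.add_sub_cancel, Nat.succ_ne_zero, if_neg, dec_enc]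
          have hstep : ghStep A B n (ghWalk A B n) = Option.map B w := by
            rw [hw, ghStep, if_neg hn]
          have hnotstop : ¬ (ghStep A B n (ghWalk A B n) = ghWalk A B n) := by
            rw [hstep, hw]; exact hww
          have hLn : L ≠ n := fun h => hnotstop (h ▸ hmem)
          refine ih (n + 1) (Option.map B w) ?_ (by omega) (by omega)
          show ghStep A B n (ghWalk A B n) = Option.map B w
          exact hstep

end GHSim

/-- Time-bounded garden-hose protocols versus round-bounded communication:
if `f` has a garden-hose protocol of size `s` in which at most `k` pipes carry
water on any input (i.e. the path from the tap has length at most `k`), then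
`f` has a deterministic communication protocol with at most `k` messages,
Alice speaking first, of total communication `k · (⌈log₂ s⌉ + O(1))`.
Equivalently, `D_k(f) ≤ k · (⌈log₂ GH_k(f)⌉ + O(1))`, i.e.
`GH_k(f) ≥ 2^{D_k(f)/k} / 2^{O(1)}`. -/
theorem Dk_le_time_bounded_GH :
    ∃ C : ℕ, 0 < C ∧
      ∀ (X Y : Type) (f : X → Y → Bool) (k s : ℕ), 1 ≤ k →
        ∀ P : GHProtocol X Y s, P.Computes f →
          (∀ x y, ghLen (P.A x) (P.B y) ≤ k) →
          ∃ T : CTree X Y, (∀ x y, T.eval x y = f x y) ∧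
            T.aliceFirst ∧ T.rounds none ≤ k ∧
            T.depth ≤ k * (Nat.clog 2 (s + 1) + C) := by
  refine ⟨2, by norm_num, ?_⟩
  intro X Y f k s hk P hC hT
  refine ⟨GHSim.sim s P.A P.B k 0 none, ?_, ?_, ?_, ?_⟩
  · intro x y
    obtain ⟨hne, hpar⟩ := hC x y
    have heval := GHSim.sim_eval P.A P.B x y hne k 0 none rfl (Nat.zero_le _)
      (by simpa using hT x y)
    rw [heval]
    cases hfx : f x y
    · simp only [decide_eq_false_iff_not]
      simp [hfx] at hpar
      omega
    · simp only [decide_eq_true_eq]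
      simp [hfx] at hpar
      exact hpar
  · obtain ⟨j, rfl⟩ : ∃ j, k = j + 1 := ⟨k - 1, by omega⟩
    exact GHSim.sim_aliceFirst s P.A P.B j none
  · exact GHSim.sim_rounds s P.A P.B k 0 none none
  · exact GHSim.sim_depth s P.A P.B k 0 none
end

section
/- Any time-√n garden-hose protocol for the Equality function EQ_n(x,y) = [x = y] on n-bit inputs has size 2^{Ω(√n)}, and there is a time-O(√n) garden-hose protocol for EQ_n of size O(2^{√n} · √n). -/
/-- The Equality function on `n`-bit inputs. -/
def EQ (n : ℕ) (x y : Fin n → Bool) : Bool := decide (x = y)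


lemma ghStep_even {s : ℕ} {A : Option (Fin s) → Option (Fin s)} {B : Fin s → Fin s} {n : ℕ}
    (h : n % 2 = 0) (v : Option (Fin s)) : ghStep A B n v = A v := if_pos h

lemma ghStep_odd {s : ℕ} {A : Option (Fin s) → Option (Fin s)} {B : Fin s → Fin s} {n : ℕ}
    (h : n % 2 = 1) (v : Option (Fin s)) : ghStep A B n v = Option.map B v :=
  if_neg (by omega)

lemma ghWalk_succ {s : ℕ} (A : Option (Fin s) → Option (Fin s)) (B : Fin s → Fin s) (n : ℕ) :
    ghWalk A B (n + 1) = ghStep A B n (ghWalk A B n) := rfl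

lemma gh_arith (T s : ℕ) (h : 2 ^ (T * T) ≤ (T + 1) * (s + 1) ^ (T + 1)) :
    2 ^ (T / 4) ≤ 4 * (s + 1) := by
  rcases Nat.lt_or_ge T 2 with hT | hT
  · have : T / 4 = 0 := by omega
    rw [this]; simp; omega
  · -- main case
    have h1 : T + 1 ≤ 2 ^ T := Nat.lt_two_pow_self (n := T)
    have h2 : 2 ^ (T * T) ≤ 2 ^ T * (s + 1) ^ (T + 1) :=
      h.trans (Nat.mul_le_mul_right _ h1)
    have h3 : 2 ^ T * 2 ^ (T * T - T) = 2 ^ (T * T) := by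
      rw [← pow_add]; congr 1; have : T ≤ T * T := Nat.le_mul_of_pos_left T (by omega)
      omega
    have h4 : 2 ^ (T * T - T) ≤ (s + 1) ^ (T + 1) := by
      have := h3 ▸ h2
      exact Nat.le_of_mul_le_mul_left this (by positivity)
    have h5 : (T - 2) * (T + 1) ≤ T * T - T := by
      obtain ⟨u, rfl⟩ : ∃ u, T = u + 2 := ⟨T - 2, by omega⟩
      have e1 : (u + 2) * (u + 2) - (u + 2) = u * u + 3 * u + 2 := by
        have : (u + 2) * (u + 2) = (u + 2) + (u * u + 3 * u + 2) := by ring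
        omega
      simp only [Nat.add_sub_cancel, e1]
      nlinarith
    have h6 : (2 ^ (T - 2)) ^ (T + 1) ≤ (s + 1) ^ (T + 1) := by
      rw [← pow_mul]
      exact (Nat.pow_le_pow_right (by norm_num) h5).trans h4
    have h7 : 2 ^ (T - 2) ≤ s + 1 := (Nat.pow_le_pow_iff_left (by omega)).mp h6
    have h8 : 2 ^ (T / 4) ≤ 2 ^ T := Nat.pow_le_pow_right (by norm_num) (by omega)
    have h9 : (2 : ℕ) ^ T = 4 * 2 ^ (T - 2) := by
      obtain ⟨u, rfl⟩ : ∃ u, T = u + 2 := ⟨T - 2, by omega⟩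
      simp only [Nat.add_sub_cancel, pow_succ]
      ring
    calc 2 ^ (T / 4) ≤ 2 ^ T := h8
      _ = 4 * 2 ^ (T - 2) := h9
      _ ≤ 4 * (s + 1) := by omega

lemma gh_lower (n s : ℕ) (P : GHProtocol (Fin n → Bool) (Fin n → Bool) s)
    (hC : P.Computes (EQ n))
    (htime : ∀ x y, ghLen (P.A x) (P.B y) ≤ Nat.sqrt n) :
    2 ^ (Nat.sqrt n / 4) ≤ 4 * (s + 1) := by
  set T := Nat.sqrt n with hT
  apply gh_arith T s
  have hTT : T * T ≤ n := by rw [hT, ← pow_two]; exact Nat.sqrt_le' n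
  have hinj : Function.Injective (fun x : Fin n → Bool =>
      ((⟨ghLen (P.A x) (P.B x), Nat.lt_succ_of_le (htime x x)⟩ : Fin (T+1)),
        fun i : Fin (T+1) => ghWalk (P.A x) (P.B x) i.val)) := by
    intro x x' h
    simp only [Prod.mk.injEq, Fin.mk.injEq] at h
    obtain ⟨hL, hwfun⟩ := h
    set L := ghLen (P.A x) (P.B x) with hLdef
    have hLle : L ≤ T := htime x x
    have hw : ∀ m, m ≤ L → ghWalk (P.A x) (P.B x) m = ghWalk (P.A x') (P.B x') m := by
      intro m hm
      have := congrFun hwfun ⟨m, by omega⟩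
      simpa using this
    -- the mixed walk agrees
    have hwalk : ∀ m, m ≤ L → ghWalk (P.A x) (P.B x') m = ghWalk (P.A x) (P.B x) m := by
      intro m
      induction m with
      | zero => intro _; rfl
      | succ m ih =>
        intro hm
        have hm' : m ≤ L := by omega
        rw [ghWalk_succ, ghWalk_succ]
        rcases Nat.even_or_odd m with he | ho
        · have he' : m % 2 = 0 := Nat.even_iff.mp he
          rw [ghStep_even he', ghStep_even he', ih hm']
        · have ho' : m % 2 = 1 := Nat.odd_iff.mp ho
          rw [ghStep_odd ho', ghStep_odd ho']
          calc Option.map (P.B x') (ghWalk (P.A x) (P.B x') m)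
              = Option.map (P.B x') (ghWalk (P.A x') (P.B x') m) := by
                rw [ih hm', hw m hm']
            _ = ghWalk (P.A x') (P.B x') (m + 1) := by
                rw [ghWalk_succ, ghStep_odd ho']
            _ = ghWalk (P.A x) (P.B x) (m + 1) := (hw (m+1) hm).symm
            _ = Option.map (P.B x) (ghWalk (P.A x) (P.B x) m) := by
                rw [ghWalk_succ, ghStep_odd ho']
    have hmem1 : ghStep (P.A x) (P.B x) L (ghWalk (P.A x) (P.B x) L)
        = ghWalk (P.A x) (P.B x) L := Nat.sInf_mem (hC x x).1
    have hmem2 : ghStep (P.A x') (P.B x') L (ghWalk (P.A x') (P.B x') L)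
        = ghWalk (P.A x') (P.B x') L := by
      have h2 : ghStep (P.A x') (P.B x') (ghLen (P.A x') (P.B x'))
          (ghWalk (P.A x') (P.B x') (ghLen (P.A x') (P.B x')))
          = ghWalk (P.A x') (P.B x') (ghLen (P.A x') (P.B x')) :=
        Nat.sInf_mem (hC x' x').1
      rwa [← hL] at h2
    have hmemmix : ghStep (P.A x) (P.B x') L (ghWalk (P.A x) (P.B x') L)
        = ghWalk (P.A x) (P.B x') L := by
      rw [hwalk L le_rfl]
      rcases Nat.even_or_odd L with he | ho
      · have he' : L % 2 = 0 := Nat.even_iff.mp he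
        rw [ghStep_even he']
        rw [ghStep_even he'] at hmem1
        exact hmem1
      · have ho' : L % 2 = 1 := Nat.odd_iff.mp ho
        rw [ghStep_odd ho', hw L le_rfl]
        rw [ghStep_odd ho'] at hmem2
        exact hmem2
    have hnotmem : ∀ m, m < L →
        ghStep (P.A x) (P.B x') m (ghWalk (P.A x) (P.B x') m) ≠ ghWalk (P.A x) (P.B x') m := by
      intro m hm hfix
      rw [hwalk m (le_of_lt hm)] at hfix
      rcases Nat.even_or_odd m with he | ho
      · have he' : m % 2 = 0 := Nat.even_iff.mp he
        rw [ghStep_even he'] at hfix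
        have : m ∈ {n_1 | ghStep (P.A x) (P.B x) n_1 (ghWalk (P.A x) (P.B x) n_1)
            = ghWalk (P.A x) (P.B x) n_1} := by
          simp only [Set.mem_setOf_eq, ghStep_even he']; exact hfix
        have h3 : ghLen (P.A x) (P.B x) ≤ m := Nat.sInf_le this
        rw [← hLdef] at h3
        omega
      · have ho' : m % 2 = 1 := Nat.odd_iff.mp ho
        rw [ghStep_odd ho', hw m (le_of_lt hm)] at hfix
        have : m ∈ {n_1 | ghStep (P.A x') (P.B x') n_1 (ghWalk (P.A x') (P.B x') n_1)
            = ghWalk (P.A x') (P.B x') n_1} := by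
          simp only [Set.mem_setOf_eq, ghStep_odd ho']; exact hfix
        have h3 : ghLen (P.A x') (P.B x') ≤ m := Nat.sInf_le this
        rw [← hL] at h3
        omega
    have hlenmix : ghLen (P.A x) (P.B x') = L := by
      apply le_antisymm
      · exact Nat.sInf_le hmemmix
      · apply le_csInf ⟨L, hmemmix⟩
        intro m hm
        by_contra hlt
        push_neg at hlt
        exact hnotmem m hlt hm
    have hpar : L % 2 = 1 := by
      have := (hC x x).2
      rw [← hLdef] at this
      apply this.mpr
      simp [EQ]
    have := (hC x x').2
    rw [hlenmix] at this
    have : EQ n x x' = true := this.mp hpar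
    simpa [EQ] using this
  have hcard := Fintype.card_le_of_injective _ hinj
  have hdom : Fintype.card (Fin n → Bool) = 2 ^ n := by simp
  have hcod : Fintype.card (Fin (T+1) × (Fin (T+1) → Option (Fin s)))
      = (T + 1) * (s + 1) ^ (T + 1) := by simp
  rw [hdom, hcod] at hcard
  calc 2 ^ (T * T) ≤ 2 ^ n := Nat.pow_le_pow_right (by norm_num) hTT
    _ ≤ (T + 1) * (s + 1) ^ (T + 1) := hcard


lemma ghStep_even' {s : ℕ} {A : Option (Fin s) → Option (Fin s)} {B : Fin s → Fin s} {n : ℕ}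
    (h : n % 2 = 0) (v : Option (Fin s)) : ghStep A B n v = A v := if_pos h

lemma ghStep_odd' {s : ℕ} {A : Option (Fin s) → Option (Fin s)} {B : Fin s → Fin s} {n : ℕ}
    (h : n % 2 = 1) (v : Option (Fin s)) : ghStep A B n v = Option.map B v :=
  if_neg (by omega)

lemma ghWalk_succ' {s : ℕ} (A : Option (Fin s) → Option (Fin s)) (B : Fin s → Fin s) (n : ℕ) :
    ghWalk A B (n + 1) = ghStep A B n (ghWalk A B n) := rfl

namespace GHUpper

abbrev V (b : ℕ) := Fin b → Bool

abbrev T (b k : ℕ) := (Fin k × V b) ⊕ ((Fin k × V b) ⊕ ((Fin k × V b) ⊕ Unit))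

section Matchings

variable {b k : ℕ}

def Pp (i : Fin k) (v : V b) : T b k := Sum.inl (i, v)
def Qp (i : Fin k) (v : V b) : T b k := Sum.inr (Sum.inl (i, v))
def Dp (i : Fin k) (v : V b) : T b k := Sum.inr (Sum.inr (Sum.inl (i, v)))
def Fp : T b k := Sum.inr (Sum.inr (Sum.inr ()))

variable (hk : 0 < k)

/-- Alice's matching: tap ↔ P 0 x₀;  Q i xᵢ ↔ P (i+1) x_{i+1};  Q (k-1) x_{k-1} ↔ F. -/
def alice (xb : Fin k → V b) : Option (T b k) → Option (T b k)
  | none => some (Pp ⟨0, hk⟩ (xb ⟨0, hk⟩))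
  | some (Sum.inl (i, v)) =>  -- P i v
      if v = xb i then
        if h : i.val = 0 then none
        else some (Qp ⟨i.val - 1, by omega⟩ (xb ⟨i.val - 1, by omega⟩))
      else some (Pp i v)
  | some (Sum.inr (Sum.inl (i, v))) =>  -- Q i v
      if v = xb i then
        if h : i.val = k - 1 then some Fp
        else some (Pp ⟨i.val + 1, by omega⟩ (xb ⟨i.val + 1, by omega⟩))
      else some (Qp i v)
  | some (Sum.inr (Sum.inr (Sum.inl (i, v)))) => some (Dp i v)
  | some (Sum.inr (Sum.inr (Sum.inr ()))) =>
      some (Qp ⟨k - 1, by omega⟩ (xb ⟨k - 1, by omega⟩))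

/-- Bob's matching: P i yᵢ ↔ Q i yᵢ;  P i v ↔ D i v for v ≠ yᵢ. -/
def bob (yb : Fin k → V b) : T b k → T b k
  | Sum.inl (i, v) => if v = yb i then Qp i v else Dp i v
  | Sum.inr (Sum.inl (i, v)) => if v = yb i then Pp i v else Qp i v
  | Sum.inr (Sum.inr (Sum.inl (i, v))) => if v = yb i then Dp i v else Pp i v
  | Sum.inr (Sum.inr (Sum.inr ())) => Fp

variable (xb yb : Fin k → V b)

-- evaluation lemmas for alice
lemma alice_none : alice hk xb none = some (Pp ⟨0, hk⟩ (xb ⟨0, hk⟩)) := rfl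

lemma alice_P_match_zero (i : Fin k) (h : i.val = 0) :
    alice hk xb (some (Pp i (xb i))) = none := by
  simp [alice, Pp, h]

lemma alice_P_match_pos (i : Fin k) (h : i.val ≠ 0) :
    alice hk xb (some (Pp i (xb i)))
      = some (Qp ⟨i.val - 1, by omega⟩ (xb ⟨i.val - 1, by omega⟩)) := by
  simp [alice, Pp, h]

lemma alice_P_nomatch (i : Fin k) (v : V b) (h : v ≠ xb i) :
    alice hk xb (some (Pp i v)) = some (Pp i v) := by
  simp only [alice, Pp]
  rw [if_neg h]

lemma alice_Q_match_last (i : Fin k) (h : i.val = k - 1) :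
    alice hk xb (some (Qp i (xb i))) = some Fp := by
  simp [alice, Qp, h]

lemma alice_Q_match (i : Fin k) (h : i.val ≠ k - 1) :
    alice hk xb (some (Qp i (xb i)))
      = some (Pp ⟨i.val + 1, by omega⟩ (xb ⟨i.val + 1, by omega⟩)) := by
  simp [alice, Qp, h]

lemma alice_Q_nomatch (i : Fin k) (v : V b) (h : v ≠ xb i) :
    alice hk xb (some (Qp i v)) = some (Qp i v) := by
  simp only [alice, Qp]
  rw [if_neg h]

lemma alice_D (i : Fin k) (v : V b) : alice hk xb (some (Dp i v)) = some (Dp i v) := rfl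

lemma alice_F : alice hk xb (some Fp)
    = some (Qp ⟨k - 1, by omega⟩ (xb ⟨k - 1, by omega⟩)) := rfl

-- evaluation lemmas for bob
lemma bob_P_match (i : Fin k) : bob yb (Pp i (yb i)) = Qp i (yb i) := by
  simp [bob, Pp]

lemma bob_P_nomatch (i : Fin k) (v : V b) (h : v ≠ yb i) : bob yb (Pp i v) = Dp i v := by
  simp only [bob, Pp]; rw [if_neg h]

lemma bob_Q_match (i : Fin k) : bob yb (Qp i (yb i)) = Pp i (yb i) := by
  simp [bob, Qp]

lemma bob_Q_nomatch (i : Fin k) (v : V b) (h : v ≠ yb i) : bob yb (Qp i v) = Qp i v := by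
  simp only [bob, Qp]; rw [if_neg h]

lemma bob_D_match (i : Fin k) : bob yb (Dp i (yb i)) = Dp i (yb i) := by
  simp [bob, Dp]

lemma bob_D_nomatch (i : Fin k) (v : V b) (h : v ≠ yb i) : bob yb (Dp i v) = Pp i v := by
  simp only [bob, Dp]; rw [if_neg h]

lemma bob_F : bob yb (Fp : T b k) = Fp := rfl

lemma bob_involutive : Function.Involutive (bob yb) := by
  intro t
  rcases t with ⟨i, v⟩ | ⟨i, v⟩ | ⟨i, v⟩ | ⟨⟩
  · show bob yb (bob yb (Pp i v)) = Pp i v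
    by_cases h : v = yb i
    · rw [h, bob_P_match, bob_Q_match]
    · rw [bob_P_nomatch yb i v h, bob_D_nomatch yb i v h]
  · show bob yb (bob yb (Qp i v)) = Qp i v
    by_cases h : v = yb i
    · rw [h, bob_Q_match, bob_P_match]
    · rw [bob_Q_nomatch yb i v h, bob_Q_nomatch yb i v h]
  · show bob yb (bob yb (Dp i v)) = Dp i v
    by_cases h : v = yb i
    · rw [h, bob_D_match, bob_D_match]
    · rw [bob_D_nomatch yb i v h, bob_P_nomatch yb i v h]
  · rfl

lemma alice_involutive : Function.Involutive (alice hk xb) := by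
  intro t
  match t with
  | none =>
      rw [alice_none]
      exact alice_P_match_zero hk xb _ rfl
  | some (Sum.inl (i, v)) =>
      show alice hk xb (alice hk xb (some (Pp i v))) = some (Pp i v)
      by_cases hv : v = xb i
      · rw [hv]
        by_cases h0 : i.val = 0
        · rw [alice_P_match_zero hk xb i h0, alice_none]
          have : (⟨0, hk⟩ : Fin k) = i := Fin.ext h0.symm
          rw [this]
        · rw [alice_P_match_pos hk xb i h0]
          rw [alice_Q_match hk xb _ (show i.val - 1 ≠ k - 1 by omega)]
          have : (⟨(⟨i.val - 1, by omega⟩ : Fin k).val + 1,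
              show i.val - 1 + 1 < k by omega⟩ : Fin k) = i := by
            apply Fin.ext; show i.val - 1 + 1 = i.val; omega
          rw [this]
      · rw [alice_P_nomatch hk xb i v hv, alice_P_nomatch hk xb i v hv]
  | some (Sum.inr (Sum.inl (i, v))) =>
      show alice hk xb (alice hk xb (some (Qp i v))) = some (Qp i v)
      by_cases hv : v = xb i
      · rw [hv]
        by_cases hl : i.val = k - 1
        · rw [alice_Q_match_last hk xb i hl, alice_F]
          have : (⟨k - 1, by omega⟩ : Fin k) = i := Fin.ext hl.symm
          rw [this]
        · rw [alice_Q_match hk xb i hl]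
          rw [alice_P_match_pos hk xb _ (show i.val + 1 ≠ 0 by omega)]
          have : (⟨(⟨i.val + 1, by omega⟩ : Fin k).val - 1,
              show i.val + 1 - 1 < k by omega⟩ : Fin k) = i := by
            apply Fin.ext; show i.val + 1 - 1 = i.val; omega
          rw [this]
      · rw [alice_Q_nomatch hk xb i v hv, alice_Q_nomatch hk xb i v hv]
  | some (Sum.inr (Sum.inr (Sum.inl (i, v)))) => rfl
  | some (Sum.inr (Sum.inr (Sum.inr ()))) =>
      show alice hk xb (alice hk xb (some Fp)) = some Fp
      rw [alice_F]
      exact alice_Q_match_last hk xb _ rfl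

-- ## generic walk over an arbitrary pipe type
end Matchings

def gStep {γ : Type*} (A : Option γ → Option γ) (B : γ → γ) (n : ℕ) (v : Option γ) : Option γ :=
  if n % 2 = 0 then A v else Option.map B v

def gWalk {γ : Type*} (A : Option γ → Option γ) (B : γ → γ) : ℕ → Option γ
  | 0 => none
  | n + 1 => gStep A B n (gWalk A B n)

lemma gStep_even {γ : Type*} {A : Option γ → Option γ} {B : γ → γ} {n : ℕ}
    (h : n % 2 = 0) (v : Option γ) : gStep A B n v = A v := if_pos h

lemma gStep_odd {γ : Type*} {A : Option γ → Option γ} {B : γ → γ} {n : ℕ}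
    (h : n % 2 = 1) (v : Option γ) : gStep A B n v = Option.map B v := if_neg (by omega)

lemma gWalk_succ {γ : Type*} (A : Option γ → Option γ) (B : γ → γ) (n : ℕ) :
    gWalk A B (n + 1) = gStep A B n (gWalk A B n) := rfl

-- ## transfer along an equivalence to `Fin s`

section Transfer

variable {γ : Type} {s : ℕ} (e : γ ≃ Fin s) (A : Option γ → Option γ) (B : γ → γ)

def liftA : Option (Fin s) → Option (Fin s) := fun o => Option.map e (A (Option.map e.symm o))

def liftB : Fin s → Fin s := fun p => e (B (e.symm p))

lemma map_symm_map (z : Option γ) : Option.map e.symm (Option.map e z) = z := by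
  cases z <;> simp

lemma map_map_symm (z : Option (Fin s)) : Option.map e (Option.map e.symm z) = z := by
  cases z <;> simp

lemma liftA_involutive (hA : Function.Involutive A) : Function.Involutive (liftA e A) := by
  intro o
  simp only [liftA, map_symm_map, hA (Option.map e.symm o), map_map_symm]

lemma liftB_involutive (hB : Function.Involutive B) : Function.Involutive (liftB e B) := by
  intro p
  simp only [liftB, Equiv.symm_apply_apply, hB (e.symm p), Equiv.apply_symm_apply]

lemma lift_step (n : ℕ) (v : Option γ) :
    ghStep (liftA e A) (liftB e B) n (Option.map e v) = Option.map e (gStep A B n v) := by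
  rcases Nat.even_or_odd n with h | h
  · have h' : n % 2 = 0 := Nat.even_iff.mp h
    rw [ghStep_even' h', gStep_even h']
    simp only [liftA, map_symm_map]
  · have h' : n % 2 = 1 := Nat.odd_iff.mp h
    rw [ghStep_odd' h', gStep_odd h']
    cases v <;> simp [liftB]

lemma lift_walk (m : ℕ) :
    ghWalk (liftA e A) (liftB e B) m = Option.map e (gWalk A B m) := by
  induction m with
  | zero => rfl
  | succ m ih => rw [ghWalk_succ', ih, lift_step, gWalk_succ]

lemma lift_halt (n : ℕ) :
    (ghStep (liftA e A) (liftB e B) n (ghWalk (liftA e A) (liftB e B) n)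
      = ghWalk (liftA e A) (liftB e B) n)
    ↔ gStep A B n (gWalk A B n) = gWalk A B n := by
  rw [lift_walk, lift_step]
  exact (Option.map_injective e.injective).eq_iff

lemma lift_haltset :
    {n | ghStep (liftA e A) (liftB e B) n (ghWalk (liftA e A) (liftB e B) n)
      = ghWalk (liftA e A) (liftB e B) n}
    = {n | gStep A B n (gWalk A B n) = gWalk A B n} := by
  ext n; exact lift_halt e A B n

lemma lift_len :
    ghLen (liftA e A) (liftB e B) = sInf {n | gStep A B n (gWalk A B n) = gWalk A B n} := by
  unfold ghLen
  rw [lift_haltset]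

end Transfer

-- ## the walk of the block protocol

section Walk

variable {b k : ℕ} (hk : 0 < k) (xb yb : Fin k → V b)

lemma walkP (i : ℕ) (hi : i < k)
    (hpre : ∀ l (hl : l < i), xb ⟨l, by omega⟩ = yb ⟨l, by omega⟩) :
    gWalk (alice hk xb) (bob yb) (2 * i + 1) = some (Pp ⟨i, hi⟩ (xb ⟨i, hi⟩)) := by
  induction i with
  | zero =>
      rw [show 2 * 0 + 1 = 0 + 1 from rfl, gWalk_succ, gStep_even rfl]
      exact alice_none hk xb
  | succ i ih =>
      have hi' : i < k := by omega
      have h1 : gWalk (alice hk xb) (bob yb) (2 * i + 1) = some (Pp ⟨i, hi'⟩ (xb ⟨i, hi'⟩)) :=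
        ih hi' (fun l hl => hpre l (by omega))
      have hxy : xb ⟨i, hi'⟩ = yb ⟨i, hi'⟩ := hpre i (by omega)
      have h2 : gWalk (alice hk xb) (bob yb) (2 * i + 2) = some (Qp ⟨i, hi'⟩ (xb ⟨i, hi'⟩)) := by
        rw [show 2 * i + 2 = (2 * i + 1) + 1 from rfl, gWalk_succ,
          gStep_odd (by omega), h1]
        simp only [Option.map_some]
        rw [hxy, bob_P_match]
      have h3 : gWalk (alice hk xb) (bob yb) (2 * (i + 1) + 1)
          = some (Pp ⟨i + 1, hi⟩ (xb ⟨i + 1, hi⟩)) := by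
        rw [show 2 * (i + 1) + 1 = (2 * i + 2) + 1 by ring, gWalk_succ,
          gStep_even (by omega), h2]
        rw [alice_Q_match hk xb _ (show i ≠ k - 1 by omega)]
      exact h3

lemma walkQ (i : ℕ) (hi : i < k)
    (hpre : ∀ l (hl : l ≤ i), xb ⟨l, by omega⟩ = yb ⟨l, by omega⟩) :
    gWalk (alice hk xb) (bob yb) (2 * i + 2) = some (Qp ⟨i, hi⟩ (xb ⟨i, hi⟩)) := by
  rw [show 2 * i + 2 = (2 * i + 1) + 1 from rfl, gWalk_succ, gStep_odd (by omega),
    walkP hk xb yb i hi (fun l hl => hpre l (by omega))]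
  simp only [Option.map_some]
  rw [hpre i le_rfl, bob_P_match]

-- non-halting before the end
lemma notmem_zero : gStep (alice hk xb) (bob yb) 0 (gWalk (alice hk xb) (bob yb) 0)
    ≠ gWalk (alice hk xb) (bob yb) 0 := by
  show gStep (alice hk xb) (bob yb) 0 none ≠ none
  rw [gStep_even rfl, alice_none]
  simp

lemma notmem_odd (i : ℕ) (hi : i < k)
    (hpre : ∀ l (hl : l < i), xb ⟨l, by omega⟩ = yb ⟨l, by omega⟩) :
    gStep (alice hk xb) (bob yb) (2 * i + 1) (gWalk (alice hk xb) (bob yb) (2 * i + 1))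
    ≠ gWalk (alice hk xb) (bob yb) (2 * i + 1) := by
  rw [walkP hk xb yb i hi hpre, gStep_odd (by omega)]
  simp only [Option.map_some]
  by_cases h : xb ⟨i, hi⟩ = yb ⟨i, hi⟩
  · rw [show (Pp ⟨i, hi⟩ (xb ⟨i, hi⟩) : T b k) = Pp ⟨i, hi⟩ (yb ⟨i, hi⟩) from by rw [h],
      bob_P_match]
    simp [Pp, Qp]
  · rw [bob_P_nomatch yb _ _ h]
    simp [Pp, Dp]

lemma notmem_even (i : ℕ) (hi : i < k)
    (hpre : ∀ l (hl : l ≤ i), xb ⟨l, by omega⟩ = yb ⟨l, by omega⟩) :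
    gStep (alice hk xb) (bob yb) (2 * i + 2) (gWalk (alice hk xb) (bob yb) (2 * i + 2))
    ≠ gWalk (alice hk xb) (bob yb) (2 * i + 2) := by
  rw [walkQ hk xb yb i hi hpre, gStep_even (by omega)]
  by_cases h : i = k - 1
  · rw [alice_Q_match_last hk xb _ h]
    simp [Fp, Qp]
  · rw [alice_Q_match hk xb _ (show (⟨i, hi⟩ : Fin k).val ≠ k - 1 from h)]
    simp [Pp, Qp]

lemma len_match (hall : ∀ i, xb i = yb i) :
    sInf {n | gStep (alice hk xb) (bob yb) n (gWalk (alice hk xb) (bob yb) n)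
      = gWalk (alice hk xb) (bob yb) n} = 2 * k + 1 ∧
    (2 * k + 1) ∈ {n | gStep (alice hk xb) (bob yb) n (gWalk (alice hk xb) (bob yb) n)
      = gWalk (alice hk xb) (bob yb) n} := by
  have hk1 : k - 1 < k := by omega
  have hW2k : gWalk (alice hk xb) (bob yb) (2 * k) = some (Qp ⟨k - 1, hk1⟩ (xb ⟨k - 1, hk1⟩)) := by
    rw [show 2 * k = 2 * (k - 1) + 2 by omega]
    exact walkQ hk xb yb (k - 1) hk1 (fun l hl => hall _)
  have hW2k1 : gWalk (alice hk xb) (bob yb) (2 * k + 1) = some Fp := by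
    rw [gWalk_succ, gStep_even (by omega), hW2k, alice_Q_match_last hk xb _ rfl]
  have hmem : (2 * k + 1) ∈ {n | gStep (alice hk xb) (bob yb) n (gWalk (alice hk xb) (bob yb) n)
      = gWalk (alice hk xb) (bob yb) n} := by
    show gStep _ _ _ _ = _
    rw [hW2k1, gStep_odd (by omega)]
    simp only [Option.map_some]
    rw [bob_F]
  refine ⟨le_antisymm (Nat.sInf_le hmem) (le_csInf ⟨_, hmem⟩ ?_), hmem⟩
  intro m hm
  by_contra hlt
  push_neg at hlt
  rcases Nat.even_or_odd m with he | ho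
  · rcases Nat.eq_zero_or_pos m with rfl | hpos
    · exact notmem_zero hk xb yb hm
    · obtain ⟨i, rfl⟩ : ∃ i, m = 2 * i + 2 := ⟨m / 2 - 1, by
        have := Nat.even_iff.mp he; omega⟩
      have hik : i < k := by omega
      exact notmem_even hk xb yb i hik (fun l hl => hall _) hm
  · obtain ⟨i, rfl⟩ : ∃ i, m = 2 * i + 1 := ⟨m / 2, by have := Nat.odd_iff.mp ho; omega⟩
    have hik : i < k := by omega
    exact notmem_odd hk xb yb i hik (fun l hl => hall _) hm

lemma len_mismatch (j : ℕ) (hj : j < k)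
    (hpre : ∀ l (hl : l < j), xb ⟨l, by omega⟩ = yb ⟨l, by omega⟩)
    (hne : xb ⟨j, hj⟩ ≠ yb ⟨j, hj⟩) :
    sInf {n | gStep (alice hk xb) (bob yb) n (gWalk (alice hk xb) (bob yb) n)
      = gWalk (alice hk xb) (bob yb) n} = 2 * j + 2 ∧
    (2 * j + 2) ∈ {n | gStep (alice hk xb) (bob yb) n (gWalk (alice hk xb) (bob yb) n)
      = gWalk (alice hk xb) (bob yb) n} := by
  have hW1 : gWalk (alice hk xb) (bob yb) (2 * j + 2) = some (Dp ⟨j, hj⟩ (xb ⟨j, hj⟩)) := by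
    rw [show 2 * j + 2 = (2 * j + 1) + 1 from rfl, gWalk_succ, gStep_odd (by omega),
      walkP hk xb yb j hj hpre]
    simp only [Option.map_some]
    rw [bob_P_nomatch yb _ _ hne]
  have hmem : (2 * j + 2) ∈ {n | gStep (alice hk xb) (bob yb) n (gWalk (alice hk xb) (bob yb) n)
      = gWalk (alice hk xb) (bob yb) n} := by
    show gStep _ _ _ _ = _
    rw [hW1, gStep_even (by omega), alice_D]
  refine ⟨le_antisymm (Nat.sInf_le hmem) (le_csInf ⟨_, hmem⟩ ?_), hmem⟩
  intro m hm
  by_contra hlt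
  push_neg at hlt
  rcases Nat.even_or_odd m with he | ho
  · rcases Nat.eq_zero_or_pos m with rfl | hpos
    · exact notmem_zero hk xb yb hm
    · obtain ⟨i, rfl⟩ : ∃ i, m = 2 * i + 2 := ⟨m / 2 - 1, by
        have := Nat.even_iff.mp he; omega⟩
      have hik : i < j := by omega
      exact notmem_even hk xb yb i (by omega) (fun l hl => hpre l (by omega)) hm
  · obtain ⟨i, rfl⟩ : ∃ i, m = 2 * i + 1 := ⟨m / 2, by have := Nat.odd_iff.mp ho; omega⟩
    have hij : i ≤ j := by omega
    exact notmem_odd hk xb yb i (by omega) (fun l hl => hpre l (by omega)) hm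

end Walk

-- ## block encoding of the input

section Blocks

variable (n b k : ℕ)

def xblocks (x : Fin n → Bool) : Fin k → V b := fun i t =>
  if h : i.val * b + t.val < n then x ⟨i.val * b + t.val, h⟩ else false

lemma xblocks_inj (hb : 0 < b) (hbk : n ≤ k * b) (x y : Fin n → Bool)
    (h : ∀ i, xblocks n b k x i = xblocks n b k y i) : x = y := by
  funext p
  have hpk : p.val / b < k := by
    have : p.val < k * b := lt_of_lt_of_le p.isLt hbk
    exact Nat.div_lt_iff_lt_mul hb |>.mpr (by omega)
  have hpb : p.val % b < b := Nat.mod_lt _ hb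
  have hx := congrFun (h ⟨p.val / b, hpk⟩) ⟨p.val % b, hpb⟩
  have heq : p.val / b * b + p.val % b = p.val := Nat.div_add_mod' p.val b
  simp only [xblocks] at hx
  rw [show ((⟨p.val / b, hpk⟩ : Fin k).val * b + ((⟨p.val % b, hpb⟩ : Fin b)).val = p.val)
    from heq] at hx
  rw [dif_pos p.isLt, dif_pos p.isLt] at hx
  simpa using hx

end Blocks


-- ## assembling the protocol

lemma upper_main (n : ℕ) : ∃ s ≤ 8 * (2 ^ Nat.sqrt n * (Nat.sqrt n + 1)),
    ∃ P : GHProtocol (Fin n → Bool) (Fin n → Bool) s, P.Computes (EQ n) ∧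
    ∀ x y, ghLen (P.A x) (P.B y) ≤ 8 * (Nat.sqrt n + 1) := by
  classical
  set b := Nat.sqrt n with hbdef
  set k := n / b + 1 with hkdef
  have hk : 0 < k := Nat.succ_pos _
  set e : T b k ≃ Fin (Fintype.card (T b k)) := Fintype.equivFin (T b k) with hedef
  have hkb : k ≤ b + 3 := by
    rcases Nat.eq_zero_or_pos b with hb0 | hb
    · have hn0 : n = 0 := by
        have h := Nat.sqrt_eq_zero.mp (hbdef.symm.trans hb0)
        omega
      simp [hkdef, hn0]
    · have h1 : n < (b + 1) * (b + 1) := by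
        rw [hbdef]; exact Nat.lt_succ_sqrt n
      have h2 : n / b < b + 3 := by
        apply (Nat.div_lt_iff_lt_mul hb).mpr
        nlinarith
      omega
  -- the key walk analysis, once for every input pair
  have key : ∀ x y : Fin n → Bool, ∃ L : ℕ,
      sInf {m | gStep (alice hk (xblocks n b k x)) (bob (xblocks n b k y)) m
          (gWalk (alice hk (xblocks n b k x)) (bob (xblocks n b k y)) m)
        = gWalk (alice hk (xblocks n b k x)) (bob (xblocks n b k y)) m} = L ∧
      L ∈ {m | gStep (alice hk (xblocks n b k x)) (bob (xblocks n b k y)) m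
          (gWalk (alice hk (xblocks n b k x)) (bob (xblocks n b k y)) m)
        = gWalk (alice hk (xblocks n b k x)) (bob (xblocks n b k y)) m} ∧
      L ≤ 2 * k + 1 ∧ (L % 2 = 1 ↔ x = y) := by
    intro x y
    by_cases hxy : x = y
    · subst hxy
      obtain ⟨hlen, hmem⟩ := len_match hk (xblocks n b k x) (xblocks n b k x) (fun _ => rfl)
      exact ⟨2 * k + 1, hlen, hmem, le_rfl, by simp⟩
    · -- there is a mismatched block
      have hn0 : n ≠ 0 := by
        rintro rfl
        exact hxy (funext fun p => p.elim0)
      have hb : 0 < b := by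
        rw [hbdef]
        exact Nat.sqrt_pos.mpr (by omega)
      have hbk : n ≤ k * b := by
        have h1 : (n / b) * b + n % b = n := Nat.div_add_mod' n b
        have h2 : n % b < b := Nat.mod_lt _ hb
        have h3 : k * b = (n / b) * b + b := by rw [hkdef]; ring
        omega
      have hex : ∃ m : ℕ, ∃ hm : m < k,
          xblocks n b k x ⟨m, hm⟩ ≠ xblocks n b k y ⟨m, hm⟩ := by
        by_contra hcon
        push_neg at hcon
        exact hxy (xblocks_inj n b k hb hbk x y (fun i => by
          have := hcon i.val i.isLt
          simpa using this))
      set j := Nat.find hex with hjdef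
      obtain ⟨hj, hne⟩ := Nat.find_spec hex
      have hpre : ∀ l (hl : l < j), xblocks n b k x ⟨l, by omega⟩
          = xblocks n b k y ⟨l, by omega⟩ := by
        intro l hl
        by_contra hcon
        exact Nat.find_min hex hl ⟨by omega, hcon⟩
      obtain ⟨hlen, hmem⟩ := len_mismatch hk (xblocks n b k x) (xblocks n b k y) j hj hpre hne
      refine ⟨2 * j + 2, hlen, hmem, by omega, ?_⟩
      constructor
      · intro h; omega
      · intro h; exact absurd h hxy
  refine ⟨Fintype.card (T b k), ?_, ⟨fun x => liftA e (alice hk (xblocks n b k x)),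
      fun y => liftB e (bob (xblocks n b k y)),
      fun x => liftA_involutive e _ (alice_involutive hk _),
      fun y => liftB_involutive e _ (bob_involutive _)⟩, ?_, ?_⟩
  · -- size bound
    have hcard : Fintype.card (T b k) = k * 2 ^ b + (k * 2 ^ b + (k * 2 ^ b + 1)) := by
      simp
    rw [hcard]
    have h2b : 1 ≤ 2 ^ b := Nat.one_le_two_pow
    have hmul : k * 2 ^ b ≤ (b + 3) * 2 ^ b := Nat.mul_le_mul_right _ hkb
    rcases Nat.eq_zero_or_pos b with hb0 | hb
    · have hn0 : n = 0 := by
        have h := Nat.sqrt_eq_zero.mp (hbdef.symm.trans hb0)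
        omega
      have hk1 : k = 1 := by rw [hkdef, hn0]; simp
      have h2 : (2 : ℕ) ^ b = 1 := by rw [hb0, pow_zero]
      rw [hk1, h2]
      omega
    · nlinarith
  · -- computes EQ
    intro x y
    obtain ⟨L, hlen, hmem, hLle, hpar⟩ := key x y
    constructor
    · show {m | ghStep (liftA e (alice hk (xblocks n b k x))) (liftB e (bob (xblocks n b k y))) m
          (ghWalk (liftA e (alice hk (xblocks n b k x))) (liftB e (bob (xblocks n b k y))) m)
        = ghWalk (liftA e (alice hk (xblocks n b k x))) (liftB e (bob (xblocks n b k y))) m}.Nonempty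
      rw [lift_haltset]
      exact ⟨L, hmem⟩
    · show ghLen (liftA e (alice hk (xblocks n b k x)))
          (liftB e (bob (xblocks n b k y))) % 2 = 1 ↔ EQ n x y = true
      rw [lift_len, hlen]
      simp only [EQ, decide_eq_true_eq]
      exact hpar
  · -- time bound
    intro x y
    obtain ⟨L, hlen, hmem, hLle, hpar⟩ := key x y
    show ghLen (liftA e (alice hk (xblocks n b k x)))
        (liftB e (bob (xblocks n b k y))) ≤ 8 * (b + 1)
    rw [lift_len, hlen]
    omega

end GHUpper

/-- Time-bounded garden-hose complexity of Equality. Lower bound: any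
garden-hose protocol for `EQ_n` whose path from the tap uses at most `√n` pipes
on every input has size `2^{Ω(√n)}`. Upper bound: there is a garden-hose
protocol for `EQ_n` with time `O(√n)` and size `O(2^{√n} · √n)`. -/
theorem time_bounded_GH_equality :
    (∃ c : ℕ, 0 < c ∧
      ∀ (n s : ℕ) (P : GHProtocol (Fin n → Bool) (Fin n → Bool) s),
        P.Computes (EQ n) →
        (∀ x y, ghLen (P.A x) (P.B y) ≤ Nat.sqrt n) →
        2 ^ (Nat.sqrt n / c) ≤ c * (s + 1)) ∧
    (∃ C : ℕ, 0 < C ∧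
      ∀ n : ℕ, ∃ s ≤ C * (2 ^ Nat.sqrt n * (Nat.sqrt n + 1)),
        ∃ P : GHProtocol (Fin n → Bool) (Fin n → Bool) s,
          P.Computes (EQ n) ∧
          ∀ x y, ghLen (P.A x) (P.B y) ≤ C * (Nat.sqrt n + 1)) := by
  constructor
  · exact ⟨4, by norm_num, gh_lower⟩
  · exact ⟨8, by norm_num, GHUpper.upper_main⟩
end

section
/- The pointer jumping function PJ_k can be computed by a garden-hose protocol of size k·n and time k. -/
/-- `k`-fold pointer jumping: starting from `v₀`, alternately apply Alice's
bijection `fA : U → V` and Bob's bijection `fB : V → U` (both vertex sets being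
copies of `Fin (n+1)`). -/
def pjIter {n : ℕ} (fA fB : Equiv.Perm (Fin (n + 1))) (v0 : Fin (n + 1)) :
    ℕ → Fin (n + 1)
  | 0 => v0
  | m + 1 =>
      if m % 2 = 0 then fA (pjIter fA fB v0 m) else fB (pjIter fA fB v0 m)

/-- The pointer jumping function `PJ_k`: the XOR of all bits of the binary name
of the vertex `f_k(v₀)` reached after `k` pointer jumps. -/
def PJ (n k : ℕ) (fA fB : Equiv.Perm (Fin (n + 1))) : Bool :=
  decide (Odd (((pjIter fA fB 0 k).val.bits.count true)))

namespace GHPJ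
def pcnt {n : ℕ} (w : Fin (n+1)) : ℕ := w.val.bits.count true
def openC {n : ℕ} (k : ℕ) (w : Fin (n+1)) : Prop := (k-1) % 2 = pcnt w % 2
instance instDecOpenC {n : ℕ} (k : ℕ) (w : Fin (n+1)) : Decidable (openC k w) :=
  inferInstanceAs (Decidable (_ = _))
def mAbs {n : ℕ} (k : ℕ) (g : Equiv.Perm (Fin (n+1))) (p : ℕ)
    (x : Fin k × Fin (n+1)) : Fin k × Fin (n+1) :=
  if x.1.val % 2 = p then
    if h : x.1.val + 1 < k ∧ (x.1.val + 2 ≠ k ∨ ¬ openC k (g x.2)) then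
      (⟨x.1.val + 1, h.1⟩, g x.2)
    else x
  else
    if (x.1.val + 1 = k ∧ openC k x.2) ∨ x.1.val = 0 then x
    else (⟨x.1.val - 1, Nat.lt_of_le_of_lt (Nat.sub_le _ _) x.1.isLt⟩, g.symm x.2)
def aAbs {n : ℕ} (k : ℕ) (fA : Equiv.Perm (Fin (n+1))) :
    Option (Fin k × Fin (n+1)) → Option (Fin k × Fin (n+1))
  | none => if h : 0 < k ∧ (1 ≠ k ∨ ¬ openC k (fA 0)) then some (⟨0, h.1⟩, fA 0)
      else none
  | some y => if y.1.val = 0 ∧ y.2 = fA 0 ∧ (1 ≠ k ∨ ¬ openC k (fA 0)) then none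
      else some (mAbs k fA 1 y)


section
variable {n : ℕ} (k : ℕ) (fA fB : Equiv.Perm (Fin (n+1)))

def stepAbs (m : ℕ) (x : Option (Fin k × Fin (n+1))) : Option (Fin k × Fin (n+1)) :=
  if m % 2 = 0 then aAbs k fA x else Option.map (mAbs k fB 0) x

def walkAbs : ℕ → Option (Fin k × Fin (n+1))
  | 0 => none
  | m + 1 => stepAbs k fA fB m (walkAbs m)

def Wm (m : ℕ) : Option (Fin k × Fin (n+1)) :=
  if h : 0 < m ∧ m ≤ k then some (⟨m-1, by omega⟩, pjIter fA fB 0 m) else none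

def Lv : ℕ := if openC k (pjIter fA fB 0 k) then k - 1 else k

theorem progress (m : ℕ) (hm : m < k)
    (hop : m + 1 = k → ¬ openC k (pjIter fA fB 0 k)) :
    stepAbs k fA fB m (Wm k fA fB m) = Wm k fA fB (m+1) := by
  have hW1 : Wm k fA fB (m+1) = some (⟨m, hm⟩, pjIter fA fB 0 (m+1)) := by
    rw [Wm, dif_pos ⟨Nat.succ_pos m, hm⟩]
    rfl
  rcases Nat.eq_zero_or_pos m with h0 | h0
  · subst h0
    have h1 : pjIter fA fB 0 1 = fA 0 := by simp [pjIter]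
    rw [hW1]
    show aAbs k fA (Wm k fA fB 0) = _
    rw [show Wm k fA fB 0 = none from dif_neg (by omega)]
    have hcond : 0 < k ∧ (1 ≠ k ∨ ¬ openC k (fA 0)) := by
      refine ⟨hm, ?_⟩
      by_cases hk : 1 = k
      · subst hk
        refine Or.inr ?_
        rw [← h1]
        exact hop rfl
      · exact Or.inl hk
    rw [show aAbs k fA none = some (⟨0, hcond.1⟩, fA 0) from dif_pos hcond, h1]
  · have hW0 : Wm k fA fB m = some (⟨m-1, by omega⟩, pjIter fA fB 0 m) := by
      rw [Wm, dif_pos ⟨h0, hm.le⟩]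
    rcases Nat.even_or_odd m with he | ho
    · -- Alice's move, m even, m ≥ 2
      have hm2 : 2 ≤ m := by rcases he with ⟨t, ht⟩; omega
      have hme : m % 2 = 0 := Nat.even_iff.mp he
      have hsrc : (m - 1) % 2 = 1 := by omega
      rw [hW1, hW0, stepAbs, if_pos hme]
      rw [show aAbs k fA (some (⟨m-1, by omega⟩, pjIter fA fB 0 m))
          = some (mAbs k fA 1 (⟨m-1, by omega⟩, pjIter fA fB 0 m)) from
        if_neg (by rintro ⟨h, -⟩; simp at h; omega)]
      have hc : (m - 1) + 1 < k ∧
          ((m-1) + 2 ≠ k ∨ ¬ openC k (fA (pjIter fA fB 0 m))) := by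
        refine ⟨by omega, ?_⟩
        by_cases hk : m + 1 = k
        · have := hop hk
          rw [← hk] at this
          rw [show pjIter fA fB 0 (m+1) = fA (pjIter fA fB 0 m) from by
            simp [pjIter, hme]] at this
          rw [hk] at this
          exact Or.inr this
        · exact Or.inl (by omega)
      rw [mAbs, if_pos hsrc, dif_pos hc]
      congr 1
      refine Prod.ext (Fin.ext (by simp; omega)) ?_
      simp [pjIter, hme]
    · -- Bob's move, m odd
      have hmo : m % 2 = 1 := Nat.odd_iff.mp ho
      have hsrc : (m - 1) % 2 = 0 := by omega
      rw [hW1, hW0, stepAbs, if_neg (by omega), Option.map_some]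
      have hc : (m - 1) + 1 < k ∧
          ((m-1) + 2 ≠ k ∨ ¬ openC k (fB (pjIter fA fB 0 m))) := by
        refine ⟨by omega, ?_⟩
        by_cases hk : m + 1 = k
        · have := hop hk
          rw [← hk] at this
          rw [show pjIter fA fB 0 (m+1) = fB (pjIter fA fB 0 m) from by
            simp [pjIter, hmo]] at this
          rw [hk] at this
          exact Or.inr this
        · exact Or.inl (by omega)
      rw [mAbs, if_pos hsrc, dif_pos hc]
      congr 1
      refine Prod.ext (Fin.ext (by simp; omega)) ?_
      simp [pjIter, hmo]

theorem halt : stepAbs k fA fB (Lv k fA fB) (Wm k fA fB (Lv k fA fB))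
    = Wm k fA fB (Lv k fA fB) := by
  rcases Nat.eq_zero_or_pos k with hk0 | hk0
  · subst hk0
    rw [show Lv 0 fA fB = 0 from by unfold Lv; split <;> rfl]
    rw [show Wm 0 fA fB 0 = none from dif_neg (by omega)]
    show aAbs 0 fA none = none
    rw [aAbs, dif_neg (by omega)]
  have hpred : k - 1 + 1 = k := by omega
  have hFk : pjIter fA fB 0 k
      = if (k-1) % 2 = 0 then fA (pjIter fA fB 0 (k-1)) else fB (pjIter fA fB 0 (k-1)) := by
    conv_lhs => rw [← hpred]
    rfl
  by_cases hop : openC k (pjIter fA fB 0 k)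
  · have hL : Lv k fA fB = k - 1 := if_pos hop
    rcases Nat.lt_or_ge k 2 with hk1 | hk2
    · -- k = 1
      have hk : k = 1 := by omega
      subst hk
      rw [hL]
      rw [show Wm 1 fA fB (1-1) = none from dif_neg (by omega)]
      show aAbs 1 fA none = none
      rw [show pjIter fA fB 0 1 = fA 0 from by simp [pjIter]] at hop
      rw [aAbs, dif_neg (by
        rintro ⟨-, h | h⟩
        · exact h rfl
        · exact h hop)]
    · -- k ≥ 2
      have hLW : Wm k fA fB (k-1)
          = some (⟨k-1-1, by omega⟩, pjIter fA fB 0 (k-1)) :=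
        dif_pos ⟨by omega, by omega⟩
      rw [hL, hLW]
      by_cases hpar : (k-1) % 2 = 0
      · -- Alice's step, k odd, k ≥ 3
        have hk3 : 3 ≤ k := by omega
        rw [stepAbs, if_pos hpar]
        rw [hFk, if_pos hpar] at hop
        rw [show aAbs k fA (some (⟨k-1-1, by omega⟩, pjIter fA fB 0 (k-1)))
            = some (mAbs k fA 1 (⟨k-1-1, by omega⟩, pjIter fA fB 0 (k-1))) from
          if_neg (by rintro ⟨h, -⟩; simp at h; omega)]
        rw [mAbs, if_pos (by simp; omega),
          dif_neg (by
            rintro ⟨-, h | h⟩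
            · simp at h; omega
            · exact h hop)]
      · -- Bob's step, k even
        rw [stepAbs, if_neg (by omega), Option.map_some]
        rw [hFk, if_neg hpar] at hop
        rw [mAbs, if_pos (by simp; omega),
          dif_neg (by
            rintro ⟨-, h | h⟩
            · simp at h; omega
            · exact h hop)]
  · have hL : Lv k fA fB = k := if_neg hop
    have hLW : Wm k fA fB k = some (⟨k-1, by omega⟩, pjIter fA fB 0 k) :=
      dif_pos ⟨hk0, le_refl k⟩
    rw [hL, hLW]
    by_cases hpar : k % 2 = 0
    · -- Alice's step, k even ≥ 2
      rw [stepAbs, if_pos hpar]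
      rw [show aAbs k fA (some (⟨k-1, by omega⟩, pjIter fA fB 0 k))
          = some (mAbs k fA 1 (⟨k-1, by omega⟩, pjIter fA fB 0 k)) from
        if_neg (by rintro ⟨h, -⟩; simp at h; omega)]
      rw [mAbs, if_pos (by simp; omega), dif_neg (by rintro ⟨h, -⟩; simp at h; omega)]
    · -- Bob's step, k odd
      rw [stepAbs, if_neg hpar, Option.map_some]
      rw [mAbs, if_pos (by simp; omega), dif_neg (by rintro ⟨h, -⟩; simp at h; omega)]
end

-- involutivity proofs
theorem mAbs_invol {n : ℕ} (k : ℕ) (g : Equiv.Perm (Fin (n+1))) (p : ℕ)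
    (hp : p < 2) : Function.Involutive (mAbs k g p) := by
  rintro ⟨j, v⟩
  unfold mAbs
  by_cases h1 : j.val % 2 = p
  · rw [if_pos h1]
    by_cases h2 : j.val + 1 < k ∧ (j.val + 2 ≠ k ∨ ¬ openC k (g v))
    · rw [dif_pos h2]
      have hne : ¬ ((j.val + 1) % 2 = p) := by omega
      rw [if_neg hne]
      have hfix : ¬ ((j.val + 1 + 1 = k ∧ openC k (g v)) ∨ j.val + 1 = 0) := by
        push_neg
        refine ⟨fun hk ho => ?_, by omega⟩
        rcases h2.2 with h | h
        · omega
        · exact h ho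
      rw [if_neg hfix]
      refine Prod.ext ?_ ?_
      · exact Fin.ext (by simp)
      · simp
    · rw [dif_neg h2, if_pos h1, dif_neg h2]
  · rw [if_neg h1]
    by_cases h2 : (j.val + 1 = k ∧ openC k v) ∨ j.val = 0
    · rw [if_pos h2, if_neg h1, if_pos h2]
    · rw [if_neg h2]
      have hj1 : 1 ≤ j.val := by omega
      have hj : (j.val - 1) % 2 = p := by omega
      rw [if_pos hj]
      have hc : j.val - 1 + 1 < k ∧ (j.val - 1 + 2 ≠ k ∨ ¬ openC k (g (g.symm v))) := by
        refine ⟨by omega, ?_⟩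
        by_cases hk : j.val + 1 = k
        · right
          rw [Equiv.apply_symm_apply]
          intro ho
          exact h2 (Or.inl ⟨hk, ho⟩)
        · left; omega
      rw [dif_pos hc]
      refine Prod.ext ?_ ?_
      · exact Fin.ext (by simp; omega)
      · simp

theorem mAbs_fst_ne_zero {n : ℕ} (k : ℕ) (g : Equiv.Perm (Fin (n+1)))
    (y : Fin k × Fin (n+1)) (h : y.1.val ≠ 0) : (mAbs k g 1 y).1.val ≠ 0 := by
  unfold mAbs
  split_ifs with h1 h2 h3 <;> simp_all <;> omega

theorem mAbs_zero_fix {n : ℕ} (k : ℕ) (g : Equiv.Perm (Fin (n+1)))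
    (y : Fin k × Fin (n+1)) (h : y.1.val = 0) : mAbs k g 1 y = y := by
  unfold mAbs
  rw [if_neg (by omega), if_pos (Or.inr h)]

theorem aAbs_invol {n : ℕ} (k : ℕ) (fA : Equiv.Perm (Fin (n+1))) :
    Function.Involutive (aAbs k fA) := by
  intro x
  match x with
  | none =>
    by_cases h : 0 < k ∧ (1 ≠ k ∨ ¬ openC k (fA 0))
    · rw [show aAbs k fA none = some (⟨0, h.1⟩, fA 0) from dif_pos h]
      show (if _ then _ else _) = _
      rw [if_pos ⟨rfl, rfl, h.2⟩]
    · rw [show aAbs k fA none = none from dif_neg h,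
        show aAbs k fA none = none from dif_neg h]
  | some y =>
    by_cases hc : y.1.val = 0 ∧ y.2 = fA 0 ∧ (1 ≠ k ∨ ¬ openC k (fA 0))
    · rw [show aAbs k fA (some y) = none from if_pos hc]
      have hk : 0 < k := y.1.pos
      rw [show aAbs k fA none = some (⟨0, hk⟩, fA 0) from dif_pos ⟨hk, hc.2.2⟩]
      congr 1
      exact Prod.ext (Fin.ext hc.1.symm) hc.2.1.symm
    · rw [show aAbs k fA (some y) = some (mAbs k fA 1 y) from if_neg hc]
      by_cases h0 : y.1.val = 0
      · rw [mAbs_zero_fix k fA y h0,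
          show aAbs k fA (some y) = some (mAbs k fA 1 y) from if_neg hc,
          mAbs_zero_fix k fA y h0]
      · have h1 : (mAbs k fA 1 y).1.val ≠ 0 := mAbs_fst_ne_zero k fA y h0
        rw [show aAbs k fA (some (mAbs k fA 1 y)) = some (mAbs k fA 1 (mAbs k fA 1 y))
            from if_neg (by intro hc'; exact h1 hc'.1)]
        rw [mAbs_invol k fA 1 (by omega) y]

section
variable {n : ℕ} (k : ℕ) (fA fB : Equiv.Perm (Fin (n+1)))

theorem Lv_le : Lv k fA fB ≤ k := by
  unfold Lv; split <;> omega

theorem walk_spec : ∀ m, m ≤ Lv k fA fB → walkAbs k fA fB m = Wm k fA fB m := by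
  intro m
  induction m with
  | zero => intro _; rw [show walkAbs k fA fB 0 = none from rfl, Wm, dif_neg (by omega)]
  | succ m ih =>
    intro hm
    have hm' : m ≤ Lv k fA fB := by omega
    have hmk : m < k := by have := Lv_le k fA fB; omega
    rw [show walkAbs k fA fB (m+1) = stepAbs k fA fB m (walkAbs k fA fB m) from rfl,
      ih hm']
    refine progress k fA fB m hmk ?_
    intro hk hopen
    have : Lv k fA fB = k - 1 := if_pos hopen
    omega

theorem not_halt_before (m : ℕ) (hm : m < Lv k fA fB) :
    stepAbs k fA fB m (walkAbs k fA fB m) ≠ walkAbs k fA fB m := by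
  have hLk := Lv_le k fA fB
  rw [walk_spec k fA fB m hm.le]
  have hprog := progress k fA fB m (by omega) (by
    intro hk hopen
    have : Lv k fA fB = k - 1 := if_pos hopen
    omega)
  rw [hprog]
  rw [Wm, Wm, dif_pos (show 0 < m + 1 ∧ m + 1 ≤ k by omega)]
  rcases Nat.eq_zero_or_pos m with h0 | h0
  · subst h0
    rw [dif_neg (by omega)]
    simp
  · rw [dif_pos ⟨h0, by omega⟩]
    intro hcontra
    have := (Prod.ext_iff.mp (Option.some_injective _ hcontra)).1
    have := Fin.val_eq_val .. |>.mpr this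
    simp at this
    omega

theorem halt_at_Lv :
    stepAbs k fA fB (Lv k fA fB) (walkAbs k fA fB (Lv k fA fB))
      = walkAbs k fA fB (Lv k fA fB) := by
  rw [walk_spec k fA fB _ le_rfl]
  exact halt k fA fB

theorem sInf_abs :
    sInf {m | stepAbs k fA fB m (walkAbs k fA fB m) = walkAbs k fA fB m}
      = Lv k fA fB := by
  refine le_antisymm (Nat.sInf_le (halt_at_Lv k fA fB)) ?_
  by_contra h
  push_neg at h
  have hne : {m | stepAbs k fA fB m (walkAbs k fA fB m) = walkAbs k fA fB m}.Nonempty :=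
    ⟨Lv k fA fB, halt_at_Lv k fA fB⟩
  have hmem := Nat.sInf_mem hne
  exact not_halt_before k fA fB _ h hmem

theorem pcnt_zero : pcnt (0 : Fin (n+1)) = 0 := by
  simp [pcnt]

theorem Lv_parity : Lv k fA fB % 2 = pcnt (pjIter fA fB 0 k) % 2 := by
  unfold Lv
  rcases Nat.eq_zero_or_pos k with hk0 | hk0
  · subst hk0
    rw [show pjIter fA fB 0 0 = 0 from rfl, pcnt_zero,
      if_pos (by unfold openC; rw [pcnt_zero])]
  · by_cases hop : openC k (pjIter fA fB 0 k)
    · rw [if_pos hop]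
      have := hop
      unfold openC at this
      omega
    · rw [if_neg hop]
      have h2 : ¬ ((k-1) % 2 = pcnt (pjIter fA fB 0 k) % 2) := hop
      omega

-- conjugation by the equivalence Fin k × Fin (n+1) ≃ Fin (k * (n+1))

def concA : Option (Fin (k * (n+1))) → Option (Fin (k * (n+1))) := fun x =>
  Option.map finProdFinEquiv (aAbs k fA (Option.map finProdFinEquiv.symm x))

def concB : Fin (k * (n+1)) → Fin (k * (n+1)) := fun x =>
  finProdFinEquiv (mAbs k fB 0 (finProdFinEquiv.symm x))

theorem concA_invol : Function.Involutive (concA k fA) := by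
  intro x
  unfold concA
  rw [show ∀ z : Option (Fin k × Fin (n+1)),
      Option.map finProdFinEquiv.symm (Option.map finProdFinEquiv z) = z from
    fun z => by cases z <;> simp]
  rw [aAbs_invol k fA]
  cases x with
  | none => rfl
  | some y =>
    simp only [Option.map_some, Equiv.apply_symm_apply]

theorem concB_invol : Function.Involutive (concB k fB) := by
  intro x
  unfold concB
  rw [Equiv.symm_apply_apply, mAbs_invol k fB 0 (by omega), Equiv.apply_symm_apply]

theorem step_conj (m : ℕ) (w : Option (Fin k × Fin (n+1))) :
    ghStep (concA k fA) (concB k fB) m (Option.map finProdFinEquiv w)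
      = Option.map finProdFinEquiv (stepAbs k fA fB m w) := by
  unfold ghStep stepAbs
  by_cases hm : m % 2 = 0
  · rw [if_pos hm, if_pos hm]
    unfold concA
    rw [show Option.map finProdFinEquiv.symm
        (Option.map (finProdFinEquiv (m := k) (n := n+1)) w) = w from by cases w <;> simp]
  · rw [if_neg hm, if_neg hm]
    cases w with
    | none => rfl
    | some y => simp [concB]

theorem walk_conj (m : ℕ) :
    ghWalk (concA k fA) (concB k fB) m
      = Option.map finProdFinEquiv (walkAbs k fA fB m) := by
  induction m with
  | zero => rfl
  | succ m ih =>
    rw [show ghWalk (concA k fA) (concB k fB) (m+1)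
        = ghStep (concA k fA) (concB k fB) m (ghWalk (concA k fA) (concB k fB) m) from rfl,
      ih, step_conj]
    rfl

theorem set_conj :
    {m | ghStep (concA k fA) (concB k fB) m (ghWalk (concA k fA) (concB k fB) m)
        = ghWalk (concA k fA) (concB k fB) m}
      = {m | stepAbs k fA fB m (walkAbs k fA fB m) = walkAbs k fA fB m} := by
  ext m
  simp only [Set.mem_setOf_eq]
  rw [walk_conj, step_conj]
  exact (Option.map_injective finProdFinEquiv.injective).eq_iff

end

end GHPJ

/-- `PJ_k` on vertex sets of size `n + 1` can be computed by a garden-hose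
protocol of size `k · (n + 1)` and time `k`. -/
theorem GH_pointer_jumping (n k : ℕ) :
    ∃ P : GHProtocol (Equiv.Perm (Fin (n + 1))) (Equiv.Perm (Fin (n + 1)))
        (k * (n + 1)),
      P.Computes (PJ n k) ∧
      ∀ fA fB, ghLen (P.A fA) (P.B fB) ≤ k := by
  refine ⟨⟨fun fA => GHPJ.concA k fA, fun fB => GHPJ.concB k fB,
    fun fA => GHPJ.concA_invol k fA, fun fB => GHPJ.concB_invol k fB⟩, ?_, ?_⟩
  · intro fA fB
    constructor
    · rw [GHPJ.set_conj]
      exact ⟨GHPJ.Lv k fA fB, GHPJ.halt_at_Lv k fA fB⟩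
    · show ghLen (GHPJ.concA k fA) (GHPJ.concB k fB) % 2 = 1 ↔ _
      rw [ghLen, GHPJ.set_conj, GHPJ.sInf_abs]
      rw [PJ]
      rw [show ((pjIter fA fB 0 k).val.bits.count true) = GHPJ.pcnt (pjIter fA fB 0 k)
        from rfl]
      rw [decide_eq_true_eq, Nat.odd_iff]
      have := GHPJ.Lv_parity k fA fB
      omega
  · intro fA fB
    show ghLen (GHPJ.concA k fA) (GHPJ.concB k fB) ≤ k
    rw [ghLen, GHPJ.set_conj, GHPJ.sInf_abs]
    exact GHPJ.Lv_le k fA fB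
end
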